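/- arXiv:1908.01218 — 13 statements merged into one kernel-verified Lean document; each statement's English description precedes it below -/
import Mathlib

section
/- Let a be a positive integer and b a real number with 2 ≤ a ≤ b. Then a ≤ 2^{⌈b⌉ − ⌈b/a⌉}. -/
/-- Lemma 4.4 (inequality part): for a positive integer `a` and a real `b` with
`2 ≤ a ≤ b`, one has `a ≤ 2 ^ (⌈b⌉ - ⌈b/a⌉)`. -/
theorem stmt_0 (a : ℕ) (b : ℝ) (ha : 2 ≤ a) (hab : (a : ℝ) ≤ b) :
    (a : ℝ) ≤ (2 : ℝ) ^ (⌈b⌉ - ⌈b / (a : ℝ)⌉) := by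
  have hapos : (0 : ℝ) < a := by positivity
  have ha1 : (1 : ℝ) ≤ a := by exact_mod_cast Nat.one_le_of_lt ha
  -- exponent bound: ⌈b⌉ - ⌈b/a⌉ ≥ a - 1
  have key : (a : ℤ) - 1 ≤ ⌈b⌉ - ⌈b / (a : ℝ)⌉ := by
    have h1 : b ≤ (⌈b⌉ : ℝ) := Int.le_ceil b
    have h2 : (⌈b / (a : ℝ)⌉ : ℝ) < b / a + 1 := Int.ceil_lt_add_one _
    have hb : (a : ℝ) - 1 ≤ b - b / a := by
      have h : (a:ℝ)*(1-1/a) ≤ b*(1-1/a) := by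
        apply mul_le_mul_of_nonneg_right hab
        have : 1 / (a : ℝ) ≤ 1 := by rw [div_le_one hapos]; exact ha1
        linarith
      have e1 : (a:ℝ)*(1-1/a) = a - 1 := by field_simp
      have e2 : b*(1-1/a) = b - b/a := by ring
      linarith
    have : ((a : ℤ) : ℝ) - 2 < (⌈b⌉ : ℝ) - ⌈b / (a : ℝ)⌉ := by
      push_cast; linarith
    have h3 : ((a : ℤ) - 2 : ℤ) < ⌈b⌉ - ⌈b / (a : ℝ)⌉ := by exact_mod_cast this
    omega
  have h2 : (2:ℝ) ^ ((a : ℤ) - 1) ≤ (2:ℝ) ^ (⌈b⌉ - ⌈b / (a : ℝ)⌉) :=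
    zpow_le_zpow_right₀ (by norm_num) key
  refine le_trans ?_ h2
  have : (a : ℤ) - 1 = ((a - 1 : ℕ) : ℤ) := by omega
  rw [this, zpow_natCast]
  have hn : a ≤ 2 ^ (a - 1) := by
    have := Nat.lt_two_pow_self (n := a - 1)
    omega
  exact_mod_cast (by exact_mod_cast hn : (a:ℝ) ≤ ((2:ℕ) ^ (a-1) : ℝ))
end

section
/- Let a be a positive integer and b a real number with 2 ≤ a ≤ b. Then a = 2^{⌈b⌉ − ⌈b/a⌉} holds if and only if a = 2 and ⌈b⌉ − ⌈b/a⌉ = 1. -/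
private lemma aux_two_pow (n : ℕ) (hn : 2 ≤ n) : n + 1 < 2 ^ n := by
  induction n with
  | zero => omega
  | succ m ih =>
    rcases Nat.lt_or_ge m 2 with hm | hm
    · interval_cases m <;> simp_all
    · have := ih hm
      have : 2 ^ (m + 1) = 2 * 2 ^ m := by ring
      omega

/-- Lemma 4.4 (equality characterization): for a positive integer `a` and a real `b`
with `2 ≤ a ≤ b`, one has `a = 2 ^ (⌈b⌉ - ⌈b/a⌉)` if and only if `a = 2` and
`⌈b⌉ - ⌈b/a⌉ = 1`. -/
theorem stmt_1 (a : ℕ) (b : ℝ) (ha : 2 ≤ a) (hab : (a : ℝ) ≤ b) :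
    (a : ℝ) = (2 : ℝ) ^ (⌈b⌉ - ⌈b / (a : ℝ)⌉) ↔ a = 2 ∧ ⌈b⌉ - ⌈b / (a : ℝ)⌉ = 1 := by
  have ha' : (2 : ℝ) ≤ (a : ℝ) := by exact_mod_cast ha
  have hapos : (0 : ℝ) < (a : ℝ) := by linarith
  constructor
  · intro h
    set k : ℤ := ⌈b⌉ - ⌈b / (a : ℝ)⌉ with hkdef
    -- lower bound on k
    have hceil1 : b ≤ (⌈b⌉ : ℝ) := Int.le_ceil b
    have hceil2 : (⌈b / (a : ℝ)⌉ : ℝ) < b / (a : ℝ) + 1 := Int.ceil_lt_add_one _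
    have hd : b / (a : ℝ) * (a : ℝ) = b := div_mul_cancel₀ b (ne_of_gt hapos)
    have hba : (a : ℝ) - 1 ≤ b - b / (a : ℝ) := by
      nlinarith [mul_nonneg (sub_nonneg.2 hab) (by linarith : (0:ℝ) ≤ (a:ℝ) - 1)]
    have hkR : ((a : ℝ)) - 2 < (k : ℝ) := by
      have : (k : ℝ) = (⌈b⌉ : ℝ) - (⌈b / (a : ℝ)⌉ : ℝ) := by push_cast [hkdef]; ring
      linarith
    have hkZ : (a : ℤ) - 1 ≤ k := by
      have : ((a : ℤ) : ℝ) - 2 < (k : ℝ) := by push_cast; exact hkR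
      have h2 : (a : ℤ) - 2 < k := by exact_mod_cast this
      omega
    have hk1 : 1 ≤ k := by omega
    -- convert to natural number exponent
    set n : ℕ := k.toNat with hndef
    have hkn : k = (n : ℤ) := by omega
    have haR : (a : ℝ) = 2 ^ n := by
      rw [h, hkn, zpow_natCast]
    have haN : a = 2 ^ n := by exact_mod_cast haR
    have hnlow : a - 1 ≤ n := by omega
    have hnn : n < 2 ^ n := Nat.lt_two_pow_self
    have hn1 : n ≤ 1 := by
      by_contra hgt
      have := aux_two_pow n (by omega)
      omega
    have hn : n = 1 := by
      interval_cases n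
      · simp at haN; omega
      · rfl
    refine ⟨by omega, by omega⟩
  · rintro ⟨ha2, hk⟩
    rw [hk, ha2]
    norm_num
end

section
/- Let n ≥ 1 and let x₁,…,xₙ and c₁,…,cₙ be positive real numbers. Then equality (x₁/c₁)^{x₁} ⋯ (xₙ/cₙ)^{xₙ} = ((x₁+⋯+xₙ)/(c₁+⋯+cₙ))^{x₁+⋯+xₙ} holds if and only if x₁/c₁ = x₂/c₂ = ⋯ = xₙ/cₙ. -/
open Finset

/-- Lemma 5.3 (equality characterization): for positive reals `x₁,…,xₙ` and `c₁,…,cₙ`,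
equality `(x₁/c₁)^{x₁} ⋯ (xₙ/cₙ)^{xₙ} = ((x₁+⋯+xₙ)/(c₁+⋯+cₙ))^{x₁+⋯+xₙ}` holds
if and only if `x₁/c₁ = ⋯ = xₙ/cₙ`, where powers are real powers. -/
theorem stmt_4 (n : ℕ) (hn : 1 ≤ n) (x c : Fin n → ℝ)
    (hx : ∀ i, 0 < x i) (hc : ∀ i, 0 < c i) :
    (∏ i, (x i / c i) ^ (x i)) = ((∑ i, x i) / (∑ i, c i)) ^ (∑ i, x i) ↔
      ∀ i j, x i / c i = x j / c j := by
  haveI : NeZero n := ⟨by omega⟩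
  set X := ∑ i, x i with hX
  set C := ∑ i, c i with hC
  have hne : (Finset.univ : Finset (Fin n)).Nonempty := univ_nonempty
  have hXpos : 0 < X := Finset.sum_pos (fun i _ => hx i) hne
  have hCpos : 0 < C := Finset.sum_pos (fun i _ => hc i) hne
  have hratio : ∀ i, 0 < x i / c i := fun i => div_pos (hx i) (hc i)
  -- weights
  set w : Fin n → ℝ := fun i => c i / C with hw
  have hwpos : ∀ i ∈ Finset.univ, 0 < w i := fun i _ => div_pos (hc i) hCpos
  have hwsum : ∑ i, w i = 1 := by
    rw [hw]; rw [← Finset.sum_div]; field_simp; exact hC.symm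
  set p : Fin n → ℝ := fun i => x i / c i with hp
  have hcenter : ∑ i, w i • p i = X / C := by
    rw [hX, Finset.sum_div, hw, hp]
    apply Finset.sum_congr rfl
    intro i _
    simp only [smul_eq_mul]
    field_simp [(hc i).ne', hCpos.ne']
  have hjensen := (Real.strictConvexOn_mul_log.map_sum_eq_iff (t := Finset.univ)
    (w := w) (p := p) hwpos hwsum (fun i _ => (hratio i).le))
  rw [hcenter] at hjensen
  -- log of LHS
  have hlogL : Real.log (∏ i, (x i / c i) ^ (x i)) = ∑ i, x i * Real.log (x i / c i) := by
    rw [Real.log_prod (fun i _ => (Real.rpow_pos_of_pos (hratio i) _).ne')]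
    exact Finset.sum_congr rfl fun i _ => by rw [Real.log_rpow (hratio i)]
  have hlogR : Real.log ((X / C) ^ X) = X * Real.log (X / C) := by
    rw [Real.log_rpow (div_pos hXpos hCpos)]
  have hLpos : 0 < ∏ i, (x i / c i) ^ (x i) :=
    Finset.prod_pos fun i _ => Real.rpow_pos_of_pos (hratio i) _
  have hRpos : 0 < (X / C) ^ X := Real.rpow_pos_of_pos (div_pos hXpos hCpos) _
  have key : (∏ i, (x i / c i) ^ (x i)) = (X / C) ^ X ↔
      ∑ i, x i * Real.log (x i / c i) = X * Real.log (X / C) := by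
    constructor
    · intro h; rw [← hlogL, ← hlogR, h]
    · intro h
      have := congrArg Real.exp (hlogL.trans (h.trans hlogR.symm))
      rwa [Real.exp_log hLpos, Real.exp_log hRpos] at this
  rw [key]
  have hsum_eq : (X / C * Real.log (X / C) = ∑ i, w i • (p i * Real.log (p i))) ↔
      (∑ i, x i * Real.log (x i / c i) = X * Real.log (X / C)) := by
    have hrw : ∑ i, w i • (p i * Real.log (p i))
        = (∑ i, x i * Real.log (x i / c i)) / C := by
      rw [Finset.sum_div]
      apply Finset.sum_congr rfl
      intro i _
      simp only [hw, hp, smul_eq_mul]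
      field_simp [(hc i).ne', hCpos.ne']
    rw [hrw]
    rw [div_mul_eq_mul_div, div_eq_div_iff hCpos.ne' hCpos.ne']
    constructor
    · intro h; exact mul_right_cancel₀ hCpos.ne' h.symm
    · intro h; rw [h]
  rw [← hsum_eq, hjensen]
  constructor
  · intro h i j
    rw [show x i / c i = p i from rfl, h i (mem_univ i), show x j / c j = p j from rfl,
      h j (mem_univ j)]
  · intro h j _
    have hXC : X / C = p j := by
      rw [hX, hC]
      rw [div_eq_iff hCpos.ne', hp, hC, Finset.mul_sum]
      apply Finset.sum_congr rfl
      intro i _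
      have := h j i
      field_simp [(hc i).ne', (hc j).ne'] at this ⊢
      linarith [this]
    rw [hXC]
end

section
/- Let n ≥ 1 and let D be a set of non-empty subsets of {1,…,n} such that (1) {i} ∈ D for every i ∈ {1,…,n} and (2) any two members of D are either nested or disjoint. For J ∈ D with |J| ≥ 2 let δ(J) = #{J' ∈ D : J' ⋖ J}, where J' ⋖ J means J' ⊊ J and there is no K ∈ D with J' ⊊ K ⊊ J, and set m(D) = ∏_{J ∈ D, |J| ≥ 2} δ(J). Then m(D) ≤ 2^{n−1}. -/
open Finset
open scoped Classical

/-- `J' ⋖ J` in `D`: `J' ⊊ J` and there is no `K ∈ D` with `J' ⊊ K ⊊ J`. -/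
def CoversIn {n : ℕ} (D : Finset (Finset (Fin n))) (J' J : Finset (Fin n)) : Prop :=
  J' ⊂ J ∧ ¬ ∃ K ∈ D, J' ⊂ K ∧ K ⊂ J

/-- `δ(J)`: the number of `J' ∈ D` covered by `J`. -/
noncomputable def delta {n : ℕ} (D : Finset (Finset (Fin n))) (J : Finset (Fin n)) : ℕ :=
  (D.filter (fun J' => CoversIn D J' J)).card

/-- `m(D) = ∏_{J ∈ D, |J| ≥ 2} δ(J)`. -/
noncomputable def mInv {n : ℕ} (D : Finset (Finset (Fin n))) : ℕ :=
  ∏ J ∈ D.filter (fun J => 2 ≤ J.card), delta D J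

/-- Every node with at least two elements has at least one child. -/
lemma one_le_delta {n : ℕ} (D : Finset (Finset (Fin n)))
    (hsingle : ∀ i : Fin n, {i} ∈ D)
    {J : Finset (Fin n)} (h2 : 2 ≤ J.card) :
    1 ≤ delta D J := by
  classical
  obtain ⟨i, hi⟩ := Finset.card_pos.mp (by omega : 0 < J.card)
  set T := D.filter (fun K => K ⊂ J) with hT
  have hiT : ({i} : Finset (Fin n)) ∈ T := by
    refine Finset.mem_filter.mpr ⟨hsingle i, ?_⟩
    refine lt_of_le_of_ne (Finset.singleton_subset_iff.mpr hi) ?_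
    intro h
    rw [← h] at h2
    simp at h2
  obtain ⟨J', hJ'T, hmax⟩ := T.exists_max_image Finset.card ⟨_, hiT⟩
  have hJ'D : J' ∈ D := (Finset.mem_filter.mp hJ'T).1
  have hJ'J : J' ⊂ J := (Finset.mem_filter.mp hJ'T).2
  have hcov : CoversIn D J' J := by
    refine ⟨hJ'J, ?_⟩
    rintro ⟨K, hKD, hJ'K, hKJ⟩
    have hKT : K ∈ T := Finset.mem_filter.mpr ⟨hKD, hKJ⟩
    have := hmax K hKT
    have := Finset.card_lt_card hJ'K
    omega
  have : J' ∈ D.filter (fun J' => CoversIn D J' J) := Finset.mem_filter.mpr ⟨hJ'D, hcov⟩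
  exact Finset.card_pos.mpr ⟨J', this⟩

/-- Child sets of distinct nodes are disjoint (uniqueness of parent). -/
lemma children_disjoint {n : ℕ} (D : Finset (Finset (Fin n)))
    (hne : ∀ J ∈ D, J.Nonempty)
    (hlaminar : ∀ J ∈ D, ∀ J' ∈ D, J ⊆ J' ∨ J' ⊆ J ∨ J ∩ J' = ∅)
    {J K : Finset (Fin n)} (hJ : J ∈ D) (hK : K ∈ D) (hJK : J ≠ K) :
    Disjoint (D.filter (fun J' => CoversIn D J' J))
      (D.filter (fun J' => CoversIn D J' K)) := by
  classical
  rw [Finset.disjoint_left]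
  intro A hA hA'
  obtain ⟨hAD, hAJ, hAJ2⟩ := Finset.mem_filter.mp hA
  obtain ⟨-, hAK, hAK2⟩ := Finset.mem_filter.mp hA'
  rcases hlaminar J hJ K hK with h | h | h
  · exact hAK2 ⟨J, hJ, hAJ, lt_of_le_of_ne h hJK⟩
  · exact hAJ2 ⟨K, hK, hAK, lt_of_le_of_ne h (Ne.symm hJK)⟩
  · obtain ⟨a, ha⟩ := hne A hAD
    have : a ∈ J ∩ K := Finset.mem_inter.mpr ⟨hAJ.1 ha, hAK.1 ha⟩
    rw [h] at this
    simp at this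

lemma le_two_pow_pred (k : ℕ) : k ≤ 2 ^ (k - 1) := by
  cases k with
  | zero => simp
  | succ m => simpa using Nat.succ_le_of_lt ((Nat.lt_two_pow_self (n := m)))

/-- The combinatorial part of Theorem 4.2 (Watanabe's bound): for a laminar family `D`
on `{1,…,n}` containing all singletons, `m(D) ≤ 2^{n−1}`. -/
theorem stmt_6 (n : ℕ) (hn : 1 ≤ n) (D : Finset (Finset (Fin n)))
    (hne : ∀ J ∈ D, J.Nonempty)
    (hsingle : ∀ i : Fin n, {i} ∈ D)
    (hlaminar : ∀ J ∈ D, ∀ J' ∈ D, J ⊆ J' ∨ J' ⊆ J ∨ J ∩ J' = ∅) :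
    mInv D ≤ 2 ^ (n - 1) := by
  classical
  set S := D.filter (fun J => 2 ≤ J.card) with hSdef
  have hSsub : ∀ J ∈ S, J ∈ D := fun J hJ => (Finset.mem_filter.mp hJ).1
  -- D is nonempty
  have hDne : D.Nonempty := ⟨{⟨0, hn⟩}, hsingle _⟩
  obtain ⟨M, hMD, hMmax⟩ := D.exists_max_image Finset.card hDne
  -- the union of children sets is in D.erase M
  set C : Finset (Fin n) → Finset (Finset (Fin n)) :=
    fun J => D.filter (fun J' => CoversIn D J' J) with hC
  have hdisj : ∀ J ∈ S, ∀ K ∈ S, J ≠ K → Disjoint (C J) (C K) := by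
    intro J hJ K hK hJK
    exact children_disjoint D hne hlaminar (hSsub J hJ) (hSsub K hK) hJK
  have hbi : S.biUnion C ⊆ D.erase M := by
    intro A hA
    obtain ⟨J, hJS, hAJ⟩ := Finset.mem_biUnion.mp hA
    obtain ⟨hAD, hcov⟩ := Finset.mem_filter.mp hAJ
    refine Finset.mem_erase.mpr ⟨?_, hAD⟩
    intro hAM
    have h1 : A.card < J.card := Finset.card_lt_card hcov.1
    have h2 : J.card ≤ M.card := hMmax J (hSsub J hJS)
    rw [hAM] at h1
    omega
  have hsum : ∑ J ∈ S, delta D J ≤ D.card - 1 := by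
    have h1 : ∑ J ∈ S, delta D J = (S.biUnion C).card :=
      (Finset.card_biUnion hdisj).symm
    have h2 : (S.biUnion C).card ≤ (D.erase M).card := Finset.card_le_card hbi
    have h3 : (D.erase M).card = D.card - 1 := Finset.card_erase_of_mem hMD
    omega
  -- D.card = S.card + n
  have hfilterneg : D.filter (fun J => ¬ 2 ≤ J.card)
      = (Finset.univ : Finset (Fin n)).image (fun i => ({i} : Finset (Fin n))) := by
    ext A
    simp only [Finset.mem_filter, Finset.mem_image, Finset.mem_univ, true_and]
    constructor
    · rintro ⟨hAD, hcard⟩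
      have h1 : A.card = 1 := by
        have := Finset.card_pos.mpr (hne A hAD)
        omega
      obtain ⟨i, hi⟩ := Finset.card_eq_one.mp h1
      exact ⟨i, hi.symm⟩
    · rintro ⟨i, rfl⟩
      exact ⟨hsingle i, by simp⟩
  have hDcard : D.card = S.card + n := by
    have h1 := Finset.card_filter_add_card_filter_not
      (s := D) (p := fun J => 2 ≤ J.card)
    have h2 : (D.filter (fun J => ¬ 2 ≤ J.card)).card = n := by
      rw [hfilterneg, Finset.card_image_of_injective _ (fun a b h => by
        simpa using h)]
      simp
    rw [← hSdef] at h1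
    omega
  -- sum of (delta - 1) over S is at most n - 1
  have hδ1 : ∀ J ∈ S, 1 ≤ delta D J := fun J hJ =>
    one_le_delta D hsingle (Finset.mem_filter.mp hJ).2
  have hsum2 : ∑ J ∈ S, (delta D J - 1) ≤ n - 1 := by
    have heq : ∑ J ∈ S, (delta D J - 1) + S.card = ∑ J ∈ S, delta D J := by
      calc ∑ J ∈ S, (delta D J - 1) + S.card
          = ∑ J ∈ S, ((delta D J - 1) + 1) := by
            rw [Finset.sum_add_distrib, Finset.sum_const, smul_eq_mul, mul_one]
        _ = ∑ J ∈ S, delta D J :=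
            Finset.sum_congr rfl fun J hJ => by have := hδ1 J hJ; omega
    omega
  calc mInv D = ∏ J ∈ S, delta D J := rfl
    _ ≤ ∏ J ∈ S, 2 ^ (delta D J - 1) :=
        Finset.prod_le_prod' (fun J _ => le_two_pow_pred _)
    _ = 2 ^ (∑ J ∈ S, (delta D J - 1)) := Finset.prod_pow_eq_pow_sum S _ 2
    _ ≤ 2 ^ (n - 1) := Nat.pow_le_pow_right (by norm_num) hsum2
end

section
/- Let n ≥ 1 and let D be a set of non-empty subsets of {1,…,n} such that (1) {i} ∈ D for every i ∈ {1,…,n} and (2) any two members of D are either nested or disjoint. For J ∈ D with |J| ≥ 2 let δ(J) = #{J' ∈ D : J' ⋖ J}, where J' ⋖ J means J' ⊊ J and there is no K ∈ D with J' ⊊ K ⊊ J, and set m(D) = ∏_{J ∈ D, |J| ≥ 2} δ(J). Then m(D) = 2^{n−1} holds if and only if #{J ∈ D : |J| ≥ 2} = n − 1 and δ(J) = 2 for every J ∈ D with |J| ≥ 2. -/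
open Finset
open scoped Classical

/-- For `d ≥ 3`, `d < 2^(d-1)`. -/
lemma aux_lt_pow : ∀ d : ℕ, 3 ≤ d → d < 2 ^ (d - 1) := by
  intro d hd
  induction d with
  | zero => omega
  | succ e ih =>
    rcases Nat.lt_or_ge e 3 with he | he
    · interval_cases e <;> omega
    · have h1 := ih (by omega)
      have : e - 1 + 1 = (e + 1) - 1 := by omega
      calc e + 1 < 2 ^ (e - 1) + 2 ^ (e - 1) := by omega
        _ = 2 ^ (e - 1 + 1) := by ring
        _ = 2 ^ ((e + 1) - 1) := by rw [this]

/-- `d ≤ 2^(d-1)` for all `d`. -/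
lemma aux_le_pow (d : ℕ) : d ≤ 2 ^ (d - 1) := by
  rcases Nat.lt_or_ge d 3 with h | h
  · interval_cases d <;> norm_num
  · exact (aux_lt_pow d h).le

/-- Uniqueness of the cover in a laminar family. -/
lemma cover_unique {n : ℕ} {D : Finset (Finset (Fin n))}
    (hne : ∀ J ∈ D, J.Nonempty)
    (hlaminar : ∀ J ∈ D, ∀ J' ∈ D, J ⊆ J' ∨ J' ⊆ J ∨ J ∩ J' = ∅)
    {J' J1 J2 : Finset (Fin n)} (hJ' : J' ∈ D) (h1 : J1 ∈ D) (h2 : J2 ∈ D)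
    (c1 : CoversIn D J' J1) (c2 : CoversIn D J' J2) : J1 = J2 := by
  obtain ⟨hs1, hn1⟩ := c1
  obtain ⟨hs2, hn2⟩ := c2
  have hJ'ne := hne J' hJ'
  have hint : J1 ∩ J2 ≠ ∅ := by
    intro h
    obtain ⟨x, hx⟩ := hJ'ne
    have : x ∈ J1 ∩ J2 := Finset.mem_inter.2 ⟨hs1.1 hx, hs2.1 hx⟩
    simp [h] at this
  rcases hlaminar J1 h1 J2 h2 with h | h | h
  · rcases eq_or_ne J1 J2 with he | he
    · exact he
    · exact absurd ⟨J1, h1, hs1, ssubset_of_subset_of_ne h he⟩ hn2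
  · rcases eq_or_ne J1 J2 with he | he
    · exact he
    · exact absurd ⟨J2, h2, hs2, ssubset_of_subset_of_ne h (Ne.symm he)⟩ hn1
  · exact absurd h hint

/-- For each `i ∈ J`, there is a covered element of `D` containing `i`. -/
lemma exists_covered {n : ℕ} {D : Finset (Finset (Fin n))}
    (hsingle : ∀ i : Fin n, {i} ∈ D)
    {J : Finset (Fin n)} (hJcard : 2 ≤ J.card) {i : Fin n} (hi : i ∈ J) :
    ∃ K ∈ D, i ∈ K ∧ CoversIn D K J := by
  set T : Finset (Finset (Fin n)) := D.filter (fun K => i ∈ K ∧ K ⊂ J) with hT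
  have hTne : T.Nonempty := by
    refine ⟨{i}, ?_⟩
    rw [hT, Finset.mem_filter]
    refine ⟨hsingle i, Finset.mem_singleton_self i, ?_⟩
    refine Finset.ssubset_iff_of_subset (Finset.singleton_subset_iff.2 hi) |>.2 ?_
    obtain ⟨a, haJ, b, hbJ, hab⟩ := Finset.one_lt_card.1 hJcard
    rcases eq_or_ne a i with rfl | ha
    · exact ⟨b, hbJ, by simp [Ne.symm hab]⟩
    · exact ⟨a, haJ, by simp [ha]⟩
  obtain ⟨K, hKT, hKmax⟩ := T.exists_maximal hTne
  rw [hT, Finset.mem_filter] at hKT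
  obtain ⟨hKD, hiK, hKJ⟩ := hKT
  refine ⟨K, hKD, hiK, hKJ, ?_⟩
  rintro ⟨L, hLD, hKL, hLJ⟩
  exact hKL.2 (hKmax (Finset.mem_filter.2 ⟨hLD, hKL.1 hiK, hLJ⟩) hKL.1)

/-- `δ(J) ≥ 2` for `J ∈ D` with `|J| ≥ 2`. -/
lemma delta_ge_two {n : ℕ} {D : Finset (Finset (Fin n))}
    (hsingle : ∀ i : Fin n, {i} ∈ D)
    {J : Finset (Fin n)} (hJcard : 2 ≤ J.card) :
    2 ≤ delta D J := by
  have hJne : J.Nonempty := Finset.card_pos.1 (by omega)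
  obtain ⟨i, hi⟩ := hJne
  obtain ⟨K, hKD, hiK, hKc⟩ := exists_covered hsingle hJcard hi
  obtain ⟨j, hjJ, hjK⟩ := Finset.exists_of_ssubset hKc.1
  obtain ⟨L, hLD, hjL, hLc⟩ := exists_covered hsingle hJcard hjJ
  have hKL : K ≠ L := by rintro rfl; exact hjK hjL
  rw [delta]
  exact Finset.one_lt_card.2 ⟨K, Finset.mem_filter.2 ⟨hKD, hKc⟩,
    L, Finset.mem_filter.2 ⟨hLD, hLc⟩, hKL⟩

/-- The equality characterization in Watanabe's bound (proof of Corollary 4.3):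
for a laminar family `D` on `{1,…,n}` containing all singletons, `m(D) = 2^{n−1}`
holds if and only if `#{J ∈ D : |J| ≥ 2} = n − 1` and `δ(J) = 2` for every
`J ∈ D` with `|J| ≥ 2`. -/
theorem stmt_7 (n : ℕ) (hn : 1 ≤ n) (D : Finset (Finset (Fin n)))
    (hne : ∀ J ∈ D, J.Nonempty)
    (hsingle : ∀ i : Fin n, {i} ∈ D)
    (hlaminar : ∀ J ∈ D, ∀ J' ∈ D, J ⊆ J' ∨ J' ⊆ J ∨ J ∩ J' = ∅) :
    mInv D = 2 ^ (n - 1) ↔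
      (D.filter (fun J => 2 ≤ J.card)).card = n - 1 ∧
        ∀ J ∈ D, 2 ≤ J.card → delta D J = 2 := by
  classical
  set B := D.filter (fun J => 2 ≤ J.card) with hB
  constructor
  · intro hm
    -- cardinality of D : n + B.card
    have hS : D.filter (fun J => ¬ 2 ≤ J.card)
        = Finset.image (fun i : Fin n => ({i} : Finset (Fin n))) Finset.univ := by
      ext J
      simp only [Finset.mem_filter, Finset.mem_image, Finset.mem_univ, true_and]
      constructor
      · rintro ⟨hJD, hJc⟩
        have h1 : J.card = 1 := by
          have := (hne J hJD).card_pos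
          omega
        obtain ⟨i, rfl⟩ := Finset.card_eq_one.1 h1
        exact ⟨i, rfl⟩
      · rintro ⟨i, rfl⟩
        exact ⟨hsingle i, by simp⟩
    have hScard : (D.filter (fun J => ¬ 2 ≤ J.card)).card = n := by
      rw [hS, Finset.card_image_of_injective _ (fun a b h => by
        simpa using h), Finset.card_univ, Fintype.card_fin]
    have hDcard : D.card = B.card + n := by
      have h := Finset.card_filter_add_card_filter_not
        (s := D) (p := fun J => 2 ≤ J.card)
      rw [hB]
      omega
    -- sum bound : ∑_{J ∈ B} delta D J + 1 ≤ D.card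
    have hDne : D.Nonempty := by
      obtain ⟨i⟩ : Nonempty (Fin n) := ⟨⟨0, hn⟩⟩
      exact ⟨{i}, hsingle i⟩
    obtain ⟨M, hMD, hMmax⟩ := D.exists_maximal hDne
    set g : Finset (Fin n) → Finset (Finset (Fin n)) :=
      fun J => D.filter (fun J' => CoversIn D J' J) with hg
    have hdisj : ∀ J1 ∈ B, ∀ J2 ∈ B, J1 ≠ J2 → Disjoint (g J1) (g J2) := by
      intro J1 h1 J2 h2 hne12
      rw [Finset.disjoint_left]
      intro J' hJ'1 hJ'2
      rw [hg, Finset.mem_filter] at hJ'1 hJ'2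
      exact hne12 (cover_unique hne hlaminar hJ'1.1
        (Finset.mem_filter.1 h1).1 (Finset.mem_filter.1 h2).1 hJ'1.2 hJ'2.2)
    have hsum : ∑ J ∈ B, delta D J + 1 ≤ D.card := by
      have h1 : ∑ J ∈ B, delta D J = (B.biUnion g).card :=
        (Finset.card_biUnion hdisj).symm
      have h2 : B.biUnion g ⊆ D.erase M := by
        intro J' hJ'
        obtain ⟨J, hJB, hJ'g⟩ := Finset.mem_biUnion.1 hJ'
        rw [hg, Finset.mem_filter] at hJ'g
        refine Finset.mem_erase.2 ⟨?_, hJ'g.1⟩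
        rintro rfl
        exact hJ'g.2.1.2 (hMmax (Finset.mem_filter.1 hJB).1 hJ'g.2.1.1)
      have h3 : (D.erase M).card + 1 = D.card := by
        rw [Finset.card_erase_of_mem hMD]
        have : 1 ≤ D.card := Finset.card_pos.2 hDne
        omega
      have := Finset.card_le_card h2
      omega
    have hd2 : ∀ J ∈ B, 2 ≤ delta D J := fun J hJ =>
      delta_ge_two hsingle (Finset.mem_filter.1 hJ).2
    -- ∑ (delta - 1) ≤ n - 1
    have hsum1 : ∑ J ∈ B, (delta D J - 1) + 1 ≤ n := by
      have : ∑ J ∈ B, delta D J = ∑ J ∈ B, ((delta D J - 1) + 1) :=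
        Finset.sum_congr rfl (fun J hJ => by have := hd2 J hJ; omega)
      rw [Finset.sum_add_distrib, Finset.sum_const, smul_eq_mul, mul_one] at this
      omega
    -- all deltas equal 2
    have hall : ∀ J ∈ B, delta D J = 2 := by
      by_contra hc
      push_neg at hc
      obtain ⟨J0, hJ0, hJ0ne⟩ := hc
      have hlt : ∏ J ∈ B, delta D J < ∏ J ∈ B, 2 ^ (delta D J - 1) := by
        refine Finset.prod_lt_prod (fun J hJ => by have := hd2 J hJ; omega)
          (fun J _ => aux_le_pow _) ⟨J0, hJ0, ?_⟩
        exact aux_lt_pow _ (by have := hd2 J0 hJ0; omega)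
      have heq : ∏ J ∈ B, 2 ^ (delta D J - 1) = 2 ^ (∑ J ∈ B, (delta D J - 1)) :=
        Finset.prod_pow_eq_pow_sum B _ 2
      have hle : (2:ℕ) ^ (∑ J ∈ B, (delta D J - 1)) ≤ 2 ^ (n - 1) :=
        Nat.pow_le_pow_right (by norm_num) (by omega)
      rw [mInv, ← hB] at hm
      omega
    refine ⟨?_, fun J hJ h2 => hall J (Finset.mem_filter.2 ⟨hJ, h2⟩)⟩
    have : mInv D = 2 ^ B.card := by
      rw [mInv, ← hB, Finset.prod_congr rfl hall, Finset.prod_const]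
    rw [this] at hm
    have := Nat.pow_right_injective (le_refl 2) hm
    omega
  · rintro ⟨hcard, hall⟩
    rw [mInv, ← hB]
    have : ∀ J ∈ B, delta D J = 2 := fun J hJ => by
      obtain ⟨h1, h2⟩ := Finset.mem_filter.1 hJ
      exact hall J h1 h2
    rw [Finset.prod_congr rfl this, Finset.prod_const, hcard]
end

section
/- Let 𝔻 = (D, w) be an n-dimensional connected special datum with unique maximal element J, and let a be a positive integer. Define w^a : D → ℕ₊ by w^a(J) = 1 and w^a(J') = a·w(J') for J' ∈ D with J' ≠ J. Then 𝔻^a = (D, w^a) is an n-dimensional special datum and the order of the finite group G_{𝔻^a} satisfies |G_{𝔻^a}| = a^{n−1}·|G_𝔻|. -/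
open Finset

/-- An `n`-dimensional special datum (Watanabe): a laminar family `D` of non-empty
subsets of `{1,…,n}` containing all singletons, with weights `w : D → ℕ₊` that are `1`
on maximal elements, strictly increase and divide along reverse inclusion, and agree on
elements covered by a common element. -/
structure IsSpecialDatum {n : ℕ} (D : Finset (Finset (Fin n))) (w : Finset (Fin n) → ℕ) : Prop where
  nonempty_mem : ∀ J ∈ D, J.Nonempty
  singleton_mem : ∀ i : Fin n, {i} ∈ D
  laminar : ∀ J ∈ D, ∀ J' ∈ D, J ⊆ J' ∨ J' ⊆ J ∨ J ∩ J' = ∅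
  w_pos : ∀ J ∈ D, 0 < w J
  w_max : ∀ J ∈ D, (∀ K ∈ D, J ⊆ K → J = K) → w J = 1
  w_lt : ∀ J ∈ D, ∀ J' ∈ D, J ⊂ J' → w J' < w J
  w_dvd : ∀ J ∈ D, ∀ J' ∈ D, J ⊂ J' → w J' ∣ w J
  w_cover : ∀ J₁ ∈ D, ∀ J₂ ∈ D, ∀ J ∈ D, CoversIn D J₁ J → CoversIn D J₂ J → w J₁ = w J₂

/-- The diagonal matrix `(ζ, ζ⁻¹; i, j)` whose `(i,i)` entry is `ζ`, `(j,j)` entry is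
`ζ⁻¹` and whose other diagonal entries are `1`, as an element of `SL(n, ℂ)`. -/
noncomputable def diagPair {n : ℕ} (ζ : ℂˣ) (i j : Fin n) :
    Matrix.SpecialLinearGroup (Fin n) ℂ :=
  ⟨Matrix.diagonal
      (fun k => (if k = i then (ζ : ℂ) else 1) * (if k = j then ((ζ⁻¹ : ℂˣ) : ℂ) else 1)),
    by rw [Matrix.det_diagonal, Finset.prod_mul_distrib]; simp⟩

/-- The group `G_𝔻` associated with a (special) datum `(D, w)`: the subgroup of
`SL(n, ℂ)` generated by the matrices `(ζ, ζ⁻¹; i, j)` over all `J₁, J₂, J ∈ D` with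
`J₁ ⋖ J` and `J₂ ⋖ J`, all `i ∈ J₁`, `j ∈ J₂`, and `ζ` a primitive `w(J₁)`-th root of
unity. -/
noncomputable def specialGroup (n : ℕ) (D : Finset (Finset (Fin n)))
    (w : Finset (Fin n) → ℕ) : Subgroup (Matrix.SpecialLinearGroup (Fin n) ℂ) :=
  Subgroup.closure
    { g | ∃ (J₁ J₂ J : Finset (Fin n)) (_ : J₁ ∈ D) (_ : J₂ ∈ D) (_ : J ∈ D)
        (_ : CoversIn D J₁ J) (_ : CoversIn D J₂ J) (i : Fin n) (_ : i ∈ J₁)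
        (j : Fin n) (_ : j ∈ J₂) (ζ : ℂˣ),
        IsPrimitiveRoot ζ (w J₁) ∧ g = diagPair ζ i j }


namespace Stmt8Aux

/-- The product-one subgroup of `(Fin n → ℂˣ)`. -/
def T (n : ℕ) : Subgroup (Fin n → ℂˣ) where
  carrier := {t | ∏ i, t i = 1}
  mul_mem' := by
    intro x y hx hy
    simp only [Set.mem_setOf_eq, Pi.mul_apply, Finset.prod_mul_distrib] at *
    rw [hx, hy, one_mul]
  one_mem' := by simp
  inv_mem' := by
    intro x hx
    simp only [Set.mem_setOf_eq, Pi.inv_apply, Finset.prod_inv_distrib] at *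
    rw [hx, inv_one]

lemma mem_T_iff {n : ℕ} (t : Fin n → ℂˣ) : t ∈ T n ↔ ∏ i, t i = 1 := Iff.rfl

def vPair {n : ℕ} (ζ : ℂˣ) (i j : Fin n) : Fin n → ℂˣ :=
  fun k => (if k = i then ζ else 1) * (if k = j then ζ⁻¹ else 1)

lemma vPair_mem {n : ℕ} (ζ : ℂˣ) (i j : Fin n) : vPair ζ i j ∈ T n := by
  rw [mem_T_iff]
  unfold vPair
  rw [Finset.prod_mul_distrib]
  simp

/-- The element of `T n` given by `vPair`. -/
def vT {n : ℕ} (ζ : ℂˣ) (i j : Fin n) : T n := ⟨vPair ζ i j, vPair_mem ζ i j⟩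

/-- Embed `T n` into `SL(n, ℂ)` as diagonal matrices. -/
noncomputable def toSL {n : ℕ} : T n →* Matrix.SpecialLinearGroup (Fin n) ℂ where
  toFun t := ⟨Matrix.diagonal (fun k => (t.val k : ℂ)), by
    rw [Matrix.det_diagonal]
    have : ((∏ i, t.val i : ℂˣ) : ℂ) = ∏ i, ((t.val i : ℂˣ) : ℂ) :=
      map_prod (Units.coeHom ℂ) _ _
    rw [← this, t.2, Units.val_one]⟩
  map_one' := by
    apply Subtype.ext
    simp [Matrix.diagonal_one]
  map_mul' x y := by
    apply Subtype.ext
    show Matrix.diagonal _ = Matrix.diagonal _ * Matrix.diagonal _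
    rw [Matrix.diagonal_mul_diagonal]
    rfl

lemma toSL_injective {n : ℕ} : Function.Injective (toSL (n := n)) := by
  intro x y h
  apply Subtype.ext
  funext i
  apply Units.ext
  have := congrArg (fun M : Matrix.SpecialLinearGroup (Fin n) ℂ => (M : Matrix (Fin n) (Fin n) ℂ) i i) h
  change (Matrix.diagonal (fun k => ((x.val k : ℂˣ) : ℂ))) i i
    = (Matrix.diagonal (fun k => ((y.val k : ℂˣ) : ℂ))) i i at this
  simpa [toSL, Matrix.diagonal_apply_eq] using this

lemma toSL_vT {n : ℕ} (ζ : ℂˣ) (i j : Fin n) : toSL (vT ζ i j) = diagPair ζ i j := by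
  apply Subtype.ext
  show Matrix.diagonal _ = Matrix.diagonal _
  -- congr
  funext k
  simp [vT, vPair, Units.val_mul, apply_ite (Units.val)]

/-- the generating set, inside `T n`. -/
def S (n : ℕ) (D : Finset (Finset (Fin n))) (w : Finset (Fin n) → ℕ) : Set (T n) :=
  { g | ∃ (J₁ J₂ J : Finset (Fin n)) (_ : J₁ ∈ D) (_ : J₂ ∈ D) (_ : J ∈ D)
      (_ : CoversIn D J₁ J) (_ : CoversIn D J₂ J) (i : Fin n) (_ : i ∈ J₁)
      (j : Fin n) (_ : j ∈ J₂) (ζ : ℂˣ),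
      IsPrimitiveRoot ζ (w J₁) ∧ g = vT ζ i j }

set_option maxHeartbeats 1000000 in
lemma specialGroup_eq (n : ℕ) (D : Finset (Finset (Fin n))) (w : Finset (Fin n) → ℕ) :
    specialGroup n D w = Subgroup.map toSL (Subgroup.closure (S n D w)) := by
  have h0 : Subgroup.map toSL (Subgroup.closure (S n D w))
      = Subgroup.closure (toSL '' (S n D w)) := MonoidHom.map_closure toSL _
  rw [h0]
  unfold specialGroup
  congr 1
  ext g
  constructor
  · rintro ⟨J₁, J₂, J₀, h1, h2, h3, h4, h5, i, hi, j, hj, ζ, hζ, rfl⟩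
    exact ⟨vT ζ i j, ⟨J₁, J₂, J₀, h1, h2, h3, h4, h5, i, hi, j, hj, ζ, hζ, rfl⟩, toSL_vT ζ i j⟩
  · rintro ⟨t, ⟨J₁, J₂, J₀, h1, h2, h3, h4, h5, i, hi, j, hj, ζ, hζ, rfl⟩, rfl⟩
    exact ⟨J₁, J₂, J₀, h1, h2, h3, h4, h5, i, hi, j, hj, ζ, hζ, toSL_vT ζ i j⟩

lemma card_specialGroup (n : ℕ) (D : Finset (Finset (Fin n))) (w : Finset (Fin n) → ℕ) :
    Nat.card (specialGroup n D w) = Nat.card (Subgroup.closure (S n D w)) := by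
  rw [specialGroup_eq]
  exact (Nat.card_congr ((Subgroup.closure (S n D w)).equivMapOfInjective toSL
    toSL_injective).toEquiv).symm

end Stmt8Aux

namespace Stmt8Aux

section Tree
variable {n : ℕ} {D : Finset (Finset (Fin n))} {J : Finset (Fin n)}

lemma subset_root (hJuniq : ∀ K ∈ D, (∀ L ∈ D, K ⊆ L → K = L) → K = J) :
    ∀ K ∈ D, K ⊆ J := by
  intro K hK
  classical
  set M := D.filter (fun L => K ⊆ L) with hM
  have hKM : K ∈ M := by simp [hM, hK]
  obtain ⟨L, hL, hmax⟩ := M.exists_max_image Finset.card ⟨K, hKM⟩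
  simp only [hM, Finset.mem_filter] at hL
  have hLmax : ∀ L' ∈ D, L ⊆ L' → L = L' := by
    intro L' hL' hsub
    refine Finset.eq_of_subset_of_card_le hsub (hmax L' ?_)
    simp only [hM, Finset.mem_filter]
    exact ⟨hL', hL.2.trans hsub⟩
  have := hJuniq L hL.1 hLmax
  exact this ▸ hL.2

lemma exists_cover (hsing : ∀ i : Fin n, {i} ∈ D) (hJ : J ∈ D)
    (hJuniq : ∀ K ∈ D, (∀ L ∈ D, K ⊆ L → K = L) → K = J)
    (i j : Fin n) (hij : i ≠ j) :
    ∃ J₁ J₂ : Finset (Fin n), J₁ ∈ D ∧ J₂ ∈ D ∧ CoversIn D J₁ J ∧ CoversIn D J₂ J ∧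
      i ∈ J₁ ∧ j ∈ J₂ ∧ J₁ ≠ J ∧ J₂ ≠ J := by
  classical
  have hiJ : i ∈ J := (subset_root hJuniq _ (hsing i)) (Finset.mem_singleton_self i)
  have hjJ : j ∈ J := (subset_root hJuniq _ (hsing j)) (Finset.mem_singleton_self j)
  have key : ∀ x y : Fin n, x ∈ J → y ∈ J → x ≠ y →
      ∃ K, K ∈ D ∧ CoversIn D K J ∧ x ∈ K ∧ K ≠ J := by
    intro x y hx hy hxy
    set Tx := D.filter (fun K => x ∈ K ∧ K ⊂ J) with hTx
    have hxTx : ({x} : Finset (Fin n)) ∈ Tx := by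
      simp only [hTx, Finset.mem_filter]
      refine ⟨hsing x, Finset.mem_singleton_self x, ?_⟩
      refine Finset.ssubset_iff_of_subset (Finset.singleton_subset_iff.mpr hx) |>.mpr ?_
      exact ⟨y, hy, by simp [hxy.symm]⟩
    obtain ⟨K, hK, hmax⟩ := Tx.exists_max_image Finset.card ⟨_, hxTx⟩
    simp only [hTx, Finset.mem_filter] at hK
    refine ⟨K, hK.1, ⟨hK.2.2, ?_⟩, hK.2.1, ?_⟩
    · rintro ⟨L, hL, hKL, hLJ⟩
      have hLTx : L ∈ Tx := by
        simp only [hTx, Finset.mem_filter]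
        exact ⟨hL, hKL.subset hK.2.1, hLJ⟩
      exact absurd (hmax L hLTx) (not_le_of_gt (Finset.card_lt_card hKL))
    · exact Finset.ssubset_iff_subset_ne.mp hK.2.2 |>.2
  obtain ⟨J₁, hJ₁, hc₁, hi₁, hne₁⟩ := key i j hiJ hjJ hij
  obtain ⟨J₂, hJ₂, hc₂, hj₂, hne₂⟩ := key j i hjJ hiJ hij.symm
  exact ⟨J₁, J₂, hJ₁, hJ₂, hc₁, hc₂, hi₁, hj₂, hne₁, hne₂⟩

lemma cover_ne_root (hJuniq : ∀ K ∈ D, (∀ L ∈ D, K ⊆ L → K = L) → K = J)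
    {K J₀ : Finset (Fin n)} (hJ₀ : J₀ ∈ D) (hc : CoversIn D K J₀) : K ≠ J := by
  intro h
  subst h
  exact (hc.1.trans_subset (subset_root hJuniq _ hJ₀)).ne rfl

end Tree

section Roots

lemma exists_primitive {N : ℕ} (hN : 0 < N) : ∃ ζ : ℂˣ, IsPrimitiveRoot ζ N := by
  have h := Complex.isPrimitiveRoot_exp N hN.ne'
  exact ⟨(h.isUnit hN.ne').unit, h.isUnit_unit hN.ne'⟩

lemma lift_primitive {a w0 : ℕ} (ha : 0 < a) (hw : 0 < w0) {η : ℂˣ}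
    (hη : IsPrimitiveRoot η w0) : ∃ ζ : ℂˣ, IsPrimitiveRoot ζ (a * w0) ∧ ζ ^ a = η := by
  have hN : 0 < a * w0 := Nat.mul_pos ha hw
  haveI : NeZero (a * w0) := ⟨hN.ne'⟩
  haveI : NeZero w0 := ⟨hw.ne'⟩
  obtain ⟨ξ, hξ⟩ := exists_primitive hN
  have hξa : IsPrimitiveRoot (ξ ^ a) w0 := hξ.pow hN rfl
  obtain ⟨k, hk_lt, hk⟩ := hξa.eq_pow_of_mem_rootsOfUnity
    ((mem_rootsOfUnity w0 η).mpr hη.pow_eq_one)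
  have hkcop : k.Coprime w0 := (hξa.pow_iff_coprime hw k).mp (hk ▸ hη)
  have hdvd : w0 ∣ a * w0 := dvd_mul_left w0 a
  obtain ⟨u, hu⟩ := ZMod.unitsMap_surjective hdvd (ZMod.unitOfCoprime k hkcop)
  set m := ((u : ZMod (a * w0)).val) with hm
  have hmcop : m.Coprime (a * w0) := ZMod.val_coe_unit_coprime u
  have hmmod : (m : ZMod w0) = (k : ZMod w0) := by
    have := congrArg (fun v : (ZMod w0)ˣ => (v : ZMod w0)) hu
    simp only [ZMod.unitsMap_def, Units.coe_map, ZMod.castHom_apply,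
      ZMod.coe_unitOfCoprime] at this
    rw [hm, ZMod.natCast_val]
    exact this
  have hmk : m ≡ k [MOD w0] := (ZMod.natCast_eq_natCast_iff m k w0).mp hmmod
  refine ⟨ξ ^ m, hξ.pow_of_coprime m hmcop, ?_⟩
  have ho : orderOf (ξ ^ a) = w0 := hξa.eq_orderOf.symm
  calc (ξ ^ m) ^ a = (ξ ^ a) ^ m := by rw [← pow_mul, ← pow_mul, mul_comm]
    _ = (ξ ^ a) ^ k := by rw [pow_eq_pow_iff_modEq, ho]; exact hmk
    _ = η := hk

end Roots
end Stmt8Aux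

namespace Stmt8Aux
open Subgroup

section Grp
variable {n : ℕ}

lemma pow_vT (ζ : ℂˣ) (i j : Fin n) (m : ℕ) : (vT ζ i j) ^ m = vT (ζ ^ m) i j := by
  apply Subtype.ext
  show (vPair ζ i j) ^ m = vPair (ζ ^ m) i j
  funext k
  simp only [Pi.pow_apply, vPair, mul_pow, apply_ite (· ^ m), one_pow, inv_pow]

lemma vT_pow_eq_one {N : ℕ} {ζ : ℂˣ} (hζ : ζ ^ N = 1) (i j : Fin n) (k : Fin n) :
    (vPair ζ i j) k ^ N = 1 := by
  simp [vPair, mul_pow, apply_ite (· ^ N), one_pow, inv_pow, hζ, inv_one, mul_one]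

end Grp
end Stmt8Aux

namespace Stmt8Aux
open Subgroup

section Main
variable {n : ℕ} {D : Finset (Finset (Fin n))} {w : Finset (Fin n) → ℕ}
  {J : Finset (Fin n)} {a : ℕ}

lemma image_S (hD : IsSpecialDatum D w)
    (hJuniq : ∀ K ∈ D, (∀ L ∈ D, K ⊆ L → K = L) → K = J) (ha : 0 < a) :
    (powMonoidHom a : T n →* T n) '' (S n D (fun K => if K = J then 1 else a * w K))
      = S n D w := by
  ext x
  constructor
  · rintro ⟨t, ⟨J₁, J₂, J₀, h1, h2, h3, h4, h5, i, hi, j, hj, ζ, hζ, rfl⟩, rfl⟩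
    have hne : J₁ ≠ J := cover_ne_root hJuniq h3 h4
    simp only [if_neg hne] at hζ
    refine ⟨J₁, J₂, J₀, h1, h2, h3, h4, h5, i, hi, j, hj, ζ ^ a, ?_, ?_⟩
    · exact hζ.pow (Nat.mul_pos ha (hD.w_pos J₁ h1)) rfl
    · show (vT ζ i j) ^ a = vT (ζ ^ a) i j
      exact pow_vT ζ i j a
  · rintro ⟨J₁, J₂, J₀, h1, h2, h3, h4, h5, i, hi, j, hj, η, hη, rfl⟩
    have hne : J₁ ≠ J := cover_ne_root hJuniq h3 h4
    obtain ⟨ζ, hζ, hζa⟩ := lift_primitive ha (hD.w_pos J₁ h1) hη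
    refine ⟨vT ζ i j, ⟨J₁, J₂, J₀, h1, h2, h3, h4, h5, i, hi, j, hj, ζ,
      by simpa only [if_neg hne] using hζ, rfl⟩, ?_⟩
    show (vT ζ i j) ^ a = vT η i j
    rw [pow_vT, hζa]

lemma pair_mem (hD : IsSpecialDatum D w) (hJ : J ∈ D)
    (hJuniq : ∀ K ∈ D, (∀ L ∈ D, K ⊆ L → K = L) → K = J) (ha : 0 < a)
    (i j : Fin n) (hij : i ≠ j) (ε : ℂˣ) (hε : ε ^ a = 1) :
    vT ε i j ∈ Subgroup.closure (S n D (fun K => if K = J then 1 else a * w K)) := by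
  obtain ⟨J₁, J₂, hJ₁, hJ₂, hc₁, hc₂, hi, hj, hne₁, hne₂⟩ :=
    exists_cover hD.singleton_mem hJ hJuniq i j hij
  have hw1 : 0 < w J₁ := hD.w_pos J₁ hJ₁
  have hN : 0 < a * w J₁ := Nat.mul_pos ha hw1
  haveI : NeZero (a * w J₁) := ⟨hN.ne'⟩
  obtain ⟨ζ, hζ⟩ := exists_primitive hN
  have hgen : vT ζ i j ∈ S n D (fun K => if K = J then 1 else a * w K) :=
    ⟨J₁, J₂, J, hJ₁, hJ₂, hJ, hc₁, hc₂, i, hi, j, hj, ζ,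
      by simpa only [if_neg hne₁] using hζ, rfl⟩
  have hεN : ε ∈ rootsOfUnity (a * w J₁) ℂ := by
    rw [mem_rootsOfUnity, pow_mul, hε, one_pow]
  obtain ⟨k, _, hk⟩ := hζ.eq_pow_of_mem_rootsOfUnity hεN
  have hrw : vT ε i j = (vT ζ i j) ^ k := by rw [pow_vT, hk]
  rw [hrw]
  exact pow_mem (subset_closure hgen) k

lemma decomp (hn : 0 < n) (t : T n) :
    t = ∏ k ∈ Finset.univ.erase (⟨n-1, by omega⟩ : Fin n),
        vT (t.val k) k ⟨n-1, by omega⟩ := by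
  set l : Fin n := ⟨n-1, by omega⟩ with hl
  apply Subtype.ext
  have hco : ((∏ k ∈ Finset.univ.erase l, vT (t.val k) k l : T n) : Fin n → ℂˣ)
      = ∏ k ∈ Finset.univ.erase l, vPair (t.val k) k l := by
    push_cast [SubmonoidClass.coe_finset_prod]
    rfl
  rw [hco]
  funext c
  rw [Finset.prod_apply]
  have hprod : (∏ i, t.val i) = 1 := t.2
  by_cases hc : c = l
  · rw [hc]
    have h1 : ∀ k ∈ Finset.univ.erase l, vPair (t.val k) k l l = (t.val k)⁻¹ := by
      intro k hk
      have hlk : l ≠ k := fun h => (Finset.mem_erase.mp hk).1 h.symm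
      simp [vPair, if_neg hlk]
    rw [Finset.prod_congr rfl h1, Finset.prod_inv_distrib]
    have h2 := Finset.prod_erase_mul Finset.univ t.val (Finset.mem_univ l)
    rw [hprod] at h2
    rw [eq_comm, inv_eq_iff_mul_eq_one]
    exact h2
  · have h1 : ∀ k ∈ Finset.univ.erase l, vPair (t.val k) k l c
        = (if c = k then t.val k else 1) := by
      intro k hk
      simp [vPair, if_neg hc]
    rw [Finset.prod_congr rfl h1, Finset.prod_ite_eq]
    simp [Finset.mem_erase, hc]

lemma ker_le (hD : IsSpecialDatum D w) (hn : 0 < n) (hJ : J ∈ D)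
    (hJuniq : ∀ K ∈ D, (∀ L ∈ D, K ⊆ L → K = L) → K = J) (ha : 0 < a) :
    (powMonoidHom a : T n →* T n).ker
      ≤ Subgroup.closure (S n D (fun K => if K = J then 1 else a * w K)) := by
  intro t ht
  have htc : ∀ k, (t.val k) ^ a = 1 := by
    intro k
    have h0 : (t : T n) ^ a = 1 := ht
    have := congrArg (fun s : T n => (s : Fin n → ℂˣ) k) h0
    simpa using this
  rw [decomp hn t]
  apply prod_mem
  intro k hk
  exact pair_mem hD hJ hJuniq ha k _ (Finset.mem_erase.mp hk).1 (t.val k) (htc k)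

end Main
end Stmt8Aux

namespace Stmt8Aux
open Subgroup

section Count
variable {n : ℕ}

lemma finite_closure (D : Finset (Finset (Fin n))) (w' : Finset (Fin n) → ℕ)
    (hw : ∀ K ∈ D, 0 < w' K) : Finite (Subgroup.closure (S n D w')) := by
  classical
  set N := ∏ K ∈ D, w' K with hN
  have hNpos : 0 < N := Finset.prod_pos hw
  haveI : NeZero N := ⟨hNpos.ne'⟩
  set Ω : Subgroup (Fin n → ℂˣ) := Subgroup.pi Set.univ (fun _ => rootsOfUnity N ℂ) with hΩ
  have hS : S n D w' ⊆ ((Ω.comap (T n).subtype : Subgroup (T n)) : Set (T n)) := by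
    rintro x ⟨J₁, J₂, J₀, h1, h2, h3, h4, h5, i, hi, j, hj, ζ, hζ, rfl⟩
    have hdvd : w' J₁ ∣ N := Finset.dvd_prod_of_mem w' h1
    obtain ⟨c, hc⟩ := hdvd
    have hζN : ζ ^ N = 1 := by rw [hc, pow_mul, hζ.pow_eq_one, one_pow]
    intro k _
    exact (mem_rootsOfUnity _ _).mpr (vT_pow_eq_one hζN i j k)
  have hle : Subgroup.closure (S n D w') ≤ Ω.comap (T n).subtype :=
    (Subgroup.closure_le _).mpr hS
  have hfin : Finite (Ω.comap (T n).subtype) := by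
    refine Finite.of_injective
      (fun x => (fun i => (⟨x.1.1 i, x.2 i (Set.mem_univ i)⟩ : rootsOfUnity N ℂ))) ?_
    intro x y h
    apply Subtype.ext; apply Subtype.ext
    funext i
    exact congrArg (fun f => ((f i : rootsOfUnity N ℂ) : ℂˣ)) h
  exact Finite.of_injective (Subgroup.inclusion hle) (Subgroup.inclusion_injective hle)

lemma card_ker_pow (hn : 0 < n) {a : ℕ} (ha : 0 < a) :
    Nat.card ((powMonoidHom a : T n →* T n).ker) = a ^ (n - 1) := by
  classical
  haveI : NeZero a := ⟨ha.ne'⟩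
  set μ : Subgroup ℂˣ := rootsOfUnity a ℂ with hμ
  set P : (Fin n → μ) →* μ :=
    { toFun := fun f => ∏ i, f i
      map_one' := by simp
      map_mul' := by intro f g; simp [Finset.prod_mul_distrib] } with hP
  have hPcoe : ∀ f : Fin n → μ, ((P f : μ) : ℂˣ) = ∏ i, ((f i : μ) : ℂˣ) := by
    intro f
    show ((∏ i, f i : μ) : ℂˣ) = _
    push_cast [SubmonoidClass.coe_finset_prod]
    rfl
  have hPsurj : Function.Surjective P := by
    intro y
    set i0 : Fin n := ⟨0, hn⟩
    refine ⟨fun k => if k = i0 then y else 1, ?_⟩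
    show (∏ k, if k = i0 then y else 1) = y
    rw [Finset.prod_ite_eq']
    simp
  -- equivalence between the two kernels
  have hker1 : ∀ x : (powMonoidHom a : T n →* T n).ker, ∀ i, (x.1.1 i) ^ a = 1 := by
    intro x i
    have h0 : (x.1 : T n) ^ a = 1 := x.2
    have := congrArg (fun s : T n => (s : Fin n → ℂˣ) i) h0
    simpa using this
  set F : (powMonoidHom a : T n →* T n).ker → P.ker :=
    fun x => ⟨fun i => ⟨x.1.1 i, (mem_rootsOfUnity _ _).mpr (hker1 x i)⟩, by
      rw [MonoidHom.mem_ker]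
      apply Subtype.ext
      rw [hPcoe]
      exact x.1.2⟩ with hF
  have hFbij : Function.Bijective F := by
    constructor
    · intro x y h
      apply Subtype.ext; apply Subtype.ext
      funext i
      exact congrArg (fun f => ((f.1 i : μ) : ℂˣ)) h
    · rintro ⟨f, hf⟩
      have hf1 : (∏ i, f i) = 1 := hf
      have hmemT : (fun i => (f i : ℂˣ)) ∈ T n := by
        rw [mem_T_iff]
        have := congrArg (fun z : μ => (z : ℂˣ)) hf1
        push_cast at this
        exact this
      have hpow : (⟨fun i => (f i : ℂˣ), hmemT⟩ : T n) ^ a = 1 := by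
        apply Subtype.ext
        funext i
        have : (f i : ℂˣ) ^ a = 1 := (mem_rootsOfUnity _ _).mp (f i).2
        simpa using this
      refine ⟨⟨⟨fun i => (f i : ℂˣ), hmemT⟩, hpow⟩, ?_⟩
      apply Subtype.ext
      funext i
      rfl
  have hcard1 : Nat.card ((powMonoidHom a : T n →* T n).ker) = Nat.card P.ker :=
    Nat.card_congr (Equiv.ofBijective F hFbij)
  have hcard_mu : Nat.card μ = a := by
    exact Complex.card_rootsOfUnity a
  have hcardA : Nat.card (Fin n → μ) = a ^ n := by
    rw [Nat.card_pi]
    simp only [hcard_mu, Finset.prod_const, Finset.card_univ, Fintype.card_fin]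
  have hcardQ : Nat.card ((Fin n → μ) ⧸ P.ker) = a := by
    rw [Nat.card_congr (QuotientGroup.quotientKerEquivOfSurjective P hPsurj).toEquiv]
    exact hcard_mu
  have := Subgroup.card_eq_card_quotient_mul_card_subgroup P.ker
  rw [hcardA, hcardQ] at this
  rw [hcard1]
  have h2 : a ^ n = a * a ^ (n - 1) := by
    conv_lhs => rw [show n = (n - 1) + 1 by omega]
    rw [pow_succ]
    ring
  rw [h2] at this
  exact Nat.eq_of_mul_eq_mul_left ha this.symm

end Count
end Stmt8Aux

namespace Stmt8Aux
open Subgroup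

lemma main_card {n : ℕ} (hn : 0 < n) {D : Finset (Finset (Fin n))}
    {w : Finset (Fin n) → ℕ} (hD : IsSpecialDatum D w) {J : Finset (Fin n)} (hJ : J ∈ D)
    (hJuniq : ∀ K ∈ D, (∀ L ∈ D, K ⊆ L → K = L) → K = J) {a : ℕ} (ha : 0 < a) :
    Nat.card (Subgroup.closure (S n D (fun K => if K = J then 1 else a * w K)))
      = a ^ (n - 1) * Nat.card (Subgroup.closure (S n D w)) := by
  classical
  set wa : Finset (Fin n) → ℕ := fun K => if K = J then 1 else a * w K with hwa
  set Ha : Subgroup (T n) := Subgroup.closure (S n D wa) with hHa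
  set φ : T n →* T n := powMonoidHom a with hφ
  set ψ : Ha →* T n := φ.comp Ha.subtype with hψ
  haveI : Finite Ha := finite_closure D wa (by
    intro K hK
    by_cases h : K = J
    · simp [hwa, h]
    · simp only [hwa, if_neg h]
      exact Nat.mul_pos ha (hD.w_pos K hK))
  have h_range : ψ.range = Subgroup.closure (S n D w) := by
    rw [hψ, MonoidHom.range_comp, Subgroup.range_subtype, hHa,
      MonoidHom.map_closure, image_S hD hJuniq ha]
  have hker_le : φ.ker ≤ Ha := ker_le hD hn hJ hJuniq ha
  have h_ker : ψ.ker = φ.ker.subgroupOf Ha := by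
    ext x
    simp [hψ, MonoidHom.mem_ker, Subgroup.mem_subgroupOf]
  have hck : Nat.card ψ.ker = a ^ (n - 1) := by
    rw [h_ker]
    rw [Nat.card_congr (Subgroup.subgroupOfEquivOfLe hker_le).toEquiv]
    exact card_ker_pow hn ha
  have hlag := Subgroup.card_eq_card_quotient_mul_card_subgroup ψ.ker
  rw [Nat.card_congr (QuotientGroup.quotientKerEquivRange ψ).toEquiv] at hlag
  rw [h_range, hck] at hlag
  rw [hlag, mul_comm]

end Stmt8Aux

theorem stmt_8 (n : ℕ) (hn : 1 ≤ n) (D : Finset (Finset (Fin n)))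
    (w : Finset (Fin n) → ℕ) (hD : IsSpecialDatum D w)
    (J : Finset (Fin n)) (hJ : J ∈ D)
    (hJmax : ∀ K ∈ D, J ⊆ K → J = K)
    (hJuniq : ∀ K ∈ D, (∀ L ∈ D, K ⊆ L → K = L) → K = J)
    (a : ℕ) (ha : 0 < a) :
    IsSpecialDatum D (fun K => if K = J then 1 else a * w K) ∧
      Nat.card (specialGroup n D (fun K => if K = J then 1 else a * w K)) =
        a ^ (n - 1) * Nat.card (specialGroup n D w) := by
  constructor
  · constructor
    · exact hD.nonempty_mem
    · exact hD.singleton_mem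
    · exact hD.laminar
    · intro K hK
      by_cases h : K = J
      · simp [h]
      · simp only [if_neg h]
        exact Nat.mul_pos ha (hD.w_pos K hK)
    · intro K hK hmax
      simp [hJuniq K hK hmax]
    · intro K hK K' hK' hss
      have hKne : K ≠ J := by
        intro h
        subst h
        exact hss.not_subset ((hJmax K' hK' hss.subset) ▸ subset_rfl)
      by_cases h' : K' = J
      · simp only [if_neg hKne, if_pos h']
        have h1 : w K' < w K := hD.w_lt K hK K' hK' hss
        have h2 : 0 < w K' := hD.w_pos K' hK'
        have : 1 < a * w K := by nlinarith
        simpa using this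
      · simp only [if_neg hKne, if_neg h']
        exact (Nat.mul_lt_mul_left ha).mpr (hD.w_lt K hK K' hK' hss)
    · intro K hK K' hK' hss
      by_cases h' : K' = J
      · simp [h']
      · have hKne : K ≠ J := by
          intro h
          subst h
          exact hss.not_subset ((hJmax K' hK' hss.subset) ▸ subset_rfl)
        simp only [if_neg hKne, if_neg h']
        exact mul_dvd_mul_left a (hD.w_dvd K hK K' hK' hss)
    · intro J₁ h1 J₂ h2 J₀ h3 hc1 hc2
      have hne1 : J₁ ≠ J := Stmt8Aux.cover_ne_root hJuniq h3 hc1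
      have hne2 : J₂ ≠ J := Stmt8Aux.cover_ne_root hJuniq h3 hc2
      simp only [if_neg hne1, if_neg hne2]
      rw [hD.w_cover J₁ h1 J₂ h2 J₀ h3 hc1 hc2]
  · rw [Stmt8Aux.card_specialGroup, Stmt8Aux.card_specialGroup]
    exact Stmt8Aux.main_card hn hD hJ hJuniq ha
end

section
/- Let n ≥ 2 and let 𝔻 = (D, w) be an n-dimensional connected special datum with unique maximal element J, and let J' be a maximal element of D \ {J}. Let 𝔻∖J = (D \ {J}, v) be the special datum with v(K) = w(K)/w(J') for every K ∈ D \ {J}. Then |G_𝔻| = w(J')^{n−1}·|G_{𝔻∖J}|. -/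
open Finset

namespace SpecialDatumAux

lemma diagPair_coe {n : ℕ} (ζ : ℂˣ) (i j : Fin n) :
    (diagPair ζ i j : Matrix (Fin n) (Fin n) ℂ) =
      Matrix.diagonal
        (fun k => (if k = i then (ζ : ℂ) else 1) * (if k = j then ((ζ⁻¹ : ℂˣ) : ℂ) else 1)) := rfl

lemma diagPair_pow {n : ℕ} (ζ : ℂˣ) (i j : Fin n) (a : ℕ) :
    diagPair ζ i j ^ a = diagPair (ζ ^ a) i j := by
  apply Subtype.ext
  rw [Matrix.SpecialLinearGroup.coe_pow, diagPair_coe, diagPair_coe, Matrix.diagonal_pow]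
  refine congrArg Matrix.diagonal (funext fun k => ?_)
  simp only [Pi.pow_apply]
  split_ifs <;>
    simp [mul_pow, ← Units.val_pow_eq_pow_val, inv_pow]

lemma diagPair_one {n : ℕ} (i j : Fin n) : diagPair (1 : ℂˣ) i j = 1 := by
  apply Subtype.ext
  rw [diagPair_coe, Matrix.SpecialLinearGroup.coe_one]
  have : (fun k => (if k = i then ((1:ℂˣ) : ℂ) else 1) *
      (if k = j then (((1:ℂˣ)⁻¹ : ℂˣ) : ℂ) else 1)) = fun _ => (1:ℂ) := by
    funext k; split_ifs <;> simp
  rw [this, Matrix.diagonal_one]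

/-- coercion as a monoid hom -/
def slval (n : ℕ) : Matrix.SpecialLinearGroup (Fin n) ℂ →* Matrix (Fin n) (Fin n) ℂ where
  toFun g := (g : Matrix (Fin n) (Fin n) ℂ)
  map_one' := rfl
  map_mul' _ _ := rfl

lemma isDiag_of_mem {n : ℕ} (D : Finset (Finset (Fin n))) (w : Finset (Fin n) → ℕ) :
    ∀ g ∈ specialGroup n D w, (g : Matrix (Fin n) (Fin n) ℂ).IsDiag := by
  intro g hg
  simp only [specialGroup] at hg
  induction hg using Subgroup.closure_induction with
  | mem x hx =>
    obtain ⟨J₁, J₂, J₀, _, _, _, _, _, i, _, j, _, ζ, _, rfl⟩ := hx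
    rw [diagPair_coe]; exact Matrix.isDiag_diagonal _
  | one => rw [Matrix.SpecialLinearGroup.coe_one]; exact Matrix.isDiag_one
  | mul x y hx hy ihx ihy =>
    rw [Matrix.SpecialLinearGroup.coe_mul, ← ihx.diagonal_diag, ← ihy.diagonal_diag,
      Matrix.diagonal_mul_diagonal]
    exact Matrix.isDiag_diagonal _
  | inv x hx ihx =>
    have h1 : (x : Matrix (Fin n) (Fin n) ℂ) * ((x⁻¹ : Matrix.SpecialLinearGroup (Fin n) ℂ) :
        Matrix (Fin n) (Fin n) ℂ) = 1 := by
      rw [← Matrix.SpecialLinearGroup.coe_mul, mul_inv_cancel,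
        Matrix.SpecialLinearGroup.coe_one]
    have h2 : ((x⁻¹ : Matrix.SpecialLinearGroup (Fin n) ℂ) : Matrix (Fin n) (Fin n) ℂ) =
        (x : Matrix (Fin n) (Fin n) ℂ)⁻¹ := (Matrix.inv_eq_right_inv h1).symm
    rw [h2, ← ihx.diagonal_diag, Matrix.inv_diagonal]
    exact Matrix.isDiag_diagonal _

lemma commute_of_isDiag {n : ℕ} {g h : Matrix.SpecialLinearGroup (Fin n) ℂ}
    (hg : (g : Matrix (Fin n) (Fin n) ℂ).IsDiag) (hh : (h : Matrix (Fin n) (Fin n) ℂ).IsDiag) :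
    Commute g h := by
  apply Subtype.ext
  show ((g * h : Matrix.SpecialLinearGroup (Fin n) ℂ) : Matrix (Fin n) (Fin n) ℂ) = _
  rw [Matrix.SpecialLinearGroup.coe_mul, Matrix.SpecialLinearGroup.coe_mul,
    ← hg.diagonal_diag, ← hh.diagonal_diag, Matrix.diagonal_mul_diagonal,
    Matrix.diagonal_mul_diagonal]
  exact congrArg Matrix.diagonal (funext fun x => mul_comm _ _)

/-- root lifting: every primitive k-th root of unity in ℂˣ is the M-th power of a
primitive (M*k)-th root of unity. -/
lemma exists_prim_lift (M k : ℕ) (hM : 0 < M) (hk : 0 < k) (ξ : ℂˣ)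
    (hξ : IsPrimitiveRoot ξ k) :
    ∃ ζ : ℂˣ, IsPrimitiveRoot ζ (M * k) ∧ ζ ^ M = ξ := by
  haveI : NeZero k := ⟨hk.ne'⟩
  have hMk : 0 < M * k := Nat.mul_pos hM hk
  haveI : NeZero (M * k) := ⟨hMk.ne'⟩
  obtain hζ₀ := Complex.isPrimitiveRoot_exp (M * k) hMk.ne'
  set ζ₀ : ℂˣ := (hζ₀.isUnit hMk.ne').unit with hζ₀def
  have hζ₀u : IsPrimitiveRoot ζ₀ (M * k) := hζ₀.isUnit_unit hMk.ne'
  have hpow : IsPrimitiveRoot (ζ₀ ^ M) k := hζ₀u.pow hMk rfl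
  have hmem : ξ ∈ rootsOfUnity k ℂ := by
    rw [mem_rootsOfUnity]; exact hξ.pow_eq_one
  obtain ⟨b, hbk, hb⟩ := hpow.eq_pow_of_mem_rootsOfUnity hmem
  have hbcop : Nat.Coprime b k := (hpow.pow_iff_coprime hk b).mp (hb ▸ hξ)
  -- lift b to a residue coprime to M*k
  obtain ⟨u, hu⟩ := ZMod.unitsMap_surjective (show k ∣ M * k from dvd_mul_left k M)
    (ZMod.unitOfCoprime b hbcop)
  set b' : ℕ := (u : ZMod (M * k)).val with hb'def
  have hb'cop : Nat.Coprime b' (M * k) := ZMod.val_coe_unit_coprime u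
  have hcong : (b' : ZMod k) = (b : ZMod k) := by
    have := congrArg (fun v : (ZMod k)ˣ => (v : ZMod k)) hu
    simpa [ZMod.unitsMap_def, hb'def, ZMod.natCast_val] using this
  have hmod : b' ≡ b [MOD k] := (ZMod.natCast_eq_natCast_iff _ _ _).mp hcong
  refine ⟨ζ₀ ^ b', hζ₀u.pow_of_coprime b' hb'cop, ?_⟩
  have horder : orderOf (ζ₀ ^ M) = k := (hpow.eq_orderOf).symm
  calc (ζ₀ ^ b') ^ M = (ζ₀ ^ M) ^ b' := by rw [← pow_mul, ← pow_mul, mul_comm]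
    _ = (ζ₀ ^ M) ^ b := by rw [pow_eq_pow_iff_modEq, horder]; exact hmod
    _ = ξ := hb

end SpecialDatumAux

open SpecialDatumAux

/-- Lemma 2.12: let `𝔻 = (D, w)` be an `n`-dimensional connected special datum
(`n ≥ 2`) with unique maximal element `J`, let `J'` be a maximal element of `D \ {J}`
and let `𝔻∖J = (D \ {J}, v)` with `v(K) = w(K)/w(J')`. Then
`|G_𝔻| = w(J')^{n−1} · |G_{𝔻∖J}|`. -/
theorem stmt_9 (n : ℕ) (hn : 2 ≤ n) (D : Finset (Finset (Fin n)))
    (w : Finset (Fin n) → ℕ) (hD : IsSpecialDatum D w)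
    (J : Finset (Fin n)) (hJ : J ∈ D)
    (hJmax : ∀ K ∈ D, J ⊆ K → J = K)
    (hJuniq : ∀ K ∈ D, (∀ L ∈ D, K ⊆ L → K = L) → K = J)
    (J' : Finset (Fin n)) (hJ' : J' ∈ D.erase J)
    (hJ'max : ∀ K ∈ D.erase J, J' ⊆ K → J' = K) :
    Nat.card (specialGroup n D w) =
      w J' ^ (n - 1) * Nat.card (specialGroup n (D.erase J) (fun K => w K / w J')) := by
  classical
  obtain ⟨hJ'ne, hJ'D⟩ := Finset.mem_erase.mp hJ'
  set m := w J' with hmdef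
  have hm0 : 0 < m := hD.w_pos J' hJ'D
  haveI : NeZero m := ⟨hm0.ne'⟩
  -- generic existence of maximal elements above a given one
  have exists_max : ∀ (S : Finset (Finset (Fin n))), ∀ K ∈ S,
      ∃ L ∈ S, K ⊆ L ∧ ∀ M ∈ S, L ⊆ M → L = M := by
    intro S K hK
    obtain ⟨L, hL, hmax⟩ := Finset.exists_max_image (S.filter (fun M => K ⊆ M))
      (fun M => M.card) ⟨K, Finset.mem_filter.mpr ⟨hK, Finset.Subset.refl K⟩⟩
    obtain ⟨hLS, hKL⟩ := Finset.mem_filter.mp hL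
    refine ⟨L, hLS, hKL, fun M hM hLM => ?_⟩
    exact Finset.eq_of_subset_of_card_le hLM
      (hmax M (Finset.mem_filter.mpr ⟨hM, hKL.trans hLM⟩))
  -- J is the whole universe
  have hJuniv : J = Finset.univ := by
    rw [Finset.eq_univ_iff_forall]
    intro i
    rcases hD.laminar {i} (hD.singleton_mem i) J hJ with h | h | h
    · exact h (Finset.mem_singleton_self i)
    · obtain ⟨x, hx⟩ := hD.nonempty_mem J hJ
      have hxi := h hx
      rw [Finset.mem_singleton] at hxi
      rwa [← hxi]
    · obtain ⟨L, hLD, hiL, hLmax⟩ := exists_max D {i} (hD.singleton_mem i)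
      have hLJ : L = J := hJuniq L hLD hLmax
      exact hLJ ▸ hiL (Finset.mem_singleton_self i)
  have hssub : ∀ {A B : Finset (Fin n)}, A ⊂ B → A ≠ J := by
    intro A B h hA
    subst hA
    have hBJ : B ⊆ A := by rw [hJuniv]; exact Finset.subset_univ B
    exact absurd hBJ (Finset.ssubset_def.mp h).2
  -- maximal elements of the erased family cover J
  have cover_of_max : ∀ L ∈ D.erase J, (∀ M ∈ D.erase J, L ⊆ M → L = M) → CoversIn D L J := by
    intro L hL hmax
    obtain ⟨hLne, hLD⟩ := Finset.mem_erase.mp hL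
    constructor
    · rw [hJuniv]
      exact Finset.ssubset_univ_iff.mpr (by rw [← hJuniv]; exact hLne)
    · rintro ⟨K, hKD, h1, h2⟩
      have hKne : K ≠ J := hssub h2
      exact h1.ne (hmax K (Finset.mem_erase.mpr ⟨hKne, hKD⟩) h1.subset)
  have hJ'cov : CoversIn D J' J := cover_of_max J' hJ' hJ'max
  have w_max_erase : ∀ L ∈ D.erase J, (∀ M ∈ D.erase J, L ⊆ M → L = M) → w L = m := by
    intro L hL hmax
    exact hD.w_cover L (Finset.mem_of_mem_erase hL) J' hJ'D J hJ (cover_of_max L hL hmax) hJ'cov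
  have hdvd : ∀ K ∈ D.erase J, m ∣ w K := by
    intro K hK
    obtain ⟨L, hL, hKL, hLmax⟩ := exists_max (D.erase J) K hK
    have hwL : w L = m := w_max_erase L hL hLmax
    rcases eq_or_ne K L with rfl | hne
    · exact hwL ▸ dvd_rfl
    · exact hwL ▸ hD.w_dvd K (Finset.mem_of_mem_erase hK) L (Finset.mem_of_mem_erase hL)
        (Finset.ssubset_iff_subset_ne.mpr ⟨hKL, hne⟩)
  have child : ∀ i : Fin n, ∃ C, C ∈ D ∧ i ∈ C ∧ CoversIn D C J ∧ w C = m := by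
    intro i
    have hne : ({i} : Finset (Fin n)) ≠ J := by
      intro h
      have hcard : ({i} : Finset (Fin n)).card = J.card := by rw [h]
      rw [Finset.card_singleton, hJuniv, Finset.card_univ, Fintype.card_fin] at hcard
      omega
    obtain ⟨L, hL, hiL, hLmax⟩ := exists_max (D.erase J) {i}
      (Finset.mem_erase.mpr ⟨hne, hD.singleton_mem i⟩)
    exact ⟨L, Finset.mem_of_mem_erase hL, hiL (Finset.mem_singleton_self i),
      cover_of_max L hL hLmax, w_max_erase L hL hLmax⟩
  -- a fixed primitive m-th root of unity
  have hζc : IsPrimitiveRoot (Complex.exp (2 * Real.pi * Complex.I / m)) m :=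
    Complex.isPrimitiveRoot_exp m hm0.ne'
  set ζu : ℂˣ := (hζc.isUnit hm0.ne').unit with hζudef
  have hζu : IsPrimitiveRoot ζu m := hζc.isUnit_unit hm0.ne'
  have hζuval : (ζu : ℂ) = Complex.exp (2 * Real.pi * Complex.I / m) := IsUnit.unit_spec _
  -- membership of all diagPair x i j with x ^ m = 1
  have hTgen : ∀ x : ℂˣ, x ^ m = 1 → ∀ i j : Fin n, diagPair x i j ∈ specialGroup n D w := by
    intro x hx i j
    obtain ⟨c, hcm, hc⟩ := hζu.eq_pow_of_mem_rootsOfUnity ((mem_rootsOfUnity m x).mpr hx)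
    obtain ⟨Ci, hCiD, hiCi, hCicov, hCiw⟩ := child i
    obtain ⟨Cj, hCjD, hjCj, hCjcov, hCjw⟩ := child j
    have hgen : diagPair ζu i j ∈ specialGroup n D w :=
      Subgroup.subset_closure ⟨Ci, Cj, J, hCiD, hCjD, hJ, hCicov, hCjcov, i, hiCi, j, hjCj,
        ζu, by rw [hCiw]; exact hζu, rfl⟩
    have hp := pow_mem hgen c
    rwa [diagPair_pow, hc] at hp
  -- all diagonal matrices with entries m-th roots of unity and determinant one lie in G
  have i₀ : Fin n := ⟨0, by omega⟩
  have hTmem : ∀ (d : Fin n → ℂˣ) (g : Matrix.SpecialLinearGroup (Fin n) ℂ),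
      (∀ i, d i ^ m = 1) → (∏ i, d i) = 1 →
      (g : Matrix (Fin n) (Fin n) ℂ) = Matrix.diagonal (fun i => ((d i : ℂˣ) : ℂ)) →
      g ∈ specialGroup n D w := by
    intro d g hd hprod hg
    set Ffun : Fin n → (Fin n → ℂ) := fun i k =>
      (if k = i then ((d i : ℂˣ) : ℂ) else 1) * (if k = i₀ then (((d i)⁻¹ : ℂˣ) : ℂ) else 1)
      with hFfun
    have hcomm : (↑(Finset.univ.erase i₀) : Set (Fin n)).Pairwise fun a b =>
        Commute (diagPair (d a) a i₀) (diagPair (d b) b i₀) := by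
      intro a _ b _ _
      exact commute_of_isDiag (by rw [diagPair_coe]; exact Matrix.isDiag_diagonal _)
        (by rw [diagPair_coe]; exact Matrix.isDiag_diagonal _)
    set P := (Finset.univ.erase i₀).noncommProd (fun i => diagPair (d i) i i₀) hcomm with hP
    have hmemP : P ∈ specialGroup n D w :=
      Subgroup.noncommProd_mem _ hcomm fun i _ => hTgen (d i) (hd i) i i₀
    have hcomm2 : (↑(Finset.univ.erase i₀) : Set (Fin n)).Pairwise fun a b =>
        Commute (Matrix.diagonal (Ffun a)) (Matrix.diagonal (Ffun b)) := by
      intro a _ b _ _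
      show _ * _ = _ * _
      rw [Matrix.diagonal_mul_diagonal, Matrix.diagonal_mul_diagonal]
      exact congrArg Matrix.diagonal (mul_comm _ _)
    have h5 : (P : Matrix (Fin n) (Fin n) ℂ) =
        (Finset.univ.erase i₀).noncommProd (fun i => Matrix.diagonal (Ffun i)) hcomm2 := by
      rw [hP]
      exact Finset.map_noncommProd _ _ hcomm (slval n)
    have h6 : (Finset.univ.erase i₀).noncommProd (fun i => Matrix.diagonal (Ffun i)) hcomm2 =
        Matrix.diagonal (∏ i ∈ Finset.univ.erase i₀, Ffun i) := by
      have h7 := Finset.map_noncommProd (Finset.univ.erase i₀) Ffun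
        (fun _ _ _ _ _ => Commute.all _ _) (Matrix.diagonalRingHom (Fin n) ℂ)
      rw [Finset.noncommProd_eq_prod] at h7
      exact h7.symm
    have key : g = P := by
      apply Subtype.ext
      rw [hg, h5, h6]
      refine congrArg Matrix.diagonal (funext fun k => ?_)
      rw [Finset.prod_apply]
      by_cases hk : k = i₀
      · subst hk
        rw [hFfun, Finset.prod_mul_distrib]
        have h1 : (∏ i ∈ Finset.univ.erase k, (if k = i then ((d i : ℂˣ) : ℂ) else 1)) = 1 :=
          Finset.prod_eq_one fun i hi =>
            if_neg (fun h => (Finset.mem_erase.mp hi).1 h.symm)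
        have h2 : (∏ i ∈ Finset.univ.erase k, (if k = k then (((d i)⁻¹ : ℂˣ) : ℂ) else 1)) =
            ∏ i ∈ Finset.univ.erase k, (((d i : ℂˣ) : ℂ))⁻¹ := by
          refine Finset.prod_congr rfl fun i _ => ?_
          rw [if_pos rfl, Units.val_inv_eq_inv_val]
        have hcoe : (∏ i : Fin n, ((d i : ℂˣ) : ℂ)) = 1 := by
          rw [← Units.coe_prod, hprod]
          rfl
        have h3 : ((d k : ℂˣ) : ℂ) * ∏ i ∈ Finset.univ.erase k, ((d i : ℂˣ) : ℂ) = 1 := by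
          rw [Finset.mul_prod_erase Finset.univ (fun i => ((d i : ℂˣ) : ℂ))
            (Finset.mem_univ k)]
          exact hcoe
        have h4 : ∏ i ∈ Finset.univ.erase k, ((d i : ℂˣ) : ℂ) = (((d k : ℂˣ) : ℂ))⁻¹ :=
          (inv_eq_of_mul_eq_one_right h3).symm
        rw [h1, one_mul, h2, Finset.prod_inv_distrib, h4, inv_inv]
      · rw [hFfun, Finset.prod_mul_distrib]
        have h2' : (∏ i ∈ Finset.univ.erase i₀,
            (if k = i₀ then (((d i)⁻¹ : ℂˣ) : ℂ) else 1)) = 1 :=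
          Finset.prod_eq_one fun i _ => if_neg hk
        rw [h2', mul_one, Finset.prod_ite_eq,
          if_pos (Finset.mem_erase.mpr ⟨hk, Finset.mem_univ k⟩)]
    rw [key]
    exact hmemP
  -- covering relations transfer between D and D.erase J
  have coverErase : ∀ {K₁ K₀ : Finset (Fin n)}, CoversIn D K₁ K₀ →
      CoversIn (D.erase J) K₁ K₀ :=
    fun h => ⟨h.1, fun ⟨K, hK, h1, h2⟩ => h.2 ⟨K, Finset.mem_of_mem_erase hK, h1, h2⟩⟩
  have coverUp : ∀ {K₁ K₀ : Finset (Fin n)}, CoversIn (D.erase J) K₁ K₀ → CoversIn D K₁ K₀ :=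
    fun h => ⟨h.1, fun ⟨K, hK, h1, h2⟩ =>
      h.2 ⟨K, Finset.mem_erase.mpr ⟨hssub h2, hK⟩, h1, h2⟩⟩
  -- m-th powers of elements of G lie in G'
  have hpowmem : ∀ g ∈ specialGroup n D w,
      g ^ m ∈ specialGroup n (D.erase J) (fun K => w K / m) := by
    intro g hg
    simp only [specialGroup] at hg
    induction hg using Subgroup.closure_induction with
    | mem x hx =>
      obtain ⟨J₁, J₂, J₀, hJ₁, hJ₂, hJ₀, hc₁, hc₂, i, hi, j, hj, ζ, hζ, rfl⟩ := hx
      rw [diagPair_pow]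
      by_cases hJ₀J : J₀ = J
      · have hw1 : w J₁ = m := hD.w_cover J₁ hJ₁ J' hJ'D J hJ (hJ₀J ▸ hc₁) hJ'cov
        have hone : ζ ^ m = 1 := by rw [← hw1]; exact hζ.pow_eq_one
        rw [hone, diagPair_one]
        exact one_mem _
      · have hJ₁e : J₁ ∈ D.erase J := Finset.mem_erase.mpr ⟨hssub hc₁.1, hJ₁⟩
        have hJ₂e : J₂ ∈ D.erase J := Finset.mem_erase.mpr ⟨hssub hc₂.1, hJ₂⟩
        have hJ₀e : J₀ ∈ D.erase J := Finset.mem_erase.mpr ⟨hJ₀J, hJ₀⟩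
        have hmdvd : m ∣ w J₁ := hdvd J₁ hJ₁e
        have hprim : IsPrimitiveRoot (ζ ^ m) (w J₁ / m) :=
          hζ.pow (hD.w_pos J₁ hJ₁) (Nat.mul_div_cancel' hmdvd).symm
        exact Subgroup.subset_closure ⟨J₁, J₂, J₀, hJ₁e, hJ₂e, hJ₀e, coverErase hc₁,
          coverErase hc₂, i, hi, j, hj, ζ ^ m, hprim, rfl⟩
    | one => rw [one_pow]; exact one_mem _
    | mul x y hx hy ihx ihy =>
      have hcomm : Commute x y :=
        commute_of_isDiag (isDiag_of_mem D w x hx) (isDiag_of_mem D w y hy)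
      rw [hcomm.mul_pow]
      exact mul_mem ihx ihy
    | inv x hx ihx =>
      rw [inv_pow]
      exact inv_mem ihx
  -- every element of G' is an m-th power of an element of G
  have hsurj : ∀ h ∈ specialGroup n (D.erase J) (fun K => w K / m),
      ∃ g ∈ specialGroup n D w, g ^ m = h := by
    intro h hh
    simp only [specialGroup] at hh
    induction hh using Subgroup.closure_induction with
    | mem x hx =>
      obtain ⟨J₁, J₂, J₀, hJ₁, hJ₂, hJ₀, hc₁, hc₂, i, hi, j, hj, ξ, hξ, rfl⟩ := hx
      have hmdvd : m ∣ w J₁ := hdvd J₁ hJ₁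
      have hk0 : 0 < w J₁ / m :=
        Nat.div_pos (Nat.le_of_dvd (hD.w_pos J₁ (Finset.mem_of_mem_erase hJ₁)) hmdvd) hm0
      obtain ⟨ζ, hζprim, hζpow⟩ := exists_prim_lift m (w J₁ / m) hm0 hk0 ξ hξ
      have hmk : m * (w J₁ / m) = w J₁ := Nat.mul_div_cancel' hmdvd
      refine ⟨diagPair ζ i j, ?_, ?_⟩
      · exact Subgroup.subset_closure ⟨J₁, J₂, J₀, Finset.mem_of_mem_erase hJ₁,
          Finset.mem_of_mem_erase hJ₂, Finset.mem_of_mem_erase hJ₀, coverUp hc₁, coverUp hc₂,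
          i, hi, j, hj, ζ, hmk ▸ hζprim, rfl⟩
      · rw [diagPair_pow, hζpow]
    | one => exact ⟨1, one_mem _, one_pow m⟩
    | mul x y hx hy ihx ihy =>
      obtain ⟨g₁, hg₁, hg₁m⟩ := ihx
      obtain ⟨g₂, hg₂, hg₂m⟩ := ihy
      have hcomm : Commute g₁ g₂ :=
        commute_of_isDiag (isDiag_of_mem D w g₁ hg₁) (isDiag_of_mem D w g₂ hg₂)
      exact ⟨g₁ * g₂, mul_mem hg₁ hg₂, by rw [hcomm.mul_pow, hg₁m, hg₂m]⟩
    | inv x hx ihx =>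
      obtain ⟨g₁, hg₁, hg₁m⟩ := ihx
      exact ⟨g₁⁻¹, inv_mem hg₁, by rw [inv_pow, hg₁m]⟩
  -- the homomorphism ψ : G →* G', g ↦ g ^ m
  let ψ : specialGroup n D w →* specialGroup n (D.erase J) (fun K => w K / m) :=
    { toFun := fun g => ⟨(g : Matrix.SpecialLinearGroup (Fin n) ℂ) ^ m, hpowmem g.1 g.2⟩
      map_one' := Subtype.ext (one_pow m)
      map_mul' := fun g h => Subtype.ext
        ((commute_of_isDiag (isDiag_of_mem D w g.1 g.2) (isDiag_of_mem D w h.1 h.2)).mul_pow m) }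
  have hψsurj : Function.Surjective ψ := by
    rintro ⟨h, hh⟩
    obtain ⟨g, hgG, hgm⟩ := hsurj h hh
    exact ⟨⟨g, hgG⟩, Subtype.ext hgm⟩
  -- counting the kernel
  let σ : (Fin n → ZMod m) →+ ZMod m :=
    AddMonoidHom.mk' (fun a => ∑ i, a i) (fun a b => by simp [Finset.sum_add_distrib])
  have hσsurj : Function.Surjective σ := by
    intro c
    refine ⟨Pi.single i₀ c, ?_⟩
    show (∑ i, Pi.single i₀ c i) = c
    simp [Pi.single_apply]
  have cardKerσ : Nat.card σ.ker = m ^ (n - 1) := by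
    have h1 : Nat.card (Fin n → ZMod m) = m ^ n := by
      rw [Nat.card_pi]
      simp [Nat.card_zmod]
    have h2 := AddSubgroup.card_eq_card_quotient_mul_card_addSubgroup σ.ker
    have h3 : Nat.card ((Fin n → ZMod m) ⧸ σ.ker) = m := by
      rw [Nat.card_congr (QuotientAddGroup.quotientKerEquivOfSurjective σ hσsurj).toEquiv,
        Nat.card_zmod]
    rw [h1, h3] at h2
    have h4 : m ^ n = m * m ^ (n - 1) := by
      rw [← pow_succ']
      congr 1
      omega
    exact Nat.eq_of_mul_eq_mul_left hm0 (h2.symm.trans h4)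
  -- the vector of units attached to a ∈ ker σ
  let dvec : (Fin n → ZMod m) → Fin n → ℂˣ := fun a i => ζu ^ (a i).val
  have hdvec_pow : ∀ (a : Fin n → ZMod m) (i : Fin n), dvec a i ^ m = 1 := by
    intro a i
    show (ζu ^ (a i).val) ^ m = 1
    rw [← pow_mul, mul_comm, pow_mul, hζu.pow_eq_one, one_pow]
  have hdvec_prod : ∀ a : Fin n → ZMod m, σ a = 0 → (∏ i, dvec a i) = 1 := by
    intro a ha
    show (∏ i, ζu ^ (a i).val) = 1
    rw [Finset.prod_pow_eq_pow_sum]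
    apply (hζu.pow_eq_one_iff_dvd _).mpr
    apply (ZMod.natCast_eq_zero_iff _ _).mp
    have hcast : ((∑ i, (a i).val : ℕ) : ZMod m) = ∑ i, a i := by
      push_cast
      exact Finset.sum_congr rfl fun i _ => by rw [ZMod.natCast_val, ZMod.cast_id]
    rw [hcast]
    exact ha
  have hdet : ∀ (d : Fin n → ℂˣ), (∏ i, d i) = 1 →
      (Matrix.diagonal (fun i => ((d i : ℂˣ) : ℂ))).det = 1 := by
    intro d hd
    rw [Matrix.det_diagonal, ← Units.coe_prod, hd]
    rfl
  have hpow1 : ∀ (g : Matrix.SpecialLinearGroup (Fin n) ℂ) (d : Fin n → ℂˣ),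
      (∀ i, d i ^ m = 1) →
      (g : Matrix (Fin n) (Fin n) ℂ) = Matrix.diagonal (fun i => ((d i : ℂˣ) : ℂ)) →
      g ^ m = 1 := by
    intro g d hd hg
    apply Subtype.ext
    rw [Matrix.SpecialLinearGroup.coe_pow, hg, Matrix.diagonal_pow,
      Matrix.SpecialLinearGroup.coe_one]
    have hent : (fun i => ((d i : ℂˣ) : ℂ)) ^ m = fun _ => (1 : ℂ) := by
      funext i
      rw [Pi.pow_apply, ← Units.val_pow_eq_pow_val, hd i]
      rfl
    rw [hent, Matrix.diagonal_one]
  -- the bijection between ker σ and ker ψ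
  let F : σ.ker → ψ.ker := fun a =>
    ⟨⟨⟨Matrix.diagonal (fun i => ((dvec a.1 i : ℂˣ) : ℂ)),
        hdet (dvec a.1) (hdvec_prod a.1 (AddMonoidHom.mem_ker.mp a.2))⟩,
      hTmem (dvec a.1) _ (hdvec_pow a.1) (hdvec_prod a.1 (AddMonoidHom.mem_ker.mp a.2)) rfl⟩,
      MonoidHom.mem_ker.mpr (Subtype.ext (hpow1 _ (dvec a.1) (hdvec_pow a.1) rfl))⟩
  have hFinj : Function.Injective F := by
    intro a b hab
    apply Subtype.ext
    funext i
    have h1 : ((dvec a.1 i : ℂˣ) : ℂ) = ((dvec b.1 i : ℂˣ) : ℂ) := by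
      have h0 := congrArg (fun x : ψ.ker => ((x.1.1 : Matrix (Fin n) (Fin n) ℂ)) i i) hab
      simpa [F, Matrix.diagonal_apply_eq] using h0
    have h2 : dvec a.1 i = dvec b.1 i := Units.ext h1
    have h3 : (a.1 i).val = (b.1 i).val :=
      hζu.pow_inj (ZMod.val_lt _) (ZMod.val_lt _) h2
    exact ZMod.val_injective m h3
  have hFsurj : Function.Surjective F := by
    rintro ⟨⟨g, hgG⟩, hgker⟩
    have hgm : g ^ m = 1 := by
      have h0 := MonoidHom.mem_ker.mp hgker
      have h1 := congrArg Subtype.val h0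
      exact h1
    have hdg : (g : Matrix (Fin n) (Fin n) ℂ).IsDiag := isDiag_of_mem D w g hgG
    have hge : (g : Matrix (Fin n) (Fin n) ℂ) =
        Matrix.diagonal ((g : Matrix (Fin n) (Fin n) ℂ).diag) := hdg.diagonal_diag.symm
    have hem : ∀ i, (g : Matrix (Fin n) (Fin n) ℂ).diag i ^ m = 1 := by
      intro i
      have h1 : ((g : Matrix (Fin n) (Fin n) ℂ)) ^ m = 1 := by
        rw [← Matrix.SpecialLinearGroup.coe_pow, hgm, Matrix.SpecialLinearGroup.coe_one]
      rw [hge, Matrix.diagonal_pow] at h1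
      have h2 := congrArg (fun M : Matrix (Fin n) (Fin n) ℂ => M i i) h1
      simpa [Matrix.diagonal_apply_eq, Matrix.one_apply_eq] using h2
    have hprodent : (∏ i, (g : Matrix (Fin n) (Fin n) ℂ).diag i) = 1 := by
      have hdet1 : ((g : Matrix (Fin n) (Fin n) ℂ)).det = 1 := g.2
      rw [hge, Matrix.det_diagonal] at hdet1
      exact hdet1
    choose c hcm hcc using fun i =>
      hζc.eq_pow_of_pow_eq_one (hem i)
    have hsum : σ (fun i => ((c i : ℕ) : ZMod m)) = 0 := by
      show (∑ i, ((c i : ℕ) : ZMod m)) = 0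
      rw [← Nat.cast_sum]
      apply (ZMod.natCast_eq_zero_iff _ _).mpr
      apply (hζc.pow_eq_one_iff_dvd _).mp
      rw [← Finset.prod_pow_eq_pow_sum]
      rw [Finset.prod_congr rfl fun i _ => hcc i]
      exact hprodent
    refine ⟨⟨fun i => ((c i : ℕ) : ZMod m), AddMonoidHom.mem_ker.mpr hsum⟩, ?_⟩
    apply Subtype.ext
    apply Subtype.ext
    apply Subtype.ext
    show Matrix.diagonal (fun i => ((dvec (fun i => ((c i : ℕ) : ZMod m)) i : ℂˣ) : ℂ)) =
      (g : Matrix (Fin n) (Fin n) ℂ)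
    rw [hge]
    refine congrArg Matrix.diagonal (funext fun i => ?_)
    show ((ζu ^ (((c i : ℕ) : ZMod m)).val : ℂˣ) : ℂ) = _
    rw [ZMod.val_cast_of_lt (hcm i), Units.val_pow_eq_pow_val, hζuval]
    exact hcc i
  have hcardker : Nat.card ψ.ker = m ^ (n - 1) := by
    rw [← cardKerσ]
    exact (Nat.card_congr (Equiv.ofBijective F ⟨hFinj, hFsurj⟩)).symm
  have main := Subgroup.card_eq_card_quotient_mul_card_subgroup ψ.ker
  have hquot : Nat.card ((specialGroup n D w) ⧸ ψ.ker) =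
      Nat.card (specialGroup n (D.erase J) (fun K => w K / m)) :=
    Nat.card_congr (QuotientGroup.quotientKerEquivOfSurjective ψ hψsurj).toEquiv
  rw [hquot, hcardker] at main
  rw [main, mul_comm]
end

section
/- Let 𝔻 = (D, w) be an n-dimensional special datum. Then the ℂ-subalgebra R_𝔻 of the polynomial ring ℂ[x₁,…,xₙ] generated by the monomials x_J^{w(J)} for J ∈ D, where x_J = ∏_{j∈J} x_j, is equal to the ring of invariants ℂ[x₁,…,xₙ]^{G_𝔻} = {f ∈ ℂ[x₁,…,xₙ] : g·f = f for all g ∈ G_𝔻}, where a diagonal matrix g = diag(c₁,…,cₙ) ∈ G_𝔻 acts on polynomials by the ℂ-algebra map sending x_i to c_i·x_i. -/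
open Finset

open MvPolynomial

lemma act_monomial {n : ℕ} (c : Fin n → ℂ) (d : Fin n →₀ ℕ) (r : ℂ) :
    aeval (fun i => c i • X i) (monomial d r) =
      monomial d ((∏ i, c i ^ d i) * r) := by
  rw [aeval_monomial]
  have h1 : (∏ i, c i ^ d i) = ∏ i ∈ d.support, c i ^ d i :=
    (Finset.prod_subset (Finset.subset_univ d.support) (by
      intro x _ hx
      rw [Finsupp.notMem_support_iff.mp hx, pow_zero])).symm
  have : (d.prod fun i e => (c i • X i) ^ e) =
      (∏ i, c i ^ d i) • (d.prod fun i e => (X i : MvPolynomial (Fin n) ℂ) ^ e) := by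
    rw [Finsupp.prod, Finsupp.prod, h1, smul_eq_C_mul, map_prod C (fun i => c i ^ d i) d.support, ← Finset.prod_mul_distrib]
    refine Finset.prod_congr rfl fun i _ => ?_
    rw [smul_pow, smul_eq_C_mul]
  rw [this, Algebra.smul_def, ← mul_assoc, mul_comm (algebraMap ℂ _ r), mul_assoc,
    ← Algebra.smul_def, ← aeval_monomial (X : Fin n → MvPolynomial (Fin n) ℂ),
    aeval_X_left_apply, smul_monomial, smul_eq_mul]

lemma coeff_act {n : ℕ} (c : Fin n → ℂ) (f : MvPolynomial (Fin n) ℂ) (e : Fin n →₀ ℕ) :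
    coeff e (aeval (fun i => c i • X i) f) = (∏ i, c i ^ e i) * coeff e f := by
  conv_lhs => rw [f.as_sum]
  rw [map_sum, coeff_sum]
  have : ∀ d ∈ f.support,
      coeff e (aeval (fun i => c i • X i) (monomial d (coeff d f))) =
      (∏ i, c i ^ e i) * if d = e then coeff d f else 0 := by
    intro d _
    rw [act_monomial, coeff_monomial]
    split
    · subst ‹d = e›; rfl
    · rw [mul_zero]
  rw [Finset.sum_congr rfl this, ← Finset.mul_sum]
  congr 1
  by_cases he : e ∈ f.support
  · rw [Finset.sum_eq_single e (fun d _ hd => by simp [hd]) (fun h => absurd he h)]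
    simp
  · rw [Finset.sum_eq_zero, (MvPolynomial.notMem_support_iff.mp he).symm]
    intro d hd
    have : d ≠ e := fun h => he (h ▸ hd)
    simp [this]

lemma act_eq_self_iff {n : ℕ} (c : Fin n → ℂ) (f : MvPolynomial (Fin n) ℂ) :
    aeval (fun i => c i • X i) f = f ↔ ∀ e ∈ f.support, (∏ i, c i ^ e i) = 1 := by
  constructor
  · intro h e he
    have := congrArg (coeff e) h
    rw [coeff_act] at this
    exact mul_right_cancel₀ (MvPolynomial.mem_support_iff.mp he) (by rw [this, one_mul])
  · intro h
    ext e
    rw [coeff_act]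
    by_cases he : e ∈ f.support
    · rw [h e he, one_mul]
    · rw [MvPolynomial.notMem_support_iff.mp he, mul_zero]

/-- Invariance condition on an exponent vector. -/
def InvE {n : ℕ} (D : Finset (Finset (Fin n))) (w : Finset (Fin n) → ℕ)
    (e : Fin n →₀ ℕ) : Prop :=
  ∀ J₁ ∈ D, ∀ J₂ ∈ D, ∀ K ∈ D, CoversIn D J₁ K → CoversIn D J₂ K →
    ∀ i ∈ J₁, ∀ j ∈ J₂, (w J₁ : ℤ) ∣ (e i : ℤ) - (e j : ℤ)

lemma gen_cond {n : ℕ} (ζ : ℂˣ) (m : ℕ) (hζ : IsPrimitiveRoot ζ m) (i j : Fin n)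
    (e : Fin n →₀ ℕ) :
    (∏ k, ((if k = i then (ζ : ℂ) else 1) * (if k = j then ((ζ⁻¹ : ℂˣ) : ℂ) else 1)) ^ e k)
      = 1 ↔ (m : ℤ) ∣ (e i : ℤ) - (e j : ℤ) := by
  have h1 : (∏ k, ((if k = i then (ζ : ℂ) else 1) * (if k = j then ((ζ⁻¹ : ℂˣ) : ℂ) else 1)) ^ e k)
      = ((ζ ^ (e i : ℤ) * ζ ^ (-(e j : ℤ)) : ℂˣ) : ℂ) := by
    push_cast [zpow_natCast, zpow_neg]
    rw [Finset.prod_congr rfl (fun k (_ : k ∈ univ) => mul_pow _ _ _), Finset.prod_mul_distrib,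
      Finset.prod_eq_single i (fun k _ hk => by simp [hk]) (by simp),
      Finset.prod_eq_single j (fun k _ hk => by simp [hk]) (by simp)]
    simp [mul_comm]
  rw [h1]
  rw [show (ζ ^ (e i : ℤ) * ζ ^ (-(e j : ℤ))) = ζ ^ ((e i : ℤ) - (e j : ℤ)) by
    rw [← zpow_add]; ring_nf]
  rw [← hζ.zpow_eq_one_iff_dvd]
  constructor
  · intro h; exact Units.ext h
  · intro h; rw [h]; rfl

lemma invariant_iff {n : ℕ} (D : Finset (Finset (Fin n))) (w : Finset (Fin n) → ℕ)
    (hw : ∀ J ∈ D, 0 < w J) (f : MvPolynomial (Fin n) ℂ) :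
    (∀ g ∈ specialGroup n D w,
        aeval (fun i : Fin n =>
          ((g : Matrix.SpecialLinearGroup (Fin n) ℂ) : Matrix (Fin n) (Fin n) ℂ) i i
            • X i) f = f) ↔ ∀ e ∈ f.support, InvE D w e := by
  constructor
  · intro h e he J₁ h₁ J₂ h₂ J hJ hc₁ hc₂ i hi j hj
    have h0 : w J₁ ≠ 0 := (hw J₁ h₁).ne'
    have hζ0 := Complex.isPrimitiveRoot_exp (w J₁) h0
    set ζ : ℂˣ := (hζ0.isUnit h0).unit with hζdef
    have hζ : IsPrimitiveRoot ζ (w J₁) := hζ0.isUnit_unit h0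
    have hg : diagPair ζ i j ∈ specialGroup n D w :=
      Subgroup.subset_closure ⟨J₁, J₂, J, h₁, h₂, hJ, hc₁, hc₂, i, hi, j, hj, ζ, hζ, rfl⟩
    have h2 := h _ hg
    rw [show (fun k : Fin n =>
          ((diagPair ζ i j : Matrix.SpecialLinearGroup (Fin n) ℂ) :
            Matrix (Fin n) (Fin n) ℂ) k k • X k) =
        (fun k : Fin n => ((if k = i then (ζ : ℂ) else 1) *
          (if k = j then ((ζ⁻¹ : ℂˣ) : ℂ) else 1)) • (X k : MvPolynomial (Fin n) ℂ))
        from funext fun k => by rw [diagPair]; simp [Matrix.diagonal_apply_eq]] at h2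
    exact (gen_cond ζ (w J₁) hζ i j e).mp ((act_eq_self_iff _ f).mp h2 e he)
  · intro h g hg
    rw [specialGroup] at hg
    refine Subgroup.closure_induction
      (p := fun (x : Matrix.SpecialLinearGroup (Fin n) ℂ) _ => ∃ c : Fin n → ℂˣ,
        (x : Matrix (Fin n) (Fin n) ℂ) = Matrix.diagonal (fun k => (c k : ℂ)) ∧
        ∀ e ∈ f.support, (∏ k, (c k : ℂ) ^ e k) = 1) ?_ ?_ ?_ ?_ hg
      |>.elim fun c hc => by
        rw [show (fun i : Fin n =>
            ((g : Matrix.SpecialLinearGroup (Fin n) ℂ) : Matrix (Fin n) (Fin n) ℂ) i i • X i) =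
            fun i : Fin n => ((c i : ℂ) • X i) from funext fun i => by
              rw [hc.1, Matrix.diagonal_apply_eq]]
        exact (act_eq_self_iff _ f).mpr hc.2
    · rintro x ⟨J₁, J₂, J, h₁, h₂, hJ, hc₁, hc₂, i, hi, j, hj, ζ, hζ, rfl⟩
      refine ⟨fun k => (if k = i then ζ else 1) * (if k = j then ζ⁻¹ else 1), ?_, ?_⟩
      · show Matrix.diagonal _ = _
        rw [show (fun k : Fin n => (if k = i then (ζ : ℂ) else 1) *
            (if k = j then ((ζ⁻¹ : ℂˣ) : ℂ) else 1)) = fun k =>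
            ((((if k = i then ζ else 1) * (if k = j then ζ⁻¹ else 1)) : ℂˣ) : ℂ) from
          funext fun k => by
            rw [Units.val_mul, apply_ite (Units.val), apply_ite (Units.val), Units.val_one]]
      · intro e he
        have hd := h e he J₁ h₁ J₂ h₂ J hJ hc₁ hc₂ i hi j hj
        have h2 := (gen_cond ζ (w J₁) hζ i j e).mpr hd
        rw [← h2]
        refine Finset.prod_congr rfl fun k _ => ?_
        congr 1
        push_cast
        split <;> split <;> simp
    · exact ⟨fun _ => 1, by simp, by simp⟩
    · rintro x y hx hy ⟨c, hc1, hc2⟩ ⟨d, hd1, hd2⟩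
      refine ⟨c * d, ?_, ?_⟩
      · rw [Matrix.SpecialLinearGroup.coe_mul, hc1, hd1, Matrix.diagonal_mul_diagonal]
        rfl
      · intro e he
        calc (∏ k, ((c * d) k : ℂ) ^ e k)
            = (∏ k, (c k : ℂ) ^ e k) * ∏ k, (d k : ℂ) ^ e k := by
              rw [← Finset.prod_mul_distrib]
              exact Finset.prod_congr rfl fun k _ => by rw [Pi.mul_apply]; push_cast; ring
          _ = 1 := by rw [hc2 e he, hd2 e he, mul_one]
    · rintro x hx ⟨c, hc1, hc2⟩
      have hdet : Matrix.det (Matrix.diagonal (fun k => ((c k)⁻¹ : ℂˣ) : Fin n → ℂ)) = 1 := by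
        have hx1 : Matrix.det (x : Matrix (Fin n) (Fin n) ℂ) = 1 := x.2
        rw [hc1, Matrix.det_diagonal] at hx1
        rw [Matrix.det_diagonal]
        calc (∏ k, (((c k)⁻¹ : ℂˣ) : ℂ)) = (∏ k, ((c k : ℂˣ) : ℂ))⁻¹ := by
              rw [← Finset.prod_inv_distrib]
              exact Finset.prod_congr rfl fun k _ => by push_cast; rfl
          _ = 1 := by rw [hx1, inv_one]
      set y : Matrix.SpecialLinearGroup (Fin n) ℂ :=
        ⟨Matrix.diagonal (fun k => ((c k)⁻¹ : ℂˣ) : Fin n → ℂ), hdet⟩ with hy_def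
      have hxy : x * y = 1 := by
        apply Subtype.ext
        rw [Matrix.SpecialLinearGroup.coe_mul, hc1]
        show Matrix.diagonal _ * Matrix.diagonal _ = _
        rw [Matrix.diagonal_mul_diagonal]
        have : (fun k => (c k : ℂ) * (((c k)⁻¹ : ℂˣ) : ℂ)) = fun _ : Fin n => (1 : ℂ) := by
          funext k; push_cast; exact mul_inv_cancel₀ (c k).ne_zero
        rw [this, Matrix.diagonal_one]
        rfl
      have hinv : x⁻¹ = y := inv_eq_of_mul_eq_one_right hxy
      refine ⟨fun k => (c k)⁻¹, by rw [hinv], ?_⟩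
      intro e he
      calc (∏ k, (((c k)⁻¹ : ℂˣ) : ℂ) ^ e k)
          = (∏ k, (c k : ℂ) ^ e k)⁻¹ := by
            rw [← Finset.prod_inv_distrib]
            exact Finset.prod_congr rfl fun k _ => by push_cast; rw [inv_pow]
        _ = 1 := by rw [hc2 e he, inv_one]

section helpers
variable {n : ℕ} {D : Finset (Finset (Fin n))} {w : Finset (Fin n) → ℕ}
  (hD : IsSpecialDatum D w)
include hD

lemma lam {J K : Finset (Fin n)} (hJ : J ∈ D) (hK : K ∈ D) (hne : (J ∩ K).Nonempty) : J ⊆ K ∨ K ⊆ J := by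
  rcases hD.laminar J hJ K hK with h | h | h
  · exact Or.inl h
  · exact Or.inr h
  · rw [h] at hne; exact absurd hne (by simp)

lemma wdvd' {J K : Finset (Fin n)} (hJ : J ∈ D) (hK : K ∈ D) (hsub : J ⊆ K) : w K ∣ w J := by
  rcases eq_or_ne J K with rfl | hne
  · rfl
  · exact hD.w_dvd J hJ K hK (ssubset_of_ne_of_subset hne hsub)

lemma exists_maximal (i : Fin n) : ∃ M ∈ D, i ∈ M ∧ ∀ K ∈ D, M ⊆ K → M = K := by
  obtain ⟨M, hM, hmax⟩ := Finset.exists_max_image (D.filter (fun K => i ∈ K))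
    Finset.card (⟨{i}, Finset.mem_filter.mpr ⟨hD.singleton_mem i, Finset.mem_singleton_self i⟩⟩)
  rw [Finset.mem_filter] at hM
  refine ⟨M, hM.1, hM.2, fun K hK hMK => ?_⟩
  exact Finset.eq_of_subset_of_card_le hMK
    (hmax K (Finset.mem_filter.mpr ⟨hK, hMK hM.2⟩))

lemma exists_cover {J : Finset (Fin n)} {i : Fin n} (hJ : J ∈ D) (hi : i ∈ J) (hne : ({i} : Finset (Fin n)) ≠ J) :
    ∃ C ∈ D, i ∈ C ∧ CoversIn D C J := by
  obtain ⟨C, hC, hmax⟩ := Finset.exists_max_image (D.filter (fun K => i ∈ K ∧ K ⊂ J))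
    Finset.card ⟨{i}, Finset.mem_filter.mpr ⟨hD.singleton_mem i, Finset.mem_singleton_self i,
      ssubset_of_ne_of_subset hne (Finset.singleton_subset_iff.mpr hi)⟩⟩
  rw [Finset.mem_filter] at hC
  refine ⟨C, hC.1, hC.2.1, hC.2.2, fun ⟨K, hK, hCK, hKJ⟩ => ?_⟩
  have : K ∈ D.filter (fun K => i ∈ K ∧ K ⊂ J) :=
    Finset.mem_filter.mpr ⟨hK, hCK.subset hC.2.1, hKJ⟩
  exact absurd (hmax K this) (not_le.mpr (Finset.card_lt_card hCK))

lemma keyNest {S K₁ K₂ K : Finset (Fin n)} {i j : Fin n} (hS : S ∈ D) (h₁ : K₁ ∈ D) (h₂ : K₂ ∈ D) (hK : K ∈ D)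
    (hc₁ : CoversIn D K₁ K) (hc₂ : CoversIn D K₂ K)
    (hi₁ : i ∈ K₁) (hiS : i ∈ S) (hj₂ : j ∈ K₂) (hjS : j ∉ S) : S ⊆ K₁ := by
  rcases lam hD h₁ hS ⟨i, Finset.mem_inter.mpr ⟨hi₁, hiS⟩⟩ with h | h
  · -- K₁ ⊆ S
    by_contra hSK
    have hK₁S : K₁ ⊂ S := ssubset_of_ne_of_subset (fun he => hSK (he ▸ subset_rfl)) h
    obtain ⟨x, hx⟩ := hD.nonempty_mem K₁ h₁
    rcases lam hD hK hS ⟨x, Finset.mem_inter.mpr ⟨hc₁.1.subset hx, hK₁S.subset hx⟩⟩ with h' | h'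
    · exact hjS (h' (hc₂.1.subset hj₂))
    · rcases eq_or_ne S K with rfl | hne
      · exact hjS (hc₂.1.subset hj₂)
      · exact hc₁.2 ⟨S, hS, hK₁S, ssubset_of_ne_of_subset hne h'⟩
  · exact h
end helpers

section main
variable {n : ℕ} {D : Finset (Finset (Fin n))} {w : Finset (Fin n) → ℕ}
  (hD : IsSpecialDatum D w)
include hD

lemma keyDvd₁ {S K₁ K₂ K : Finset (Fin n)} {i j : Fin n} (hS : S ∈ D) (h₁ : K₁ ∈ D)
    (h₂ : K₂ ∈ D) (hK : K ∈ D) (hc₁ : CoversIn D K₁ K) (hc₂ : CoversIn D K₂ K)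
    (hi₁ : i ∈ K₁) (hiS : i ∈ S) (hj₂ : j ∈ K₂) (hjS : j ∉ S) : w K₁ ∣ w S :=
  wdvd' hD hS h₁ (keyNest hD hS h₁ h₂ hK hc₁ hc₂ hi₁ hiS hj₂ hjS)

lemma keyDvd₂ {S K₁ K₂ K : Finset (Fin n)} {i j : Fin n} (hS : S ∈ D) (h₁ : K₁ ∈ D)
    (h₂ : K₂ ∈ D) (hK : K ∈ D) (hc₁ : CoversIn D K₁ K) (hc₂ : CoversIn D K₂ K)
    (hi₁ : i ∈ K₁) (hiS : i ∉ S) (hj₂ : j ∈ K₂) (hjS : j ∈ S) : w K₁ ∣ w S := by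
  rw [hD.w_cover K₁ h₁ K₂ h₂ K hK hc₁ hc₂]
  exact wdvd' hD hS h₂ (keyNest hD hS h₂ h₁ hK hc₂ hc₁ hj₂ hjS hi₁ hiS)
end main

noncomputable def indW {n : ℕ} (J : Finset (Fin n)) (m : ℕ) : Fin n →₀ ℕ :=
  Finsupp.onFinset J (fun i => if i ∈ J then m else 0) (fun i h => by
    by_contra hi; exact h (by simp [hi]))

lemma indW_apply {n : ℕ} (J : Finset (Fin n)) (m : ℕ) (i : Fin n) :
    indW J m i = if i ∈ J then m else 0 := rfl

lemma monomial_indW {n : ℕ} (J : Finset (Fin n)) (m : ℕ) :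
    monomial (indW J m) (1 : ℂ) = (∏ j ∈ J, (X j : MvPolynomial (Fin n) ℂ)) ^ m := by
  rw [monomial_eq, map_one, one_mul,
    Finsupp.prod_of_support_subset _ (show (indW J m).support ⊆ J from
        Finsupp.support_onFinset_subset)
      (fun i k => (X i : MvPolynomial (Fin n) ℂ) ^ k) (fun i _ => pow_zero _),
    ← Finset.prod_pow]
  exact Finset.prod_congr rfl fun i hi => by rw [indW_apply, if_pos hi]

/-- The generating set of `R_𝔻`. -/
def genSet (n : ℕ) (D : Finset (Finset (Fin n))) (w : Finset (Fin n) → ℕ) :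
    Set (MvPolynomial (Fin n) ℂ) :=
  { p : MvPolynomial (Fin n) ℂ | ∃ J ∈ D, p = (∏ j ∈ J, X j) ^ (w J) }

lemma genSet_mem {n : ℕ} {D : Finset (Finset (Fin n))} {w : Finset (Fin n) → ℕ}
    {J : Finset (Fin n)} (hJ : J ∈ D) :
    monomial (indW J (w J)) (1 : ℂ) ∈ Algebra.adjoin ℂ (genSet n D w) := by
  rw [monomial_indW]
  exact Algebra.subset_adjoin ⟨J, hJ, rfl⟩

lemma monomial_add_mem {n : ℕ} {S : Set (MvPolynomial (Fin n) ℂ)} {a b : Fin n →₀ ℕ}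
    (ha : monomial a (1 : ℂ) ∈ Algebra.adjoin ℂ S)
    (hb : monomial b (1 : ℂ) ∈ Algebra.adjoin ℂ S) :
    monomial (a + b) (1 : ℂ) ∈ Algebra.adjoin ℂ S := by
  rw [show monomial (a + b) (1:ℂ) = monomial a 1 * monomial b 1 by
    rw [monomial_mul, one_mul]]
  exact mul_mem ha hb

section key
variable {n : ℕ} {D : Finset (Finset (Fin n))} {w : Finset (Fin n) → ℕ}
  (hD : IsSpecialDatum D w)
include hD


lemma key : ∀ N : ℕ, ∀ (a : Fin n →₀ ℕ) (J : Finset (Fin n)), J ∈ D →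
    (∑ i, a i) * (n + 1) + J.card ≤ N →
    (∀ i, a i ≠ 0 → i ∈ J) → (∀ i ∈ J, w J ∣ a i) → InvE D w a →
    monomial a (1 : ℂ) ∈ Algebra.adjoin ℂ (genSet n D w) := by
  intro N
  induction N using Nat.strong_induction_on with
  | _ N ih =>
  intro a J hJ hN hsupp hdvd hinv
  by_cases hzero : ∀ i, a i = 0
  · rw [show a = 0 from Finsupp.ext hzero]
    have h1 : (monomial (0 : Fin n →₀ ℕ) (1 : ℂ)) = 1 := by
      simp [monomial_zero']
    rw [h1]
    exact one_mem _
  push_neg at hzero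
  obtain ⟨i₁, hi₁⟩ := hzero
  have hi₁J : i₁ ∈ J := hsupp i₁ hi₁
  by_cases hall : ∀ i ∈ J, a i ≠ 0
  · -- subtract w J on all of J
    set b := indW J (w J) with hb
    have hle : ∀ i ∈ J, w J ≤ a i := fun i hi =>
      Nat.le_of_dvd (Nat.pos_of_ne_zero (hall i hi)) (hdvd i hi)
    set a' := a - b with ha'
    have ha'app : ∀ i, a' i = a i - b i := fun i => Finsupp.tsub_apply a b i
    have hba : ∀ i, b i ≤ a i := by
      intro i
      rw [indW_apply]
      split
      · exact hle i ‹_›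
      · exact Nat.zero_le _
    have hsum : a = a' + b := by
      ext i
      rw [Finsupp.add_apply, ha'app, Nat.sub_add_cancel (hba i)]
    have hcast : ∀ i, ((a' i : ℤ)) = (a i : ℤ) - (b i : ℤ) := fun i => by
      rw [ha'app]; exact_mod_cast Int.ofNat_sub (hba i)
    rw [hsum]
    refine monomial_add_mem ?_ (genSet_mem hJ)
    have hsumlt : (∑ i, a' i) < ∑ i, a i := by
      apply Finset.sum_lt_sum (fun i _ => Nat.sub_le _ _)
      refine ⟨i₁, Finset.mem_univ i₁, ?_⟩
      have hb1 : b i₁ = w J := by rw [hb, indW_apply, if_pos hi₁J]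
      have hw1 := hD.w_pos J hJ
      have ha1 := Nat.pos_of_ne_zero hi₁
      show a i₁ - b i₁ < a i₁
      omega
    refine ih ((∑ i, a' i) * (n + 1) + J.card) (lt_of_lt_of_le ?_ hN) a' J hJ le_rfl
      ?_ ?_ ?_
    · exact Nat.add_lt_add_right ((Nat.mul_lt_mul_right (Nat.succ_pos n)).mpr hsumlt) _
    · intro i hi
      apply hsupp i
      intro h0
      rw [ha'app, h0, Nat.zero_sub] at hi
      exact hi rfl
    · intro i hi
      rw [ha'app, indW_apply, if_pos hi]
      exact Nat.dvd_sub (hdvd i hi) dvd_rfl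
    · intro K₁ h₁ K₂ h₂ K hK hc₁ hc₂ i hi j hj
      rw [hcast i, hcast j]
      have h1 := hinv K₁ h₁ K₂ h₂ K hK hc₁ hc₂ i hi j hj
      have h2 : (w K₁ : ℤ) ∣ (b i : ℤ) - (b j : ℤ) := by
        have hbi : b i = if i ∈ J then w J else 0 := by rw [hb, indW_apply]
        have hbj : b j = if j ∈ J then w J else 0 := by rw [hb, indW_apply]
        rw [hbi, hbj]
        by_cases hiJ : i ∈ J <;> by_cases hjJ : j ∈ J
        · rw [if_pos hiJ, if_pos hjJ, sub_self]; exact dvd_zero _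
        · rw [if_pos hiJ, if_neg hjJ, Nat.cast_zero, sub_zero]
          exact Int.natCast_dvd_natCast.mpr
            (keyDvd₁ hD hJ h₁ h₂ hK hc₁ hc₂ hi hiJ hj hjJ)
        · rw [if_neg hiJ, if_pos hjJ, Nat.cast_zero, zero_sub]
          exact dvd_neg.mpr (Int.natCast_dvd_natCast.mpr
            (keyDvd₂ hD hJ h₁ h₂ hK hc₁ hc₂ hi hiJ hj hjJ))
        · rw [if_neg hiJ, if_neg hjJ, sub_self]; exact dvd_zero _
      have := dvd_sub h1 h2
      convert this using 1
      · rfl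
      · ring
  · -- split into a child and the rest
    push_neg at hall
    obtain ⟨i₀, hi₀J, hi₀⟩ := hall
    have hJne : ∀ i ∈ J, ({i} : Finset (Fin n)) ≠ J := by
      intro i hi he
      have h1 : i₀ = i := by
        have := hi₀J
        rw [← he, Finset.mem_singleton] at this
        exact this.symm ▸ rfl
      have h2 : i₁ = i := by
        have := hi₁J
        rw [← he, Finset.mem_singleton] at this
        exact this
      rw [← h2] at h1
      rw [h1] at hi₀
      exact hi₁ hi₀
    obtain ⟨C₀, hC₀D, hi₀C₀, hcovC₀⟩ := exists_cover hD hJ hi₀J (hJne i₀ hi₀J)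
    obtain ⟨J', hJ'D, hi₁J', hcovJ'⟩ := exists_cover hD hJ hi₁J (hJne i₁ hi₁J)
    -- every value on J is divisible by w J'
    have hdiv : ∀ i ∈ J, w J' ∣ a i := by
      intro i hi
      obtain ⟨C, hCD, hiC, hcovC⟩ := exists_cover hD hJ hi (hJne i hi)
      have h1 := hinv C hCD C₀ hC₀D J hJ hcovC hcovC₀ i hiC i₀ hi₀C₀
      rw [hi₀] at h1
      have h2 : (w C : ℤ) ∣ (a i : ℤ) := by simpa using h1
      have h3 : w C ∣ a i := Int.natCast_dvd_natCast.mp h2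
      rwa [hD.w_cover C hCD J' hJ'D J hJ hcovC hcovJ'] at h3
    classical
    set b := a.filter (· ∈ J') with hbdef
    set c := a.filter (fun i => ¬ i ∈ J') with hcdef
    have hbc : b + c = a := Finsupp.filter_pos_add_filter_neg a _
    have hbapp : ∀ i, b i = if i ∈ J' then a i else 0 := fun i => Finsupp.filter_apply _ _ i
    have hcapp : ∀ i, c i = if i ∈ J' then 0 else a i := by
      intro i
      rw [hcdef, Finsupp.filter_apply]
      by_cases h : i ∈ J'
      · rw [if_neg (not_not_intro h), if_pos h]
      · rw [if_pos h, if_neg h]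
    rw [← hbc]
    have hJ'J : J' ⊆ J := hcovJ'.1.subset
    have hcardJ' : J'.card < J.card := Finset.card_lt_card hcovJ'.1
    refine monomial_add_mem ?_ ?_
    · -- the piece supported on J'
      refine ih ((∑ i, b i) * (n + 1) + J'.card) (lt_of_lt_of_le ?_ hN) b J' hJ'D le_rfl
        ?_ ?_ ?_
      · have hble : (∑ i, b i) ≤ ∑ i, a i := Finset.sum_le_sum fun i _ => by
          rw [hbapp]; split <;> omega
        have := Nat.mul_le_mul_right (n + 1) hble
        omega
      · intro i hi
        rw [hbapp] at hi
        by_contra h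
        rw [if_neg h] at hi
        exact hi rfl
      · intro i hi
        rw [hbapp, if_pos hi]
        exact hdiv i (hJ'J hi)
      · intro K₁ h₁ K₂ h₂ K hK hc₁ hc₂ i hi j hj
        rw [hbapp, hbapp]
        by_cases hiJ : i ∈ J' <;> by_cases hjJ : j ∈ J'
        · rw [if_pos hiJ, if_pos hjJ]
          exact hinv K₁ h₁ K₂ h₂ K hK hc₁ hc₂ i hi j hj
        · rw [if_pos hiJ, if_neg hjJ, Nat.cast_zero, sub_zero]
          exact Int.natCast_dvd_natCast.mpr
            (Dvd.dvd.trans (keyDvd₁ hD hJ'D h₁ h₂ hK hc₁ hc₂ hi hiJ hj hjJ)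
              (hdiv i (hJ'J hiJ)))
        · rw [if_neg hiJ, if_pos hjJ, Nat.cast_zero, zero_sub]
          exact dvd_neg.mpr (Int.natCast_dvd_natCast.mpr
            (Dvd.dvd.trans (keyDvd₂ hD hJ'D h₁ h₂ hK hc₁ hc₂ hi hiJ hj hjJ)
              (hdiv j (hJ'J hjJ))))
        · rw [if_neg hiJ, if_neg hjJ, sub_self]; exact dvd_zero _
    · -- the complementary piece
      have hclt : (∑ i, c i) < ∑ i, a i := by
        apply Finset.sum_lt_sum (fun i _ => by rw [hcapp]; split <;> omega)
        exact ⟨i₁, Finset.mem_univ i₁, by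
          rw [hcapp, if_pos hi₁J']
          exact Nat.pos_of_ne_zero hi₁⟩
      refine ih ((∑ i, c i) * (n + 1) + J.card) (lt_of_lt_of_le ?_ hN) c J hJ le_rfl
        ?_ ?_ ?_
      · exact Nat.add_lt_add_right ((Nat.mul_lt_mul_right (Nat.succ_pos n)).mpr hclt) _
      · intro i hi
        apply hsupp i
        rw [hcapp] at hi
        intro h0
        rw [h0] at hi
        simp at hi
      · intro i hi
        rw [hcapp]
        split
        · exact dvd_zero _
        · exact hdvd i hi
      · intro K₁ h₁ K₂ h₂ K hK hc₁ hc₂ i hi j hj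
        rw [hcapp, hcapp]
        by_cases hiJ : i ∈ J' <;> by_cases hjJ : j ∈ J'
        · rw [if_pos hiJ, if_pos hjJ, sub_self]; exact dvd_zero _
        · rw [if_pos hiJ, if_neg hjJ, Nat.cast_zero, zero_sub]
          by_cases haj : a j = 0
          · rw [haj, Nat.cast_zero, neg_zero]; exact dvd_zero _
          · exact dvd_neg.mpr (Int.natCast_dvd_natCast.mpr
              (Dvd.dvd.trans (keyDvd₁ hD hJ'D h₁ h₂ hK hc₁ hc₂ hi hiJ hj hjJ)
                (hdiv j (hsupp j haj))))
        · rw [if_neg hiJ, if_pos hjJ, Nat.cast_zero, sub_zero]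
          by_cases hai : a i = 0
          · rw [hai, Nat.cast_zero]; exact dvd_zero _
          · exact Int.natCast_dvd_natCast.mpr
              (Dvd.dvd.trans (keyDvd₂ hD hJ'D h₁ h₂ hK hc₁ hc₂ hi hiJ hj hjJ)
                (hdiv i (hsupp i hai)))
        · rw [if_neg hiJ, if_neg hjJ]
          exact hinv K₁ h₁ K₂ h₂ K hK hc₁ hc₂ i hi j hj
end key

section top
variable {n : ℕ} {D : Finset (Finset (Fin n))} {w : Finset (Fin n) → ℕ}
  (hD : IsSpecialDatum D w)
include hD

lemma top : ∀ N : ℕ, ∀ a : Fin n →₀ ℕ, (∑ i, a i) ≤ N → InvE D w a →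
    monomial a (1 : ℂ) ∈ Algebra.adjoin ℂ (genSet n D w) := by
  intro N
  induction N using Nat.strong_induction_on with
  | _ N ih =>
  intro a hN hinv
  by_cases hzero : ∀ i, a i = 0
  · rw [show a = 0 from Finsupp.ext hzero]
    have h1 : (monomial (0 : Fin n →₀ ℕ) (1 : ℂ)) = 1 := by simp [monomial_zero']
    rw [h1]
    exact one_mem _
  push_neg at hzero
  obtain ⟨i₁, hi₁⟩ := hzero
  obtain ⟨M, hMD, hi₁M, hMmax⟩ := exists_maximal hD i₁
  have hwM : w M = 1 := hD.w_max M hMD hMmax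
  classical
  set b := a.filter (· ∈ M) with hbdef
  set c := a.filter (fun i => ¬ i ∈ M) with hcdef
  have hbc : b + c = a := Finsupp.filter_pos_add_filter_neg a _
  have hbapp : ∀ i, b i = if i ∈ M then a i else 0 := fun i => Finsupp.filter_apply _ _ i
  have hcapp : ∀ i, c i = if i ∈ M then 0 else a i := by
    intro i
    rw [hcdef, Finsupp.filter_apply]
    by_cases h : i ∈ M
    · rw [if_neg (not_not_intro h), if_pos h]
    · rw [if_pos h, if_neg h]
  -- a weight divides w M = 1 trick: covers meeting M from inside give w = 1
  have hwone : ∀ K₁ ∈ D, ∀ K₂ ∈ D, ∀ K ∈ D, CoversIn D K₁ K → CoversIn D K₂ K →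
      ∀ i ∈ K₁, ∀ j ∈ K₂, (i ∈ M → j ∉ M → w K₁ = 1) := by
    intro K₁ h₁ K₂ h₂ K hK hc₁ hc₂ i hi j hj hiM hjM
    have hsub : M ⊆ K₁ := keyNest hD hMD h₁ h₂ hK hc₁ hc₂ hi hiM hj hjM
    rw [← hMmax K₁ h₁ hsub, hwM]
  have hwone' : ∀ K₁ ∈ D, ∀ K₂ ∈ D, ∀ K ∈ D, CoversIn D K₁ K → CoversIn D K₂ K →
      ∀ i ∈ K₁, ∀ j ∈ K₂, (i ∉ M → j ∈ M → w K₁ = 1) := by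
    intro K₁ h₁ K₂ h₂ K hK hc₁ hc₂ i hi j hj hiM hjM
    have hsub : M ⊆ K₂ := keyNest hD hMD h₂ h₁ hK hc₂ hc₁ hj hjM hi hiM
    rw [hD.w_cover K₁ h₁ K₂ h₂ K hK hc₁ hc₂, ← hMmax K₂ h₂ hsub, hwM]
  rw [← hbc]
  refine monomial_add_mem ?_ ?_
  · -- b piece via key lemma
    refine key hD ((∑ i, b i) * (n + 1) + M.card) b M hMD le_rfl ?_ ?_ ?_
    · intro i hi
      rw [hbapp] at hi
      by_contra h
      rw [if_neg h] at hi
      exact hi rfl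
    · intro i _
      rw [hwM]
      exact one_dvd _
    · intro K₁ h₁ K₂ h₂ K hK hc₁ hc₂ i hi j hj
      rw [hbapp, hbapp]
      by_cases hiM : i ∈ M <;> by_cases hjM : j ∈ M
      · rw [if_pos hiM, if_pos hjM]
        exact hinv K₁ h₁ K₂ h₂ K hK hc₁ hc₂ i hi j hj
      · rw [hwone K₁ h₁ K₂ h₂ K hK hc₁ hc₂ i hi j hj hiM hjM]
        exact one_dvd _
      · rw [hwone' K₁ h₁ K₂ h₂ K hK hc₁ hc₂ i hi j hj hiM hjM]
        exact one_dvd _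
      · rw [if_neg hiM, if_neg hjM, sub_self]
        exact dvd_zero _
  · -- c piece by induction
    have hclt : (∑ i, c i) < ∑ i, a i := by
      apply Finset.sum_lt_sum (fun i _ => by rw [hcapp]; split <;> omega)
      exact ⟨i₁, Finset.mem_univ i₁, by
        rw [hcapp, if_pos hi₁M]
        exact Nat.pos_of_ne_zero hi₁⟩
    refine ih (∑ i, c i) (lt_of_lt_of_le hclt hN) c le_rfl ?_
    intro K₁ h₁ K₂ h₂ K hK hc₁ hc₂ i hi j hj
    rw [hcapp, hcapp]
    by_cases hiM : i ∈ M <;> by_cases hjM : j ∈ M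
    · rw [if_pos hiM, if_pos hjM, sub_self]
      exact dvd_zero _
    · rw [hwone K₁ h₁ K₂ h₂ K hK hc₁ hc₂ i hi j hj hiM hjM]
      exact one_dvd _
    · rw [hwone' K₁ h₁ K₂ h₂ K hK hc₁ hc₂ i hi j hj hiM hjM]
      exact one_dvd _
    · rw [if_neg hiM, if_neg hjM]
      exact hinv K₁ h₁ K₂ h₂ K hK hc₁ hc₂ i hi j hj

lemma invE_indW {J : Finset (Fin n)} (hJ : J ∈ D) : InvE D w (indW J (w J)) := by
  intro K₁ h₁ K₂ h₂ K hK hc₁ hc₂ i hi j hj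
  rw [indW_apply, indW_apply]
  by_cases hiJ : i ∈ J <;> by_cases hjJ : j ∈ J
  · rw [if_pos hiJ, if_pos hjJ, sub_self]; exact dvd_zero _
  · rw [if_pos hiJ, if_neg hjJ, Nat.cast_zero, sub_zero]
    exact Int.natCast_dvd_natCast.mpr (keyDvd₁ hD hJ h₁ h₂ hK hc₁ hc₂ hi hiJ hj hjJ)
  · rw [if_neg hiJ, if_pos hjJ, Nat.cast_zero, zero_sub]
    exact dvd_neg.mpr (Int.natCast_dvd_natCast.mpr
      (keyDvd₂ hD hJ h₁ h₂ hK hc₁ hc₂ hi hiJ hj hjJ))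
  · rw [if_neg hiJ, if_neg hjJ, sub_self]; exact dvd_zero _
end top

/-- Proposition 2.5 (Watanabe, Proposition 1.7 in [W]): for an `n`-dimensional special
datum `𝔻 = (D, w)`, the `ℂ`-subalgebra `R_𝔻` of `ℂ[x₁,…,xₙ]` generated by the
monomials `x_J^{w(J)}`, `J ∈ D` (where `x_J = ∏_{j∈J} x_j`), coincides with the ring of
invariants of `G_𝔻`, a diagonal matrix `g` acting by the `ℂ`-algebra map
`x_i ↦ g_{ii}·x_i`. -/
theorem stmt_10 (n : ℕ) (hn : 1 ≤ n) (D : Finset (Finset (Fin n)))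
    (w : Finset (Fin n) → ℕ) (hD : IsSpecialDatum D w) :
    (Algebra.adjoin ℂ
        { p : MvPolynomial (Fin n) ℂ | ∃ J ∈ D, p = (∏ j ∈ J, X j) ^ (w J) } :
      Set (MvPolynomial (Fin n) ℂ)) =
      { f : MvPolynomial (Fin n) ℂ |
        ∀ g ∈ specialGroup n D w,
          aeval (fun i : Fin n =>
            ((g : Matrix.SpecialLinearGroup (Fin n) ℂ) : Matrix (Fin n) (Fin n) ℂ) i i
              • X i) f = f } := by
  apply Set.ext
  intro f
  simp only [Set.mem_setOf_eq, SetLike.mem_coe]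
  constructor
  · intro hf
    refine Algebra.adjoin_induction
      (p := fun (x : MvPolynomial (Fin n) ℂ) _ => ∀ g ∈ specialGroup n D w,
        aeval (fun i : Fin n =>
          ((g : Matrix.SpecialLinearGroup (Fin n) ℂ) : Matrix (Fin n) (Fin n) ℂ) i i
            • X i) x = x) ?_ ?_ ?_ ?_ hf
    · rintro p ⟨J, hJ, rfl⟩
      rw [← monomial_indW J (w J)]
      refine (invariant_iff D w hD.w_pos _).mpr ?_
      intro e he
      rw [support_monomial, if_neg one_ne_zero, Finset.mem_singleton] at he
      rw [he]
      exact invE_indW hD hJ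
    · intro r g hg
      exact AlgHom.commutes _ r
    · intro x y _ _ hx hy g hg
      rw [map_add, hx g hg, hy g hg]
    · intro x y _ _ hx hy g hg
      rw [map_mul, hx g hg, hy g hg]
  · intro hf
    have h := (invariant_iff D w hD.w_pos f).mp hf
    rw [f.as_sum]
    refine Subalgebra.sum_mem _ ?_
    intro e he
    rw [show monomial e (coeff e f) = (coeff e f) • monomial e (1 : ℂ) by
      rw [smul_monomial, smul_eq_mul, mul_one]]
    exact Subalgebra.smul_mem _ (top hD (∑ i, e i) e le_rfl (h e he)) _
end

section
/- Let 𝔻 = (D, w) be a special datum and let J ∈ D be a maximal element of D with |J| ≥ 2. Let J₁,…,J_m be the elements of D with J_i ⋖ J (so that J = J₁ ∪ ⋯ ∪ J_m). Define D' = D \ {J} and w' : D' → ℕ₊ by w'(K) = w(K)/w(J₁) if K ⊆ J_i for some i, and w'(K) = w(K) if K ⊄ J. Then 𝔻' = (D', w') is a special datum. -/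
open Finset

open scoped Classical

/-- Lemma 2.10 (first assertion): let `𝔻 = (D, w)` be a special datum and `J ∈ D` a
maximal element with `|J| ≥ 2`; let `J₁` be one of the elements covered by `J`. Define
`D' = D \ {J}` and `w'(K) = w(K)/w(J₁)` if `K` is contained in some element covered by
`J`, and `w'(K) = w(K)` otherwise. Then `(D', w')` is a special datum. -/
theorem stmt_11 (n : ℕ) (hn : 1 ≤ n) (D : Finset (Finset (Fin n)))
    (w : Finset (Fin n) → ℕ) (hD : IsSpecialDatum D w)
    (J : Finset (Fin n)) (hJ : J ∈ D)
    (hJmax : ∀ K ∈ D, J ⊆ K → J = K) (hJcard : 2 ≤ J.card)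
    (J₁ : Finset (Fin n)) (hJ₁ : J₁ ∈ D) (hJ₁cov : CoversIn D J₁ J) :
    IsSpecialDatum (D.erase J)
      (fun K => if ∃ K' ∈ D, CoversIn D K' J ∧ K ⊆ K' then w K / w J₁ else w K) := by
  classical
  obtain ⟨hne, hsing, hlam, hpos, hmax, hlt, hdvd, hcov⟩ := hD
  have hJ₁pos : 0 < w J₁ := hpos J₁ hJ₁
  -- nested version of laminarity
  have nested : ∀ A ∈ D, ∀ B ∈ D, (A ∩ B).Nonempty → A ⊆ B ∨ B ⊆ A := by
    intro A hA B hB hAB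
    rcases hlam A hA B hB with h | h | h
    · exact Or.inl h
    · exact Or.inr h
    · rw [h] at hAB; exact absurd hAB (by simp)
  -- w J₁ divides w K for K in the "divide" branch
  have key : ∀ K ∈ D, (∃ K' ∈ D, CoversIn D K' J ∧ K ⊆ K') → w J₁ ∣ w K := by
    rintro K hK ⟨K', hK'D, hK'cov, hKK'⟩
    have hw : w K' = w J₁ := hcov K' hK'D J₁ hJ₁ J hJ hK'cov hJ₁cov
    rcases eq_or_ne K K' with rfl | hne'
    · exact hw ▸ dvd_refl _
    · exact hw ▸ hdvd K hK K' hK'D (Finset.ssubset_iff_subset_ne.mpr ⟨hKK', hne'⟩)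
  -- the "divide" branch propagates upwards (for supersets ≠ J)
  have up : ∀ K ∈ D, ∀ K' ∈ D, K' ≠ J → K ⊆ K' →
      (∃ K₀ ∈ D, CoversIn D K₀ J ∧ K ⊆ K₀) → ∃ K₀ ∈ D, CoversIn D K₀ J ∧ K' ⊆ K₀ := by
    rintro K hK K' hK'D hK'ne hKK' ⟨K₀, hK₀, hcov₀, hsub⟩
    have hKne : K.Nonempty := hne K hK
    rcases nested K' hK'D K₀ hK₀ ⟨hKne.choose, Finset.mem_inter.mpr
      ⟨hKK' hKne.choose_spec, hsub hKne.choose_spec⟩⟩ with h | h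
    · exact ⟨K₀, hK₀, hcov₀, h⟩
    · -- K₀ ⊆ K', compare K' with J
      have hK₀ne : K₀.Nonempty := hne K₀ hK₀
      rcases nested K' hK'D J hJ ⟨hK₀ne.choose, Finset.mem_inter.mpr
        ⟨h hK₀ne.choose_spec, hcov₀.1.subset hK₀ne.choose_spec⟩⟩ with h2 | h2
      · have hss : K' ⊆ K₀ := by
          by_contra hcon
          exact hcov₀.2 ⟨K', hK'D, Finset.ssubset_iff_subset_ne.mpr ⟨h, fun he =>
            hcon (he ▸ subset_refl _)⟩, Finset.ssubset_iff_subset_ne.mpr ⟨h2, hK'ne⟩⟩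
        exact ⟨K₀, hK₀, hcov₀, hss⟩
      · exact absurd (hJmax K' hK'D h2).symm hK'ne
  -- covers in the erased family are covers in the original family
  have covD : ∀ K₁ K : Finset (Fin n), K ∈ D → K ≠ J → CoversIn (D.erase J) K₁ K →
      CoversIn D K₁ K := by
    rintro K₁ K hK hKne ⟨h1, h2⟩
    refine ⟨h1, ?_⟩
    rintro ⟨L, hL, hL1, hL2⟩
    have hLne : L ≠ J := by
      rintro rfl
      exact (Finset.ssubset_iff_subset_ne.mp hL2).2 (hJmax K hK hL2.subset) |>.elim
    exact h2 ⟨L, Finset.mem_erase.mpr ⟨hLne, hL⟩, hL1, hL2⟩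
  refine ⟨?_, ?_, ?_, ?_, ?_, ?_, ?_, ?_⟩
  · intro K hK; exact hne K (Finset.mem_of_mem_erase hK)
  · intro i
    refine Finset.mem_erase.mpr ⟨?_, hsing i⟩
    intro h
    rw [← h] at hJcard
    simp at hJcard
  · intro K hK K' hK'
    exact hlam K (Finset.mem_of_mem_erase hK) K' (Finset.mem_of_mem_erase hK')
  · intro K hK
    have hKD := Finset.mem_of_mem_erase hK
    by_cases h : ∃ K' ∈ D, CoversIn D K' J ∧ K ⊆ K'
    · rw [if_pos h]
      exact Nat.div_pos (Nat.le_of_dvd (hpos K hKD) (key K hKD h)) hJ₁pos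
    · rw [if_neg h]; exact hpos K hKD
  · -- w_max
    intro K hK hKmax
    have hKD := Finset.mem_of_mem_erase hK
    have hKne : K ≠ J := (Finset.mem_erase.mp hK).1
    by_cases hM : ∀ L ∈ D, K ⊆ L → K = L
    · -- K maximal in D; branch is false
      have hbr : ¬ ∃ K' ∈ D, CoversIn D K' J ∧ K ⊆ K' := by
        rintro ⟨K', hK'D, hK'cov, hsub⟩
        have he : K = K' := hM K' hK'D hsub
        have : K = J := hM J hJ (he ▸ hK'cov.1.subset)
        exact hKne this
      rw [if_neg hbr]
      exact hmax K hKD hM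
    · -- K is covered by J
      push_neg at hM
      obtain ⟨L, hL, hKL, hKLne⟩ := hM
      have hLJ : L = J := by
        by_contra hcon
        exact hKLne (hKmax L (Finset.mem_erase.mpr ⟨hcon, hL⟩) hKL)
      rw [hLJ] at hKL hKLne
      have hKcov : CoversIn D K J := by
        refine ⟨Finset.ssubset_iff_subset_ne.mpr ⟨hKL, hKne⟩, ?_⟩
        rintro ⟨M, hM, hM1, hM2⟩
        have hMne : M ≠ J := (Finset.ssubset_iff_subset_ne.mp hM2).2
        exact (Finset.ssubset_iff_subset_ne.mp hM1).2
          (hKmax M (Finset.mem_erase.mpr ⟨hMne, hM⟩) hM1.subset)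
      have hbr : ∃ K' ∈ D, CoversIn D K' J ∧ K ⊆ K' := ⟨K, hKD, hKcov, subset_refl _⟩
      rw [if_pos hbr]
      rw [hcov K hKD J₁ hJ₁ J hJ hKcov hJ₁cov]
      exact Nat.div_self hJ₁pos
  · -- w_lt
    intro K hK K' hK' hss
    have hKD := Finset.mem_of_mem_erase hK
    have hK'D := Finset.mem_of_mem_erase hK'
    have hK'ne : K' ≠ J := (Finset.mem_erase.mp hK').1
    by_cases h' : ∃ K₀ ∈ D, CoversIn D K₀ J ∧ K' ⊆ K₀
    · have h : ∃ K₀ ∈ D, CoversIn D K₀ J ∧ K ⊆ K₀ := by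
        obtain ⟨K₀, h1, h2, h3⟩ := h'
        exact ⟨K₀, h1, h2, hss.subset.trans h3⟩
      simp only [if_pos h, if_pos h']
      exact Nat.div_lt_div_of_lt_of_dvd (key K hKD h) (hlt K hKD K' hK'D hss)
    · have h : ¬ ∃ K₀ ∈ D, CoversIn D K₀ J ∧ K ⊆ K₀ := by
        intro h
        exact h' (up K hKD K' hK'D hK'ne hss.subset h)
      simp only [if_neg h, if_neg h']
      exact hlt K hKD K' hK'D hss
  · -- w_dvd
    intro K hK K' hK' hss
    have hKD := Finset.mem_of_mem_erase hK
    have hK'D := Finset.mem_of_mem_erase hK'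
    have hK'ne : K' ≠ J := (Finset.mem_erase.mp hK').1
    by_cases h' : ∃ K₀ ∈ D, CoversIn D K₀ J ∧ K' ⊆ K₀
    · have h : ∃ K₀ ∈ D, CoversIn D K₀ J ∧ K ⊆ K₀ := by
        obtain ⟨K₀, h1, h2, h3⟩ := h'
        exact ⟨K₀, h1, h2, hss.subset.trans h3⟩
      simp only [if_pos h, if_pos h']
      obtain ⟨a, ha⟩ := key K' hK'D h'
      obtain ⟨t, ht⟩ := hdvd K hKD K' hK'D hss
      refine ⟨t, ?_⟩
      rw [ht, ha, mul_assoc, Nat.mul_div_cancel_left _ hJ₁pos,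
        Nat.mul_div_cancel_left _ hJ₁pos]
    · have h : ¬ ∃ K₀ ∈ D, CoversIn D K₀ J ∧ K ⊆ K₀ := by
        intro h
        exact h' (up K hKD K' hK'D hK'ne hss.subset h)
      simp only [if_neg h, if_neg h']
      exact hdvd K hKD K' hK'D hss
  · -- w_cover
    intro K₁ hK₁ K₂ hK₂ K hK hc₁ hc₂
    have hK₁D := Finset.mem_of_mem_erase hK₁
    have hK₂D := Finset.mem_of_mem_erase hK₂
    have hKD := Finset.mem_of_mem_erase hK
    have hKne : K ≠ J := (Finset.mem_erase.mp hK).1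
    have hc₁' : CoversIn D K₁ K := covD K₁ K hKD hKne hc₁
    have hc₂' : CoversIn D K₂ K := covD K₂ K hKD hKne hc₂
    have hw : w K₁ = w K₂ := hcov K₁ hK₁D K₂ hK₂D K hKD hc₁' hc₂'
    -- branch transfer: if some proper subset of K is in the branch, so is any other
    have transfer : ∀ A : Finset (Fin n), A ∈ D → A ⊂ K →
        (∃ K₀ ∈ D, CoversIn D K₀ J ∧ A ⊆ K₀) →
        ∀ B : Finset (Fin n), B ⊂ K → ∃ K₀ ∈ D, CoversIn D K₀ J ∧ B ⊆ K₀ := by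
      rintro A hA hAK ⟨K₀, hK₀, hcov₀, hsub⟩ B hBK
      have hAne : A.Nonempty := hne A hA
      rcases nested K hKD K₀ hK₀ ⟨hAne.choose, Finset.mem_inter.mpr
        ⟨hAK.subset hAne.choose_spec, hsub hAne.choose_spec⟩⟩ with h | h
      · exact ⟨K₀, hK₀, hcov₀, hBK.subset.trans h⟩
      · -- K₀ ⊆ K; compare K with J
        have hK₀ne : K₀.Nonempty := hne K₀ hK₀
        rcases nested K hKD J hJ ⟨hK₀ne.choose, Finset.mem_inter.mpr
          ⟨h hK₀ne.choose_spec, hcov₀.1.subset hK₀ne.choose_spec⟩⟩ with h2 | h2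
        · have hKeq : K = K₀ := by
            by_contra hcon
            exact hcov₀.2 ⟨K, hKD, Finset.ssubset_iff_subset_ne.mpr ⟨h, fun he =>
              hcon he.symm⟩, Finset.ssubset_iff_subset_ne.mpr ⟨h2, hKne⟩⟩
          exact ⟨K₀, hK₀, hcov₀, hKeq ▸ hBK.subset⟩
        · exact absurd (hJmax K hKD h2).symm hKne
    by_cases h₁ : ∃ K₀ ∈ D, CoversIn D K₀ J ∧ K₁ ⊆ K₀
    · have h₂ : ∃ K₀ ∈ D, CoversIn D K₀ J ∧ K₂ ⊆ K₀ :=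
        transfer K₁ hK₁D hc₁'.1 h₁ K₂ hc₂'.1
      simp only [if_pos h₁, if_pos h₂, hw]
    · have h₂ : ¬ ∃ K₀ ∈ D, CoversIn D K₀ J ∧ K₂ ⊆ K₀ := by
        intro h₂
        exact h₁ (transfer K₂ hK₂D hc₂'.1 h₂ K₁ hc₁'.1)
      simp only [if_neg h₁, if_neg h₂, hw]
end

section
/- Let 𝔻 = (D, w) be a special datum and let J ∈ D be a maximal element of D with |J| ≥ 2. Let J₁,…,J_m be the elements of D with J_i ⋖ J, set a = w(J₁), and let 𝔻' = (D \ {J}, w') be the special datum with w'(K) = w(K)/a if K ⊆ J_i for some i and w'(K) = w(K) otherwise. Then there is an isomorphism of ℂ-algebras R_𝔻 ≅ R_{𝔻'}[Y]/(Y^a − x_{J₁}·x_{J₂}⋯x_{J_m}), where x_{J_i} = ∏_{j∈J_i} x_j (note x_{J_i} ∈ R_{𝔻'} since w'(J_i) = 1). -/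
open Finset

open scoped Classical
open MvPolynomial

set_option synthInstance.maxHeartbeats 1000000
set_option maxHeartbeats 1000000

/-- The ring `R_𝔻` of a datum `(D, w)`: the `ℂ`-subalgebra of `ℂ[x₁,…,xₙ]` generated
by the monomials `x_K^{w(K)} = (∏_{j∈K} x_j)^{w(K)}` for `K ∈ D`. -/
noncomputable def datumRing (n : ℕ) (D : Finset (Finset (Fin n)))
    (w : Finset (Fin n) → ℕ) : Subalgebra ℂ (MvPolynomial (Fin n) ℂ) :=
  Algebra.adjoin ℂ { p : MvPolynomial (Fin n) ℂ | ∃ K ∈ D, p = (∏ j ∈ K, X j) ^ (w K) }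

lemma aux_prodX_pow_eq_monomial {n : ℕ} (K : Finset (Fin n)) (m : ℕ) :
    ((∏ j ∈ K, X j : MvPolynomial (Fin n) ℂ)) ^ m
      = monomial (∑ j ∈ K, Finsupp.single j m) 1 := by
  rw [← Finset.prod_pow, MvPolynomial.monomial_sum_one]
  exact Finset.prod_congr rfl fun j _ => MvPolynomial.X_pow_eq_monomial

lemma aux_sum_single_apply {n : ℕ} (K : Finset (Fin n)) (m : ℕ) (j₀ : Fin n) :
    (∑ j ∈ K, Finsupp.single j m) j₀ = if j₀ ∈ K then m else 0 := by
  classical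
  rw [Finset.sum_apply']
  simp [Finsupp.single_apply]

lemma aux_aeval_X_pow_injective {n : ℕ} (e : Fin n → ℕ) (he : ∀ j, 0 < e j) :
    Function.Injective (aeval (R := ℂ) (fun j => (X j : MvPolynomial (Fin n) ℂ) ^ e j)) := by
  rw [injective_iff_map_eq_zero]
  intro p hp
  have key : ∀ x : Fin n → ℂ, eval x p = eval x 0 := by
    intro x
    choose u hu using fun j => IsAlgClosed.exists_pow_nat_eq (x j) (he j)
    have h0 : aeval (R := ℂ) u ((aeval fun j => (X j : MvPolynomial (Fin n) ℂ) ^ e j) p) = 0 := by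
      rw [hp, map_zero]
    rw [MvPolynomial.comp_aeval_apply] at h0
    simp only [map_pow, MvPolynomial.aeval_X] at h0
    have hx : (fun j => u j ^ e j) = x := funext hu
    rw [hx] at h0
    rw [map_zero, ← MvPolynomial.coe_aeval_eq_eval]; exact h0
  exact MvPolynomial.funext key

/-- Lemma 2.10 (ring isomorphism): let `𝔻 = (D, w)` be a special datum, `J ∈ D` a
maximal element with `|J| ≥ 2`, `C` the set of elements of `D` covered by `J` (so that
`J` is their union), `J₁ ∈ C` and `a = w(J₁)`. Let `𝔻' = (D \ {J}, w')` be the special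
datum with `w'(K) = w(K)/a` if `K` is contained in some member of `C` and
`w'(K) = w(K)` otherwise. If `y ∈ R_{𝔻'}` is the element
`x_{J₁}·x_{J₂}⋯x_{J_m} = ∏_{K ∈ C} x_K`, then `R_𝔻 ≅ R_{𝔻'}[Y]/(Y^a − y)`
as `ℂ`-algebras (`AdjoinRoot f = R_{𝔻'}[Y]/(f)`). -/
theorem stmt_12 (n : ℕ) (hn : 1 ≤ n) (D : Finset (Finset (Fin n)))
    (w : Finset (Fin n) → ℕ) (hD : IsSpecialDatum D w)
    (J : Finset (Fin n)) (hJ : J ∈ D)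
    (hJmax : ∀ K ∈ D, J ⊆ K → J = K) (hJcard : 2 ≤ J.card)
    (C : Finset (Finset (Fin n)))
    (hC : ∀ K, K ∈ C ↔ K ∈ D ∧ CoversIn D K J)
    (J₁ : Finset (Fin n)) (hJ₁ : J₁ ∈ C)
    (y : datumRing n (D.erase J)
      (fun K => if ∃ K' ∈ C, K ⊆ K' then w K / w J₁ else w K))
    (hy : (y : MvPolynomial (Fin n) ℂ) = ∏ K ∈ C, ∏ j ∈ K, X j) :
    Nonempty
      (datumRing n D w ≃ₐ[ℂ]
        AdjoinRoot (Polynomial.X ^ (w J₁) - Polynomial.C y)) := by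
  classical
  obtain ⟨hJ₁D, hJ₁cov⟩ := (hC J₁).mp hJ₁
  have haPos : 0 < w J₁ := hD.w_pos J₁ hJ₁D
  have hCssub : ∀ K ∈ C, K ⊂ J := fun K hK => ((hC K).mp hK).2.1
  have hCD : ∀ K ∈ C, K ∈ D := fun K hK => ((hC K).mp hK).1
  have hwJ : w J = 1 := hD.w_max J hJ hJmax
  -- every proper subset of J in D lies in a cover
  have cover_of_ssubset : ∀ K ∈ D, K ⊂ J → ∃ K' ∈ C, K ⊆ K' := by
    intro K hK hKJ
    have hne : (D.filter (fun K' => K ⊆ K' ∧ K' ⊂ J)).Nonempty :=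
      ⟨K, Finset.mem_filter.mpr ⟨hK, subset_rfl, hKJ⟩⟩
    obtain ⟨K', hK'S, hmax⟩ :=
      (D.filter (fun K' => K ⊆ K' ∧ K' ⊂ J)).exists_max_image Finset.card hne
    obtain ⟨hK'D, hKK', hK'J⟩ := Finset.mem_filter.mp hK'S
    refine ⟨K', (hC K').mpr ⟨hK'D, hK'J, ?_⟩, hKK'⟩
    rintro ⟨L, hLD, hK'L, hLJ⟩
    have hLS : L ∈ D.filter (fun K' => K ⊆ K' ∧ K' ⊂ J) :=
      Finset.mem_filter.mpr ⟨hLD, hKK'.trans hK'L.subset, hLJ⟩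
    exact absurd (Finset.card_lt_card hK'L) (not_lt.mpr (hmax L hLS))
  -- covers are pairwise disjoint
  have hCdisj : (C : Set (Finset (Fin n))).PairwiseDisjoint id := by
    intro K₁ h1 K₂ h2 hne
    have h1' := (hC K₁).mp h1
    have h2' := (hC K₂).mp h2
    rcases hD.laminar K₁ h1'.1 K₂ h2'.1 with h | h | h
    · exact absurd ⟨K₂, h2'.1, ssubset_of_subset_of_ne h (by exact_mod_cast hne), h2'.2.1⟩
        h1'.2.2
    · exact absurd ⟨K₁, h1'.1, ssubset_of_subset_of_ne h (by exact_mod_cast hne.symm), h1'.2.1⟩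
        h2'.2.2
    · exact Finset.disjoint_left.mpr fun x hx1 hx2 => by
        have : x ∈ K₁ ∩ K₂ := Finset.mem_inter.mpr ⟨hx1, hx2⟩
        simp [h] at this
  -- J is the union of the covers
  have hbiUnion : C.biUnion id = J := by
    ext j
    constructor
    · intro hj
      obtain ⟨K, hK, hjK⟩ := Finset.mem_biUnion.mp hj
      exact (hCssub K hK).subset hjK
    · intro hj
      have hss : ({j} : Finset (Fin n)) ⊂ J := by
        refine Finset.ssubset_iff_of_subset (Finset.singleton_subset_iff.mpr hj) |>.mpr ?_
        have : 1 < J.card := lt_of_lt_of_le one_lt_two hJcard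
        obtain ⟨j', hj', hne⟩ := Finset.exists_mem_ne this j
        exact ⟨j', hj', by simpa using hne⟩
      obtain ⟨K', hK', hsub⟩ := cover_of_ssubset _ (hD.singleton_mem j) hss
      exact Finset.mem_biUnion.mpr ⟨K', hK', by simpa using hsub⟩
  have hxJprod : (∏ K ∈ C, ∏ j ∈ K, X j : MvPolynomial (Fin n) ℂ) = ∏ j ∈ J, X j := by
    rw [← hbiUnion, Finset.prod_biUnion hCdisj]; rfl
  -- substitution phi
  set e : Fin n → ℕ := fun j => if j ∈ J then w J₁ else 1 with he
  have hepos : ∀ j, 0 < e j := by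
    intro j; by_cases h : j ∈ J <;> simp [he, h, haPos]
  set φ : MvPolynomial (Fin n) ℂ →ₐ[ℂ] MvPolynomial (Fin n) ℂ :=
    aeval (fun j => X j ^ e j) with hφ
  have hφinj : Function.Injective φ := aux_aeval_X_pow_injective e hepos
  have hφK_inJ : ∀ K : Finset (Fin n), K ⊆ J → ∀ m : ℕ,
      φ ((∏ j ∈ K, X j) ^ m) = (∏ j ∈ K, X j) ^ (w J₁ * m) := by
    intro K hK m
    rw [map_pow, map_prod]
    have hc : ∀ j ∈ K, φ (X j) = X j ^ w J₁ := by
      intro j hj; simp [hφ, he, hK hj]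
    rw [Finset.prod_congr rfl hc, Finset.prod_pow, ← pow_mul]
  have hφK_disj : ∀ K : Finset (Fin n), K ∩ J = ∅ → ∀ m : ℕ,
      φ ((∏ j ∈ K, X j) ^ m) = (∏ j ∈ K, X j) ^ m := by
    intro K hK m
    rw [map_pow, map_prod]
    refine congrArg (· ^ m) (Finset.prod_congr rfl ?_)
    intro j hj
    have hjJ : j ∉ J := fun h => by
      have : j ∈ K ∩ J := Finset.mem_inter.mpr ⟨hj, h⟩
      simp [hK] at this
    simp [hφ, he, hjJ]
  have hadvd : ∀ K ∈ D, (∃ K' ∈ C, K ⊆ K') → w J₁ ∣ w K := by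
    rintro K hK ⟨K', hK', hsub⟩
    have hwK' : w K' = w J₁ :=
      hD.w_cover K' (hCD K' hK') J₁ hJ₁D J hJ ((hC K').mp hK').2 hJ₁cov
    rcases eq_or_ne K K' with rfl | hne
    · rw [hwK']
    · rw [← hwK']
      exact hD.w_dvd K hK K' (hCD K' hK') (ssubset_of_subset_of_ne hsub hne)
  have hsubJ_of_ex : ∀ K : Finset (Fin n), (∃ K' ∈ C, K ⊆ K') → K ⊆ J := by
    rintro K ⟨K', hK', hsub⟩; exact hsub.trans (hCssub K' hK').subset
  revert y hy
  set w' : Finset (Fin n) → ℕ :=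
    fun K => if ∃ K' ∈ C, K ⊆ K' then w K / w J₁ else w K with hw'
  intro y hy
  have hgen : ∀ K ∈ D.erase J,
      φ ((∏ j ∈ K, X j) ^ w' K) = (∏ j ∈ K, X j) ^ w K := by
    intro K hK
    obtain ⟨hKne, hKD⟩ := Finset.mem_erase.mp hK
    by_cases hex : ∃ K' ∈ C, K ⊆ K'
    · simp only [hw', if_pos hex]
      rw [hφK_inJ K (hsubJ_of_ex K hex), Nat.mul_div_cancel' (hadvd K hKD hex)]
    · have hdisj : K ∩ J = ∅ := by
        rcases hD.laminar K hKD J hJ with h | h | h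
        · exact absurd (cover_of_ssubset K hKD (ssubset_of_subset_of_ne h hKne)) hex
        · exact absurd (hJmax K hKD h).symm hKne
        · exact h
      simp only [hw', if_neg hex]
      exact hφK_disj K hdisj (w K)
  set g : (datumRing n (D.erase J) w') →+* MvPolynomial (Fin n) ℂ :=
    (φ.comp (Subalgebra.val (datumRing n (D.erase J) w'))).toRingHom with hg
  have hgval : ∀ u : (datumRing n (D.erase J) w'),
      g u = φ (u : MvPolynomial (Fin n) ℂ) := fun u => rfl
  have hroot : Polynomial.eval₂ g (∏ j ∈ J, X j)
      (Polynomial.X ^ (w J₁) - Polynomial.C y) = 0 := by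
    rw [Polynomial.eval₂_sub, Polynomial.eval₂_pow, Polynomial.eval₂_X, Polynomial.eval₂_C]
    have hgy : g y = (∏ j ∈ J, X j) ^ (w J₁) := by
      rw [hgval, hy, hxJprod]
      simpa using hφK_inJ J subset_rfl 1
    rw [hgy, sub_self]
  obtain ⟨j₀, hj₀⟩ := hD.nonempty_mem J₁ hJ₁D
  have hj₀J : j₀ ∈ J := (hCssub J₁ hJ₁).subset hj₀
  have hCmem : ∀ r : ℂ, ∀ d ∈ (MvPolynomial.C (σ := Fin n) r).support, w J₁ ∣ d j₀ := by
    intro r d hd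
    rw [MvPolynomial.mem_support_iff, MvPolynomial.coeff_C] at hd
    rcases eq_or_ne d 0 with rfl | h0
    · simp
    · simp [h0.symm] at hd
  set M : Subalgebra ℂ (MvPolynomial (Fin n) ℂ) :=
    { carrier := {p | ∀ d ∈ p.support, w J₁ ∣ d j₀}
      mul_mem' := by
        intro p q hp hq d hd
        obtain ⟨d₁, hd₁, d₂, hd₂, rfl⟩ := Finset.mem_add.mp (MvPolynomial.support_mul p q hd)
        rw [Finsupp.add_apply]
        exact dvd_add (hp d₁ hd₁) (hq d₂ hd₂)
      one_mem' := by
        intro d hd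
        rw [show (1 : MvPolynomial (Fin n) ℂ) = MvPolynomial.C 1 from (map_one _).symm] at hd
        exact hCmem 1 d hd
      add_mem' := by
        intro p q hp hq d hd
        rcases Finset.mem_union.mp (MvPolynomial.support_add hd) with h | h
        · exact hp d h
        · exact hq d h
      zero_mem' := by simp
      algebraMap_mem' := fun r => hCmem r } with hM
  have hφM : ∀ u : (datumRing n (D.erase J) w'),
      φ (u : MvPolynomial (Fin n) ℂ) ∈ M := by
    intro u
    have h1 : φ (u : MvPolynomial (Fin n) ℂ) ∈ (datumRing n (D.erase J) w').map φ :=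
      ⟨u, u.2, rfl⟩
    unfold datumRing at h1
    rw [AlgHom.map_adjoin] at h1
    refine Algebra.adjoin_le ?_ h1
    rintro p ⟨q, ⟨K, hK, rfl⟩, rfl⟩
    rw [SetLike.mem_coe, hgen K hK, aux_prodX_pow_eq_monomial]
    intro d hd
    have hd' : d = ∑ j ∈ K, Finsupp.single j (w K) :=
      Finset.mem_singleton.mp (MvPolynomial.support_monomial_subset hd)
    rw [hd', aux_sum_single_apply]
    by_cases hj : j₀ ∈ K
    · rw [if_pos hj]
      obtain ⟨hKne, hKD⟩ := Finset.mem_erase.mp hK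
      have hKJ₁ : K ⊆ J₁ := by
        rcases hD.laminar K hKD J₁ hJ₁D with h | h | h
        · exact h
        · rcases eq_or_ne K J₁ with rfl | hne
          · exact subset_rfl
          · have hKJ : K ⊂ J := by
              rcases hD.laminar K hKD J hJ with h2 | h2 | h2
              · exact ssubset_of_subset_of_ne h2 hKne
              · exact absurd (hJmax K hKD h2).symm hKne
              · have : j₀ ∈ K ∩ J := Finset.mem_inter.mpr ⟨hj, hj₀J⟩
                rw [h2] at this
                exact absurd this (Finset.notMem_empty _)
            exact absurd ⟨K, hKD, ssubset_of_subset_of_ne h (Ne.symm hne), hKJ⟩ hJ₁cov.2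
        · have : j₀ ∈ K ∩ J₁ := Finset.mem_inter.mpr ⟨hj, hj₀⟩
          rw [h] at this
          exact absurd this (Finset.notMem_empty _)
      exact hadvd K hKD ⟨J₁, hJ₁, hKJ₁⟩
    · rw [if_neg hj]
      exact dvd_zero _
  have hsep : ∀ (c : (datumRing n (D.erase J) w')) (k : ℕ), k < w J₁ →
      ∀ d ∈ (g c * (∏ j ∈ J, X j) ^ k).support, d j₀ % w J₁ = k := by
    intro c k hk d hd
    obtain ⟨d₁, hd₁, d₂, hd₂, rfl⟩ := Finset.mem_add.mp (MvPolynomial.support_mul _ _ hd)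
    have h1 : w J₁ ∣ d₁ j₀ := hφM c d₁ hd₁
    have h2 : d₂ j₀ = k := by
      rw [aux_prodX_pow_eq_monomial] at hd₂
      have hd2' : d₂ = ∑ j ∈ J, Finsupp.single j k :=
        Finset.mem_singleton.mp (MvPolynomial.support_monomial_subset hd₂)
      rw [hd2', aux_sum_single_apply, if_pos hj₀J]
    obtain ⟨t, ht⟩ := h1
    rw [Finsupp.add_apply, h2, ht, Nat.mul_add_mod, Nat.mod_eq_of_lt hk]
  have hxJne : (∏ j ∈ J, X j : MvPolynomial (Fin n) ℂ) ≠ 0 :=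
    Finset.prod_ne_zero_iff.mpr fun j _ => MvPolynomial.X_ne_zero j
  have hginj : Function.Injective g := fun u v huv => Subtype.ext (hφinj (by rw [← hgval u, ← hgval v]; exact huv))
  have hindep : ∀ q : Polynomial (datumRing n (D.erase J) w'), q.natDegree < w J₁ →
      Polynomial.eval₂ g (∏ j ∈ J, X j) q = 0 → q = 0 := by
    intro q hdeg h0
    rw [Polynomial.eval₂_eq_sum_range' g hdeg] at h0
    have hterm : ∀ k ∈ Finset.range (w J₁),
        g (q.coeff k) * (∏ j ∈ J, X j) ^ k = 0 := by
      intro k hk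
      have hka := Finset.mem_range.mp hk
      apply MvPolynomial.ext
      intro d
      rw [MvPolynomial.coeff_zero]
      by_cases hdk : d j₀ % w J₁ = k
      · have hsum := congrArg (MvPolynomial.coeff d) h0
        rw [MvPolynomial.coeff_zero, MvPolynomial.coeff_sum] at hsum
        have hz : ∀ k' ∈ Finset.range (w J₁), k' ≠ k →
            MvPolynomial.coeff d (g (q.coeff k') * (∏ j ∈ J, X j) ^ k') = 0 := by
          intro k' hk' hne
          by_contra hnz
          exact hne ((hsep (q.coeff k') k' (Finset.mem_range.mp hk') d
            (MvPolynomial.mem_support_iff.mpr hnz)).symm.trans hdk)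
        rw [← Finset.sum_eq_single_of_mem k hk hz]
        exact hsum
      · by_contra hnz
        exact hdk (hsep (q.coeff k) k hka d (MvPolynomial.mem_support_iff.mpr hnz))
    refine Polynomial.ext fun k => ?_
    rw [Polynomial.coeff_zero]
    by_cases hk : k < w J₁
    · have h := hterm k (Finset.mem_range.mpr hk)
      rcases mul_eq_zero.mp h with h' | h'
      · exact hginj (by rw [h', map_zero])
      · exact absurd h' (pow_ne_zero _ hxJne)
    · exact Polynomial.coeff_eq_zero_of_natDegree_lt (lt_of_lt_of_le hdeg (not_lt.mp hk))
  have hmonic : (Polynomial.X ^ (w J₁) - Polynomial.C y).Monic :=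
    Polynomial.monic_X_pow_sub_C y (Nat.pos_iff_ne_zero.mp haPos)
  set ψ := AdjoinRoot.lift g (∏ j ∈ J, X j) hroot with hψ
  have hψmk : ∀ p, ψ (AdjoinRoot.mk _ p) = Polynomial.eval₂ g (∏ j ∈ J, X j) p :=
    fun p => AdjoinRoot.lift_mk hroot p
  have hψinj : Function.Injective ψ := by
    rw [injective_iff_map_eq_zero]
    intro z hz
    obtain ⟨p, rfl⟩ := AdjoinRoot.mk_surjective z
    have hrepr : AdjoinRoot.mk (Polynomial.X ^ (w J₁) - Polynomial.C y) p
        = AdjoinRoot.mk (Polynomial.X ^ (w J₁) - Polynomial.C y)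
          (p %ₘ (Polynomial.X ^ (w J₁) - Polynomial.C y)) := by
      conv_lhs => rw [← Polynomial.modByMonic_add_div p (Polynomial.X ^ (w J₁) - Polynomial.C y)]
      rw [map_add, map_mul, AdjoinRoot.mk_self, zero_mul, add_zero]
    rw [hrepr] at hz ⊢
    rw [hψmk] at hz
    have hdeg : (p %ₘ (Polynomial.X ^ (w J₁) - Polynomial.C y)).natDegree < w J₁ := by
      by_cases h0 : p %ₘ (Polynomial.X ^ (w J₁) - Polynomial.C y) = 0
      · simpa [h0] using haPos
      · have h1 := Polynomial.degree_modByMonic_lt p hmonic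
        rw [Polynomial.degree_X_pow_sub_C haPos] at h1
        exact (Polynomial.natDegree_lt_iff_degree_lt h0).mpr h1
    rw [hindep _ hdeg hz, map_zero]
  have hxJmem : (∏ j ∈ J, X j : MvPolynomial (Fin n) ℂ) ∈ datumRing n D w := by
    have h1 : ((∏ j ∈ J, X j : MvPolynomial (Fin n) ℂ)) = (∏ j ∈ J, X j) ^ (w J) := by
      rw [hwJ, pow_one]
    rw [h1]
    exact Algebra.subset_adjoin ⟨J, hJ, rfl⟩
  have hgmem : ∀ u : (datumRing n (D.erase J) w'), g u ∈ datumRing n D w := by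
    intro u
    rw [hgval]
    have h1 : φ (u : MvPolynomial (Fin n) ℂ) ∈ (datumRing n (D.erase J) w').map φ :=
      ⟨u, u.2, rfl⟩
    unfold datumRing at h1
    rw [AlgHom.map_adjoin] at h1
    refine Algebra.adjoin_le ?_ h1
    rintro p ⟨q, ⟨K, hK, rfl⟩, rfl⟩
    rw [SetLike.mem_coe, hgen K hK]
    exact Algebra.subset_adjoin ⟨K, (Finset.mem_erase.mp hK).2, rfl⟩
  have hψmem : ∀ z, ψ z ∈ datumRing n D w := by
    intro z
    obtain ⟨p, rfl⟩ := AdjoinRoot.mk_surjective z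
    rw [hψmk]
    induction p using Polynomial.induction_on with
    | C u => rw [Polynomial.eval₂_C]; exact hgmem u
    | add p q hp hq => rw [Polynomial.eval₂_add]; exact add_mem hp hq
    | monomial k u hk =>
      rw [Polynomial.eval₂_mul, Polynomial.eval₂_C, Polynomial.eval₂_pow,
        Polynomial.eval₂_X] at hk ⊢
      rw [pow_succ, ← mul_assoc]
      exact mul_mem hk hxJmem
  set ΨA : AdjoinRoot (Polynomial.X ^ (w J₁) - Polynomial.C y) →ₐ[ℂ] MvPolynomial (Fin n) ℂ :=
    { toRingHom := ψ
      commutes' := by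
        intro r
        have h1 : (algebraMap ℂ (AdjoinRoot (Polynomial.X ^ (w J₁) - Polynomial.C y)) r)
            = AdjoinRoot.mk _ (Polynomial.C
                (algebraMap ℂ (datumRing n (D.erase J) w') r)) := rfl
        show ψ _ = _
        rw [h1, hψmk, Polynomial.eval₂_C, hgval]
        simp } with hΨA
  have hΨAapply : ∀ z, ΨA z = ψ z := fun z => rfl
  have hrange : datumRing n D w ≤ ΨA.range := by
    have : Algebra.adjoin ℂ
        { p : MvPolynomial (Fin n) ℂ | ∃ K ∈ D, p = (∏ j ∈ K, X j) ^ (w K) } ≤ ΨA.range := by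
      apply Algebra.adjoin_le
      rintro p ⟨K, hKD, rfl⟩
      by_cases hKJ : K = J
      · subst hKJ
        refine ⟨AdjoinRoot.root _, ?_⟩
        show ψ _ = _
        rw [hwJ, pow_one]
        exact AdjoinRoot.lift_root hroot
      · refine ⟨AdjoinRoot.mk _ (Polynomial.C ⟨(∏ j ∈ K, X j) ^ w' K,
          Algebra.subset_adjoin ⟨K, Finset.mem_erase.mpr ⟨hKJ, hKD⟩, rfl⟩⟩), ?_⟩
        show ψ _ = _
        rw [hψmk, Polynomial.eval₂_C, hgval]
        exact hgen K (Finset.mem_erase.mpr ⟨hKJ, hKD⟩)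
    exact this
  set Ψ : AdjoinRoot (Polynomial.X ^ (w J₁) - Polynomial.C y) →ₐ[ℂ] datumRing n D w :=
    ΨA.codRestrict (datumRing n D w) (fun z => hψmem z) with hΨ
  have hbij : Function.Bijective Ψ := by
    constructor
    · intro u v huv
      apply hψinj
      exact congrArg Subtype.val huv
    · intro z
      obtain ⟨u, hu⟩ := hrange z.2
      exact ⟨u, Subtype.ext hu⟩
  exact ⟨(AlgEquiv.ofBijective Ψ hbij).symm⟩
end

section
/- Let n₁, n₂ ≥ 1 and let E₁ ⊂ ℝ_{≥0}^{n₁} and E₂ ⊂ ℝ_{≥0}^{n₂} be finite non-empty sets of vectors with non-negative coordinates. Let P_i = conv(E_i) + ℝ_{≥0}^{n_i} (i = 1, 2) and let P = conv((E₁ × {0}) ∪ ({0} × E₂)) + ℝ_{≥0}^{n₁+n₂} ⊂ ℝ^{n₁+n₂}, where conv denotes the convex hull. Denote by 𝟙 the all-ones vector of the appropriate dimension. Then, as suprema in [0, ∞], sup{t > 0 : 𝟙 ∈ t·P} = sup{t > 0 : 𝟙 ∈ t·P₁} + sup{t > 0 : 𝟙 ∈ t·P₂}. -/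
open scoped Pointwise

/-- The "log canonical threshold" of a Newton-polyhedron-like set `P`, computed as the
supremum, in `[0,∞]`, of the positive reals `t` with `𝟙 ∈ t • P`. -/
noncomputable def thr {V : Type*} [AddCommGroup V] [Module ℝ V]
    (one : V) (P : Set V) : ENNReal :=
  sSup (ENNReal.ofReal '' { t : ℝ | 0 < t ∧ one ∈ t • P })

lemma aux_mem_iff {n : ℕ} (C : Set (Fin n → ℝ)) {s : ℝ} (hs : 0 < s) :
    ((fun _ => 1 : Fin n → ℝ) ∈ s • (C + { x : Fin n → ℝ | ∀ i, 0 ≤ x i })) ↔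
      ∃ a ∈ C, ∀ i, s * a i ≤ 1 := by
  constructor
  · rintro ⟨p, hp, hsp⟩
    rw [Set.mem_add] at hp
    obtain ⟨c, hc, q, hq, rfl⟩ := hp
    refine ⟨c, hc, fun i => ?_⟩
    have h1 : s * (c i + q i) = 1 := congrFun hsp i
    have := hq i
    nlinarith
  · rintro ⟨a, ha, h⟩
    refine ⟨a + fun i => 1 / s - a i,
      Set.mem_add.2 ⟨a, ha, (fun i => 1 / s - a i), fun i => ?_, rfl⟩,
      funext fun i => ?_⟩
    · have : a i ≤ 1 / s := (le_div_iff₀' hs).2 (h i)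
      simpa using sub_nonneg.2 this
    · show s * (a i + (1 / s - a i)) = 1
      field_simp
      ring
  
lemma aux_mem_iff₂ {n₁ n₂ : ℕ} (C : Set ((Fin n₁ → ℝ) × (Fin n₂ → ℝ))) {t : ℝ} (ht : 0 < t) :
    (((fun _ => 1, fun _ => 1) : (Fin n₁ → ℝ) × (Fin n₂ → ℝ)) ∈
        t • (C + { p : (Fin n₁ → ℝ) × (Fin n₂ → ℝ) |
            (∀ i, 0 ≤ p.1 i) ∧ (∀ i, 0 ≤ p.2 i) })) ↔
      ∃ c ∈ C, (∀ i, t * c.1 i ≤ 1) ∧ (∀ i, t * c.2 i ≤ 1) := by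
  constructor
  · rintro ⟨p, hp, hsp⟩
    rw [Set.mem_add] at hp
    obtain ⟨c, hc, q, ⟨hq1, hq2⟩, rfl⟩ := hp
    refine ⟨c, hc, fun i => ?_, fun i => ?_⟩
    · have h1 : t * (c.1 i + q.1 i) = 1 := congrFun (congrArg Prod.fst hsp) i
      have := hq1 i
      nlinarith
    · have h1 : t * (c.2 i + q.2 i) = 1 := congrFun (congrArg Prod.snd hsp) i
      have := hq2 i
      nlinarith
  · rintro ⟨c, hc, h1, h2⟩
    refine ⟨c + ((fun i => 1 / t - c.1 i), (fun i => 1 / t - c.2 i)),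
      Set.mem_add.2 ⟨c, hc, ((fun i => 1 / t - c.1 i), (fun i => 1 / t - c.2 i)),
        ⟨fun i => ?_, fun i => ?_⟩, rfl⟩, ?_⟩
    · have : c.1 i ≤ 1 / t := (le_div_iff₀' ht).2 (h1 i)
      simpa using sub_nonneg.2 this
    · have : c.2 i ≤ 1 / t := (le_div_iff₀' ht).2 (h2 i)
      simpa using sub_nonneg.2 this
    · refine Prod.ext (funext fun i => ?_) (funext fun i => ?_)
      · show t * (c.1 i + (1 / t - c.1 i)) = 1
        field_simp
        ring
      · show t * (c.2 i + (1 / t - c.2 i)) = 1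
        field_simp
        ring

/-- The convex-geometric core of Proposition 2.16 (additivity of the log canonical
threshold over connected components): for finite non-empty sets `E₁ ⊂ ℝ_{≥0}^{n₁}`,
`E₂ ⊂ ℝ_{≥0}^{n₂}`, with Newton polyhedra `Pᵢ = conv(Eᵢ) + ℝ_{≥0}^{nᵢ}` and
`P = conv((E₁ × {0}) ∪ ({0} × E₂)) + ℝ_{≥0}^{n₁+n₂}`, one has
`sup{t > 0 : 𝟙 ∈ t·P} = sup{t > 0 : 𝟙 ∈ t·P₁} + sup{t > 0 : 𝟙 ∈ t·P₂}`
as suprema in `[0,∞]`. -/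
theorem stmt_13 (n₁ n₂ : ℕ) (hn₁ : 1 ≤ n₁) (hn₂ : 1 ≤ n₂)
    (E₁ : Set (Fin n₁ → ℝ)) (E₂ : Set (Fin n₂ → ℝ))
    (hE₁fin : E₁.Finite) (hE₂fin : E₂.Finite)
    (hE₁ne : E₁.Nonempty) (hE₂ne : E₂.Nonempty)
    (hE₁pos : ∀ v ∈ E₁, ∀ i, 0 ≤ v i) (hE₂pos : ∀ v ∈ E₂, ∀ i, 0 ≤ v i) :
    thr ((fun _ => 1, fun _ => 1) : (Fin n₁ → ℝ) × (Fin n₂ → ℝ))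
        (convexHull ℝ ((E₁ ×ˢ ({0} : Set (Fin n₂ → ℝ))) ∪
            (({0} : Set (Fin n₁ → ℝ)) ×ˢ E₂)) +
          { p : (Fin n₁ → ℝ) × (Fin n₂ → ℝ) |
            (∀ i, 0 ≤ p.1 i) ∧ (∀ i, 0 ≤ p.2 i) }) =
      thr (fun _ => 1 : Fin n₁ → ℝ)
          (convexHull ℝ E₁ + { x : Fin n₁ → ℝ | ∀ i, 0 ≤ x i }) +
        thr (fun _ => 1 : Fin n₂ → ℝ)
          (convexHull ℝ E₂ + { x : Fin n₂ → ℝ | ∀ i, 0 ≤ x i }) := by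
  classical
  set C : Set ((Fin n₁ → ℝ) × (Fin n₂ → ℝ)) :=
    convexHull ℝ ((E₁ ×ˢ ({0} : Set (Fin n₂ → ℝ))) ∪ (({0} : Set (Fin n₁ → ℝ)) ×ˢ E₂)) with hC
  set A : Set ℝ := { t : ℝ | 0 < t ∧ ∃ c ∈ C, (∀ i, t * c.1 i ≤ 1) ∧ (∀ i, t * c.2 i ≤ 1) }
    with hA
  set A₁ : Set ℝ := { t : ℝ | 0 < t ∧ ∃ a ∈ convexHull ℝ E₁, ∀ i, t * a i ≤ 1 } with hA₁
  set A₂ : Set ℝ := { t : ℝ | 0 < t ∧ ∃ a ∈ convexHull ℝ E₂, ∀ i, t * a i ≤ 1 } with hA₂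
  -- rewrite the three thresholds
  have e0 : thr ((fun _ => 1, fun _ => 1) : (Fin n₁ → ℝ) × (Fin n₂ → ℝ))
      (C + { p : (Fin n₁ → ℝ) × (Fin n₂ → ℝ) | (∀ i, 0 ≤ p.1 i) ∧ (∀ i, 0 ≤ p.2 i) }) =
      sSup (ENNReal.ofReal '' A) := by
    unfold thr
    exact congrArg sSup (congrArg (Set.image ENNReal.ofReal)
      (Set.ext fun t => and_congr_right fun ht => aux_mem_iff₂ C ht))
  have e1 : thr (fun _ => 1 : Fin n₁ → ℝ)
      (convexHull ℝ E₁ + { x : Fin n₁ → ℝ | ∀ i, 0 ≤ x i }) = sSup (ENNReal.ofReal '' A₁) := by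
    unfold thr
    exact congrArg sSup (congrArg (Set.image ENNReal.ofReal)
      (Set.ext fun t => and_congr_right fun ht => aux_mem_iff _ ht))
  have e2 : thr (fun _ => 1 : Fin n₂ → ℝ)
      (convexHull ℝ E₂ + { x : Fin n₂ → ℝ | ∀ i, 0 ≤ x i }) = sSup (ENNReal.ofReal '' A₂) := by
    unfold thr
    exact congrArg sSup (congrArg (Set.image ENNReal.ofReal)
      (Set.ext fun t => and_congr_right fun ht => aux_mem_iff _ ht))
  rw [e0, e1, e2]
  -- nonemptiness of A₁ and A₂
  have hne : ∀ (n : ℕ) (E : Set (Fin n → ℝ)), E.Nonempty → (∀ v ∈ E, ∀ i, 0 ≤ v i) →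
      ({ t : ℝ | 0 < t ∧ ∃ a ∈ convexHull ℝ E, ∀ i, t * a i ≤ 1 } : Set ℝ).Nonempty := by
    intro n E hEne hEpos
    obtain ⟨a, ha⟩ := hEne
    have hsum : (0 : ℝ) ≤ ∑ i, a i := Finset.sum_nonneg fun i _ => hEpos a ha i
    refine ⟨(1 + ∑ i, a i)⁻¹, inv_pos.2 (by linarith), a, subset_convexHull ℝ E ha, fun i => ?_⟩
    have hle : a i ≤ 1 + ∑ j, a j := by
      have : a i ≤ ∑ j, a j :=
        Finset.single_le_sum (fun j _ => hEpos a ha j) (Finset.mem_univ i)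
      linarith
    rw [inv_mul_le_iff₀ (by linarith)]
    linarith
  have hA₁ne : A₁.Nonempty := hne n₁ E₁ hE₁ne hE₁pos
  have hA₂ne : A₂.Nonempty := hne n₂ E₂ hE₂ne hE₂pos
  -- structure of C via convex join
  have hprodne₁ : (E₁ ×ˢ ({0} : Set (Fin n₂ → ℝ))).Nonempty :=
    hE₁ne.prod (Set.singleton_nonempty _)
  have hprodne₂ : (({0} : Set (Fin n₁ → ℝ)) ×ˢ E₂).Nonempty :=
    (Set.singleton_nonempty _).prod hE₂ne
  have hCjoin : C = convexJoin ℝ (convexHull ℝ E₁ ×ˢ ({0} : Set (Fin n₂ → ℝ)))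
      (({0} : Set (Fin n₁ → ℝ)) ×ˢ convexHull ℝ E₂) := by
    rw [hC, convexHull_union hprodne₁ hprodne₂, convexHull_prod, convexHull_prod,
      convexHull_singleton, convexHull_singleton]
  -- A₁ + A₂ ⊆ A
  have hadd : ∀ s₁ ∈ A₁, ∀ s₂ ∈ A₂, s₁ + s₂ ∈ A := by
    rintro s₁ ⟨hs₁, a, ha, h1⟩ s₂ ⟨hs₂, b, hb, h2⟩
    have ht : 0 < s₁ + s₂ := by linarith
    refine ⟨ht, ((s₁ / (s₁ + s₂)) • a, (s₂ / (s₁ + s₂)) • b), ?_, fun i => ?_, fun i => ?_⟩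
    · rw [hCjoin, mem_convexJoin]
      refine ⟨(a, 0), ⟨ha, rfl⟩, (0, b), ⟨rfl, hb⟩,
        s₁ / (s₁ + s₂), s₂ / (s₁ + s₂),
        div_nonneg hs₁.le ht.le, div_nonneg hs₂.le ht.le, by field_simp, ?_⟩
      refine Prod.ext ?_ ?_ <;> simp
    · show (s₁ + s₂) * (s₁ / (s₁ + s₂) * a i) ≤ 1
      have : (s₁ + s₂) * (s₁ / (s₁ + s₂) * a i) = s₁ * a i := by field_simp
      rw [this]; exact h1 i
    · show (s₁ + s₂) * (s₂ / (s₁ + s₂) * b i) ≤ 1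
      have : (s₁ + s₂) * (s₂ / (s₁ + s₂) * b i) = s₂ * b i := by field_simp
      rw [this]; exact h2 i
  -- decomposition of elements of A
  have hdecomp : ∀ t ∈ A, ∃ s₁ s₂ : ℝ, t = s₁ + s₂ ∧ 0 ≤ s₁ ∧ 0 ≤ s₂ ∧
      (s₁ = 0 ∨ s₁ ∈ A₁) ∧ (s₂ = 0 ∨ s₂ ∈ A₂) := by
    rintro t ⟨ht, c, hc, h1, h2⟩
    rw [hCjoin, mem_convexJoin] at hc
    obtain ⟨x, ⟨hx1, hx2⟩, y, ⟨hy1, hy2⟩, μ, ν, hμ, hν, hμν, hxy⟩ := hc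
    refine ⟨t * μ, t * ν, by rw [← mul_add, hμν, mul_one], by positivity, by positivity, ?_, ?_⟩
    · rcases eq_or_lt_of_le hμ with h | h
      · exact Or.inl (by rw [← h, mul_zero])
      · refine Or.inr ⟨by positivity, x.1, hx1, fun i => ?_⟩
        have hci : c.1 i = μ * x.1 i := by
          have := congrFun (congrArg Prod.fst hxy) i
          simp only [Prod.fst_add, Prod.smul_fst, Pi.add_apply, Pi.smul_apply,
            smul_eq_mul] at this
          rw [← this, hy1]
          simp
        have := h1 i
        rw [hci] at this
        linarith [this]
    · rcases eq_or_lt_of_le hν with h | h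
      · exact Or.inl (by rw [← h, mul_zero])
      · refine Or.inr ⟨by positivity, y.2, hy2, fun i => ?_⟩
        have hci : c.2 i = ν * y.2 i := by
          have := congrFun (congrArg Prod.snd hxy) i
          simp only [Prod.snd_add, Prod.smul_snd, Pi.add_apply, Pi.smul_apply,
            smul_eq_mul] at this
          rw [← this, hx2]
          simp
        have := h2 i
        rw [hci] at this
        linarith [this]
  -- conclude
  apply le_antisymm
  · refine sSup_le ?_
    rintro x ⟨t, htA, rfl⟩
    obtain ⟨s₁, s₂, rfl, hs₁, hs₂, hd₁, hd₂⟩ := hdecomp t htA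
    rw [ENNReal.ofReal_add hs₁ hs₂]
    refine add_le_add ?_ ?_
    · rcases hd₁ with h | h
      · simp [h]
      · exact le_sSup ⟨s₁, h, rfl⟩
    · rcases hd₂ with h | h
      · simp [h]
      · exact le_sSup ⟨s₂, h, rfl⟩
  · rw [sSup_image, sSup_image, ENNReal.biSup_add hA₁ne]
    refine iSup₂_le fun s₁ hs₁ => ?_
    rw [ENNReal.add_biSup hA₂ne]
    refine iSup₂_le fun s₂ hs₂ => ?_
    rw [← ENNReal.ofReal_add (le_of_lt hs₁.1) (le_of_lt hs₂.1)]
    exact le_sSup ⟨s₁ + s₂, hadd s₁ hs₁ s₂ hs₂, rfl⟩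
end

section
/- Let n ≥ 1 and let E ⊂ ℝ_{≥0}^n be a finite non-empty set of vectors with non-negative coordinates. Let P = conv(E) + ℝ_{≥0}^n and Q = conv(E ∪ {𝟙}) + ℝ_{≥0}^n, where conv denotes the convex hull and 𝟙 = (1,…,1). Then, as suprema in [0, ∞], sup{t > 0 : 𝟙 ∈ t·Q} = max{1, sup{t > 0 : 𝟙 ∈ t·P}}. -/
open scoped Pointwise

/-- The convex-geometric core of Proposition 2.17: for a finite non-empty set
`E ⊂ ℝ_{≥0}^n` with Newton polyhedra `P = conv(E) + ℝ_{≥0}^n` and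
`Q = conv(E ∪ {𝟙}) + ℝ_{≥0}^n`, one has
`sup{t > 0 : 𝟙 ∈ t·Q} = max{1, sup{t > 0 : 𝟙 ∈ t·P}}` as suprema in `[0,∞]`. -/
theorem stmt_14 (n : ℕ) (hn : 1 ≤ n) (E : Set (Fin n → ℝ))
    (hEfin : E.Finite) (hEne : E.Nonempty) (hEpos : ∀ v ∈ E, ∀ i, 0 ≤ v i) :
    thr (fun _ => 1 : Fin n → ℝ)
        (convexHull ℝ (E ∪ {fun _ => 1}) + { x : Fin n → ℝ | ∀ i, 0 ≤ x i }) =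
      max 1
        (thr (fun _ => 1 : Fin n → ℝ)
          (convexHull ℝ E + { x : Fin n → ℝ | ∀ i, 0 ≤ x i })) := by
  classical
  set o : Fin n → ℝ := (fun _ => 1) with ho
  set O : Set (Fin n → ℝ) := { x : Fin n → ℝ | ∀ i, 0 ≤ x i } with hOdef
  have hconvEO : convexHull ℝ E ⊆ O := by
    apply convexHull_min
    · intro v hv i; exact hEpos v hv i
    · intro x hx y hy a b ha hb hab i
      simp only [Pi.add_apply, Pi.smul_apply, smul_eq_mul]
      exact add_nonneg (mul_nonneg ha (hx i)) (mul_nonneg hb (hy i))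
  unfold thr
  apply le_antisymm
  · apply sSup_le
    rintro x ⟨t, ⟨ht, hmem⟩, rfl⟩
    rcases Set.mem_smul_set.mp hmem with ⟨q, hq, hqe⟩
    rcases Set.mem_add.mp hq with ⟨y, hy, w, hw, rfl⟩
    rw [Set.union_singleton, convexHull_insert hEne] at hy
    rcases mem_convexJoin.mp hy with ⟨x₁, hx1, z, hz, hseg⟩
    rcases Set.mem_singleton_iff.mp hx1 with rfl
    rcases hseg with ⟨a, b, ha, hb, hab, rfl⟩
    have hzO : ∀ i, 0 ≤ z i := hconvEO hz
    have hcoord : ∀ i, t * (a + b * z i + w i) = 1 := by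
      intro i
      have := congrFun hqe i
      simpa [ho, mul_one] using this
    by_cases htle : t ≤ 1
    · exact le_max_of_le_left (by simpa using ENNReal.ofReal_le_one.mpr htle)
    push_neg at htle
    by_cases hta : t * a < 1
    · -- rescale: 𝟙 ∈ t' • P with t' = t*b/(1-t*a) ≥ t
      have hb' : 0 < b := by nlinarith
      set t' : ℝ := t * b / (1 - t * a) with ht'def
      have hden : 0 < 1 - t * a := by linarith
      have ht'pos : 0 < t' := div_pos (mul_pos (by linarith) hb') hden
      have htt' : t ≤ t' := by
        rw [ht'def, le_div_iff₀ hden]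
        nlinarith [mul_nonneg (mul_nonneg ht.le ha) (by linarith : (0:ℝ) ≤ t - 1)]
      have hmemP : o ∈ t' • (convexHull ℝ E + O) := by
        refine Set.mem_smul_set.mpr ⟨z + t'⁻¹ • ((t / (1 - t * a)) • w), ?_, ?_⟩
        · refine Set.add_mem_add hz ?_
          intro i
          simp only [Pi.smul_apply, smul_eq_mul]
          have : 0 ≤ t / (1 - t * a) := le_of_lt (div_pos (by linarith) hden)
          exact mul_nonneg (inv_nonneg.mpr ht'pos.le) (mul_nonneg this (hw i))
        · funext i
          simp only [Pi.smul_apply, Pi.add_apply, smul_eq_mul, ho]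
          have key : t' * z i + t / (1 - t * a) * w i = 1 := by
            rw [ht'def]
            field_simp
            linear_combination hcoord i
          rw [mul_add, ← mul_assoc, mul_inv_cancel₀ (ne_of_gt ht'pos), one_mul]
          exact key
      have hmem' : ENNReal.ofReal t' ∈
          ENNReal.ofReal '' { s : ℝ | 0 < s ∧ o ∈ s • (convexHull ℝ E + O) } :=
        ⟨t', ⟨ht'pos, hmemP⟩, rfl⟩
      calc ENNReal.ofReal t ≤ ENNReal.ofReal t' := ENNReal.ofReal_le_ofReal htt'
        _ ≤ _ := le_max_of_le_right (le_sSup hmem')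
    · -- degenerate case: z = 0, so 0 ∈ conv E and 𝟙 ∈ t • P directly
      push_neg at hta
      have hb' : 0 < b := by
        rcases hb.lt_or_eq with h | h
        · exact h
        · exfalso
          have ha1 : a = 1 := by linarith
          have hc := hcoord ⟨0, hn⟩
          rw [← h, ha1] at hc
          norm_num at hc
          nlinarith [mul_nonneg ht.le (hw ⟨0, hn⟩)]
      have hz0 : z = 0 := by
        funext i
        have hc := hcoord i
        have h1 : t * b * z i ≤ 0 := by nlinarith [hw i]
        have h2 : 0 ≤ t * b * z i :=
          mul_nonneg (mul_nonneg (by linarith) hb) (hzO i)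
        have : t * b * z i = 0 := le_antisymm h1 h2
        have htb : t * b ≠ 0 := ne_of_gt (mul_pos (by linarith) hb')
        simpa [Pi.zero_apply] using (mul_eq_zero.mp this).resolve_left htb
      rw [hz0] at hz
      have hmemP : o ∈ t • (convexHull ℝ E + O) := by
        refine Set.mem_smul_set.mpr ⟨(0 : Fin n → ℝ) + t⁻¹ • o, Set.add_mem_add hz ?_, ?_⟩
        · intro i
          simp only [Pi.smul_apply, smul_eq_mul, ho, mul_one]
          exact inv_nonneg.mpr (by linarith)
        · funext i
          simp only [Pi.smul_apply, Pi.add_apply, Pi.zero_apply, smul_eq_mul, ho, zero_add,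
            mul_one]
          field_simp
      have hmem' : ENNReal.ofReal t ∈
          ENNReal.ofReal '' { s : ℝ | 0 < s ∧ o ∈ s • (convexHull ℝ E + O) } :=
        ⟨t, ⟨ht, hmemP⟩, rfl⟩
      exact le_max_of_le_right (le_sSup hmem')
  · apply max_le
    · have h1 : ENNReal.ofReal (1 : ℝ) ∈
          ENNReal.ofReal '' { t : ℝ | 0 < t ∧ o ∈ t • (convexHull ℝ (E ∪ {o}) + O) } := by
        refine ⟨1, ⟨one_pos, ?_⟩, rfl⟩
        rw [one_smul]
        have hmem : o ∈ convexHull ℝ (E ∪ {o}) :=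
          subset_convexHull ℝ _ (Set.mem_union_right _ rfl)
        have h0 : (0 : Fin n → ℝ) ∈ O := fun i => le_refl 0
        simpa using Set.add_mem_add hmem h0
      simpa using le_sSup h1
    · apply sSup_le_sSup
      apply Set.image_mono
      rintro t ⟨ht, hmem⟩
      refine ⟨ht, ?_⟩
      refine Set.smul_set_mono ?_ hmem
      exact Set.add_subset_add_right (convexHull_mono Set.subset_union_left)
end

section
/- Let 𝔻 = (D, w) be an n-dimensional special datum. In the polynomial ring ℂ[x₁,…,xₙ], let E = {w(J)·χ_J : J ∈ D} ⊂ ℝ_{≥0}^n be the set of exponent vectors of the monomials x_J^{w(J)} (where χ_J is the indicator vector of J), and let P = conv(E) + ℝ_{≥0}^n. Then sup{t > 0 : (1,…,1) ∈ t·P} ≥ #{J ∈ D : J is a maximal element of D with respect to inclusion}. -/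
open Finset

open scoped Pointwise Classical

/-- Newton-polyhedron form of Corollary 2.18: for an `n`-dimensional special datum
`𝔻 = (D, w)` with exponent vectors `E = {w(J)·χ_J : J ∈ D}` and Newton polyhedron
`P = conv(E) + ℝ_{≥0}^n`, the threshold `sup{t > 0 : 𝟙 ∈ t·P}` (which equals
`lct(𝔪_𝔻)`) is at least the number of maximal elements of `D`. -/
theorem stmt_15 (n : ℕ) (hn : 1 ≤ n) (D : Finset (Finset (Fin n)))
    (w : Finset (Fin n) → ℕ) (hD : IsSpecialDatum D w) :
    ((D.filter (fun J => ∀ K ∈ D, J ⊆ K → J = K)).card : ENNReal) ≤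
      thr (fun _ => 1 : Fin n → ℝ)
        (convexHull ℝ
            { v : Fin n → ℝ | ∃ J ∈ D, v = fun i => if i ∈ J then (w J : ℝ) else 0 } +
          { x : Fin n → ℝ | ∀ i, 0 ≤ x i }) := by

  classical
  set M := D.filter (fun J => ∀ K ∈ D, J ⊆ K → J = K) with hM
  set m := M.card with hm
  -- each coordinate lies in exactly one maximal element
  have hmaxex : ∀ i : Fin n, ∃! J, J ∈ M ∧ i ∈ J := by
    intro i
    have hne : (D.filter (fun K => i ∈ K)).Nonempty :=
      ⟨{i}, by simp [hD.singleton_mem i]⟩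
    obtain ⟨J, hJ, hJmax⟩ :=
      Finset.exists_max_image (D.filter (fun K => i ∈ K)) (fun K => K.card) hne
    rw [Finset.mem_filter] at hJ
    have hJmaxD : ∀ K ∈ D, J ⊆ K → J = K := by
      intro K hK hJK
      by_contra hne'
      have hss : J ⊂ K := ssubset_of_subset_of_ne hJK hne'
      have hiK : i ∈ K := hJK hJ.2
      have := hJmax K (Finset.mem_filter.mpr ⟨hK, hiK⟩)
      exact absurd (Finset.card_lt_card hss) (by omega)
    refine ⟨J, ⟨Finset.mem_filter.mpr ⟨hJ.1, hJmaxD⟩, hJ.2⟩, ?_⟩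
    rintro J' ⟨hJ'M, hiJ'⟩
    rw [Finset.mem_filter] at hJ'M
    rcases hD.laminar J' hJ'M.1 J hJ.1 with h | h | h
    · exact hJ'M.2 J hJ.1 h
    · exact (hJmaxD J' hJ'M.1 h).symm
    · exact absurd (Finset.mem_inter.mpr ⟨hiJ', hJ.2⟩) (by simp [h])
  have hMpos : 0 < m := by
    obtain ⟨J, ⟨hJM, _⟩, _⟩ := hmaxex ⟨0, hn⟩
    exact Finset.card_pos.mpr ⟨J, hJM⟩
  have hmR : (0:ℝ) < (m:ℝ) := by exact_mod_cast hMpos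
  set E : Set (Fin n → ℝ) :=
    { v : Fin n → ℝ | ∃ J ∈ D, v = fun i => if i ∈ J then (w J : ℝ) else 0 } with hE
  set p : Fin n → ℝ := fun _ => (m:ℝ)⁻¹ with hp
  -- p is the center of mass of the maximal vertices
  have hpconv : p ∈ convexHull ℝ E := by
    have hmem := Finset.centerMass_mem_convexHull (t := M)
      (w := fun _ => (1:ℝ))
      (z := fun J => (fun i => if i ∈ J then (w J : ℝ) else 0)) (s := E)
      (fun _ _ => zero_le_one)
      (by simpa [hm] using hmR)
      (fun J hJ => ⟨J, (Finset.mem_filter.mp hJ).1, rfl⟩)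
    have hcm : M.centerMass (fun _ => (1:ℝ))
        (fun J => (fun i => if i ∈ J then (w J : ℝ) else 0)) = p := by
      funext i
      rw [Finset.centerMass]
      simp only [Finset.sum_const, nsmul_eq_mul, mul_one, one_smul]
      have hw1 : ∀ J ∈ M, (if i ∈ J then (w J : ℝ) else 0) =
          (if i ∈ J then (1:ℝ) else 0) := by
        intro J hJ
        rw [Finset.mem_filter] at hJ
        simp [hD.w_max J hJ.1 hJ.2]
      have hsum : (∑ J ∈ M, fun i => if i ∈ J then (w J : ℝ) else 0) i = 1 := by
        rw [Finset.sum_apply]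
        rw [Finset.sum_congr rfl hw1]
        have hcard : (M.filter (fun J => i ∈ J)).card = 1 := by
          obtain ⟨J, ⟨hJM, hiJ⟩, huniq⟩ := hmaxex i
          rw [Finset.card_eq_one]
          exact ⟨J, by
            ext K
            simp only [Finset.mem_filter, Finset.mem_singleton]
            constructor
            · rintro ⟨hKM, hiK⟩; exact huniq K ⟨hKM, hiK⟩
            · rintro rfl; exact ⟨hJM, hiJ⟩⟩
        rw [Finset.sum_ite, Finset.sum_const, Finset.sum_const]
        simp [hcard]
      rw [Pi.smul_apply, hsum, smul_eq_mul, mul_one]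
    rwa [hcm] at hmem
  -- conclude
  have hone : (fun _ => 1 : Fin n → ℝ) ∈ (m:ℝ) • (convexHull ℝ E + { x : Fin n → ℝ | ∀ i, 0 ≤ x i }) := by
    refine ⟨p + 0, Set.add_mem_add hpconv (by intro i; simp), ?_⟩
    funext i
    simp [hp, mul_inv_cancel₀ (ne_of_gt hmR)]
  have hle : (ENNReal.ofReal (m:ℝ)) ≤ thr (fun _ => 1 : Fin n → ℝ)
      (convexHull ℝ E + { x : Fin n → ℝ | ∀ i, 0 ≤ x i }) := by
    apply le_sSup
    exact ⟨(m:ℝ), ⟨hmR, hone⟩, rfl⟩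
  calc ((D.filter (fun J => ∀ K ∈ D, J ⊆ K → J = K)).card : ENNReal)
      = ENNReal.ofReal (m:ℝ) := by rw [ENNReal.ofReal_natCast]
    _ ≤ _ := hle
end
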